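/- arXiv:2407.00204 — 3 statements merged into one kernel-verified Lean document; each statement's English description precedes it below -/
import Mathlib

section
/- Let t ≥ 1 and let m_1, …, m_t be integers with each m_i ≥ 2, and set n = m_1 + ⋯ + m_t. If n is odd and the Oberwolfach Problem OP(m_1, …, m_t) has a solution, then HOP(2m_1, …, 2m_t) has a solution; that is, the complete graph K_{2n} admits a semi-uniform 1-factorization of type (2m_1, …, 2m_t). -/
open SimpleGraph

/-- `M` is a 1-factorization of the complete graph `K_{2n}` on the vertex set `Fin (2*n)`:
a partition of its edge set into `2*n - 2 + 1` (which equals `2*n - 1` for `n ≥ 1`)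
perfect matchings, each matching being recorded as the simple graph consisting of its edges. -/
def IsOneFactorization (n : ℕ)
    (M : Fin (2 * n - 2 + 1) → SimpleGraph (Fin (2 * n))) : Prop :=
  (∀ i : Fin (2 * n - 2 + 1), ∀ v : Fin (2 * n), ∃! w, (M i).Adj v w) ∧
  (∀ v w : Fin (2 * n), v ≠ w → ∃! i : Fin (2 * n - 2 + 1), (M i).Adj v w)

/-- `M` is a semi-uniform 1-factorization of `K_{2n}` of type `(l 0, …, l (t-1))`:
a 1-factorization `M 0, M 1, …` of `K_{2n}` such that for every index `i ≠ 0` the multiset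
of cardinalities of the connected components of the spanning subgraph with edge set
`M 0 ∪ M i` equals the multiset `{l 0, …, l (t-1)}` (expressed via a size-preserving
bijection between the components and `Fin t`). -/
def IsSemiUniformOneFactorization (n : ℕ) {t : ℕ} (l : Fin t → ℕ)
    (M : Fin (2 * n - 2 + 1) → SimpleGraph (Fin (2 * n))) : Prop :=
  IsOneFactorization n M ∧
  ∀ i : Fin (2 * n - 2 + 1), i ≠ 0 →
    ∃ e : (M 0 ⊔ M i).ConnectedComponent ≃ Fin t,
      ∀ c : (M 0 ⊔ M i).ConnectedComponent, c.supp.ncard = l (e c)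

/-- The Honeymoon Oberwolfach Problem `HOP(l 0, …, l (t-1))`
(where `l 0 + ⋯ + l (t-1) = 2*n`) has a solution, i.e. the complete graph `K_{2n}`
admits a semi-uniform 1-factorization of type `(l 0, …, l (t-1))`. -/
def HOPSolvable (n : ℕ) {t : ℕ} (l : Fin t → ℕ) : Prop :=
  ∃ M : Fin (2 * n - 2 + 1) → SimpleGraph (Fin (2 * n)),
    IsSemiUniformOneFactorization n l M

/-- For odd `n` and `m 0 + ⋯ + m (t-1) = n`, the Oberwolfach Problem
`OP(m 0, …, m (t-1))` has a solution: the edge set of `K_n` can be partitioned into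
`(n-1)/2` parts, each being the edge set of a spanning subgraph of `K_n` in which every
vertex has degree `2` and whose connected components have vertex-set cardinalities
`m 0, …, m (t-1)` as a multiset. -/
def OPSolvable (n : ℕ) {t : ℕ} (m : Fin t → ℕ) : Prop :=
  ∃ F : Fin ((n - 1) / 2) → SimpleGraph (Fin n),
    (∀ v w : Fin n, v ≠ w → ∃! j : Fin ((n - 1) / 2), (F j).Adj v w) ∧
    (∀ j : Fin ((n - 1) / 2), ∀ v : Fin n, ((F j).neighborSet v).ncard = 2) ∧
    (∀ j : Fin ((n - 1) / 2),
      ∃ e : (F j).ConnectedComponent ≃ Fin t,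
        ∀ c : (F j).ConnectedComponent, c.supp.ncard = m (e c))




namespace HOPAux

/-- The three pairwise compatible balanced Boolean 4-vectors. -/
def XV (p : Fin 3) (k : Fin 4) : Bool :=
  if p = 0 then decide (2 ≤ k.val)
  else if p = 1 then decide (k.val % 2 = 1)
  else xor (decide (2 ≤ k.val)) (decide (k.val % 2 = 1))

lemma key34' : ∀ p q : Fin 3, p ≠ q → ∀ a b : Bool,
    ∃ k : Fin 4, (XV p k = a ∧ XV q k = b) ∧
      ∀ k' : Fin 4, (XV p k' = a ∧ XV q k' = b) → k' = k := by decide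

lemma key34 : ∀ p q : Fin 3, p ≠ q → ∀ a b : Bool,
    ∃! k : Fin 4, XV p k = a ∧ XV q k = b := by
  intro p q hpq a b
  obtain ⟨k, hk, hku⟩ := key34' p q hpq a b
  exact ⟨k, hk, hku⟩

lemma bnot_eq : ∀ x a : Bool, ¬ x = a → (!x) = a := by decide

lemma xor_shift : ∀ x d a : Bool, (xor x d = a ↔ x = xor a d) := by decide

variable {n : ℕ}

/-- The vertical perfect matching on `Fin n × Bool`. -/
def vert (n : ℕ) : SimpleGraph (Fin n × Bool) where
  Adj x y := x.1 = y.1 ∧ x.2 ≠ y.2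
  symm := ⟨fun x y h => ⟨h.1.symm, Ne.symm h.2⟩⟩
  loopless := ⟨fun x h => h.2 rfl⟩

/-- Side selector. -/
def bitf (col : Fin n → Fin 3) (nb1 : Fin n → Fin n) (k : Fin 4) (v w : Fin n) : Bool :=
  xor (XV (col v) k) (decide (w = nb1 v))

/-- The `k`-th matching doubling the 2-regular graph `G`. -/
def doub (G : SimpleGraph (Fin n)) (col : Fin n → Fin 3) (nb1 : Fin n → Fin n) (k : Fin 4) :
    SimpleGraph (Fin n × Bool) where
  Adj x y := G.Adj x.1 y.1 ∧ x.2 = bitf col nb1 k x.1 y.1 ∧ y.2 = bitf col nb1 k y.1 x.1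
  symm := ⟨fun x y h => ⟨h.1.symm, h.2.2, h.2.1⟩⟩
  loopless := ⟨fun x h => G.loopless.irrefl _ h.1⟩

section WithData

variable (G : SimpleGraph (Fin n)) (col : Fin n → Fin 3) (nb0 nb1 : Fin n → Fin n)

lemma bitf_nb0 (hne : ∀ v, nb0 v ≠ nb1 v) (k : Fin 4) (v : Fin n) :
    bitf col nb1 k v (nb0 v) = XV (col v) k := by
  simp [bitf, hne v]

lemma bitf_nb1 (k : Fin 4) (v : Fin n) :
    bitf col nb1 k v (nb1 v) = !(XV (col v) k) := by
  simp [bitf]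

lemma vert_matching (x : Fin n × Bool) : ∃! y, (vert n).Adj x y := by
  refine ⟨(x.1, !x.2), ⟨rfl, by simp⟩, ?_⟩
  rintro ⟨y1, y2⟩ ⟨h1, h2⟩
  simp only [Prod.mk.injEq]
  exact ⟨h1.symm, by revert h2; cases x.2 <;> cases y2 <;> simp⟩

lemma doub_matching (hne : ∀ v, nb0 v ≠ nb1 v)
    (hnbr : ∀ v w, G.Adj v w ↔ (w = nb0 v ∨ w = nb1 v))
    (k : Fin 4) (x : Fin n × Bool) : ∃! y, (doub G col nb1 k).Adj x y := by
  obtain ⟨v, a⟩ := x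
  have h0 : G.Adj v (nb0 v) := (hnbr v (nb0 v)).mpr (Or.inl rfl)
  have h1 : G.Adj v (nb1 v) := (hnbr v (nb1 v)).mpr (Or.inr rfl)
  by_cases hx : XV (col v) k = a
  · refine ⟨(nb0 v, bitf col nb1 k (nb0 v) v), ?_, ?_⟩
    · refine ⟨h0, ?_, rfl⟩
      show a = bitf col nb1 k v (nb0 v)
      rw [bitf_nb0 col nb0 nb1 hne]; exact hx.symm
    · rintro ⟨w', b'⟩ ⟨hadj, hb1, hb2⟩
      rcases (hnbr v w').mp hadj with rfl | rfl
      · exact Prod.ext rfl hb2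
      · exfalso
        change a = bitf col nb1 k v (nb1 v) at hb1
        rw [bitf_nb1] at hb1
        rw [← hx] at hb1
        revert hb1; cases XV (col v) k <;> simp
  · have hx' : (!(XV (col v) k)) = a := bnot_eq _ _ hx
    refine ⟨(nb1 v, bitf col nb1 k (nb1 v) v), ?_, ?_⟩
    · refine ⟨h1, ?_, rfl⟩
      show a = bitf col nb1 k v (nb1 v)
      rw [bitf_nb1]; exact hx'.symm
    · rintro ⟨w', b'⟩ ⟨hadj, hb1, hb2⟩
      rcases (hnbr v w').mp hadj with rfl | rfl
      · exfalso
        change a = bitf col nb1 k v (nb0 v) at hb1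
        rw [bitf_nb0 col nb0 nb1 hne] at hb1
        exact hx hb1.symm
      · exact Prod.ext rfl hb2

lemma doub_unique_k (hcol : ∀ v w, G.Adj v w → col v ≠ col w)
    {v w : Fin n} (hvw : G.Adj v w) (a b : Bool) :
    ∃! k : Fin 4, bitf col nb1 k v w = a ∧ bitf col nb1 k w v = b := by
  obtain ⟨k, hk, hku⟩ := key34 (col v) (col w) (hcol v w hvw)
    (xor a (decide (w = nb1 v))) (xor b (decide (v = nb1 w)))
  refine ⟨k, ⟨?_, ?_⟩, ?_⟩
  · rw [bitf, xor_shift]; exact hk.1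
  · rw [bitf, xor_shift]; exact hk.2
  · intro k' hk'
    exact hku k' ⟨(xor_shift _ _ _).mp hk'.1, (xor_shift _ _ _).mp hk'.2⟩

lemma doub_cover {v w : Fin n} (hvw : G.Adj v w) (k : Fin 4) :
    (doub G col nb1 k).Adj (v, bitf col nb1 k v w) (w, bitf col nb1 k w v) :=
  ⟨hvw, rfl, rfl⟩

lemma reach_level (k : Fin 4) (v : Fin n) (a b : Bool) :
    (vert n ⊔ doub G col nb1 k).Reachable (v, a) (v, b) := by
  by_cases h : a = b
  · subst h; exact Reachable.refl _
  · exact SimpleGraph.Adj.reachable (sup_adj _ _ _ _ |>.mpr (Or.inl ⟨rfl, h⟩))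

lemma reach_step (k : Fin 4) {v w : Fin n} (hvw : G.Adj v w) (a b : Bool) :
    (vert n ⊔ doub G col nb1 k).Reachable (v, a) (w, b) :=
  (reach_level G col nb1 k v a _).trans
    ((SimpleGraph.Adj.reachable (sup_adj _ _ _ _ |>.mpr
      (Or.inr (doub_cover G col nb1 hvw k)))).trans
      (reach_level G col nb1 k w _ b))

lemma reach_fwd (k : Fin 4) {x y : Fin n × Bool}
    (h : (vert n ⊔ doub G col nb1 k).Reachable x y) : G.Reachable x.1 y.1 := by
  obtain ⟨p⟩ := h
  induction p with
  | nil => exact Reachable.refl _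
  | cons hadj p ih =>
    rw [sup_adj] at hadj
    rcases hadj with h' | h'
    · exact h'.1 ▸ ih
    · exact (h'.1.reachable).trans ih

lemma reach_bwd (k : Fin 4) {v w : Fin n} (h : G.Reachable v w) (a b : Bool) :
    (vert n ⊔ doub G col nb1 k).Reachable (v, a) (w, b) := by
  obtain ⟨p⟩ := h
  induction p generalizing a with
  | nil => exact reach_level G col nb1 k _ a b
  | cons hadj p ih => exact (reach_step G col nb1 k hadj a false).trans (ih false)

end WithData

/-- Greedy proper 3-coloring of a graph with maximum degree at most 2. -/
lemma exists_coloring (G : SimpleGraph (Fin n)) (nb0 nb1 : Fin n → Fin n)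
    (hnbr : ∀ v w, G.Adj v w → w = nb0 v ∨ w = nb1 v) :
    ∃ col : Fin n → Fin 3, ∀ v w, G.Adj v w → col v ≠ col w := by
  classical
  suffices h : ∀ s : Finset (Fin n), ∃ col : Fin n → Fin 3,
      ∀ v ∈ s, ∀ w ∈ s, G.Adj v w → col v ≠ col w by
    obtain ⟨col, hc⟩ := h Finset.univ
    exact ⟨col, fun v w h' => hc v (Finset.mem_univ v) w (Finset.mem_univ w) h'⟩
  intro s
  induction s using Finset.induction_on with
  | empty => exact ⟨fun _ => 0, by simp⟩
  | @insert a s ha ih =>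
    obtain ⟨c, hc⟩ := ih
    obtain ⟨f, hf0, hf1⟩ : ∃ f : Fin 3, f ≠ c (nb0 a) ∧ f ≠ c (nb1 a) := by
      have hsub : (Finset.univ \ {c (nb0 a), c (nb1 a)} : Finset (Fin 3)).Nonempty := by
        rw [← Finset.card_pos, Finset.card_sdiff_of_subset (Finset.subset_univ _)]
        have h2 : ({c (nb0 a), c (nb1 a)} : Finset (Fin 3)).card ≤ 2 :=
          le_trans (Finset.card_insert_le _ _) (by simp)
        have h3 : (Finset.univ : Finset (Fin 3)).card = 3 := by simp
        omega
      obtain ⟨f, hf⟩ := hsub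
      rw [Finset.mem_sdiff, Finset.mem_insert, Finset.mem_singleton] at hf
      push_neg at hf
      exact ⟨f, hf.2.1, hf.2.2⟩
    refine ⟨Function.update c a f, ?_⟩
    intro v hv w hw hadj
    rcases Finset.mem_insert.mp hv with hva | hv' <;>
      rcases Finset.mem_insert.mp hw with hwa | hw'
    · rw [hva, hwa] at hadj
      exact absurd hadj (G.irrefl)
    · rw [hva] at hadj ⊢
      have hwa : w ≠ a := fun h => ha (h ▸ hw')
      rw [Function.update_self, Function.update_of_ne hwa]
      rcases hnbr a w hadj with h' | h' <;> rw [h']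
      · exact hf0
      · exact hf1
    · rw [hwa] at hadj ⊢
      have hva : v ≠ a := fun h => ha (h ▸ hv')
      rw [Function.update_self, Function.update_of_ne hva]
      rcases hnbr a v hadj.symm with h' | h' <;> rw [h']
      · exact Ne.symm hf0
      · exact Ne.symm hf1
    · have hva : v ≠ a := fun h => ha (h ▸ hv')
      have hwa : w ≠ a := fun h => ha (h ▸ hw')
      rw [Function.update_of_ne hva, Function.update_of_ne hwa]
      exact hc v hv' w hw' hadj

lemma comap_existsUnique {α β : Type*} (E : α ≃ β) (Gr : SimpleGraph β) (v : α)
    (h : ∃! y, Gr.Adj (E v) y) : ∃! w, (Gr.comap ⇑E).Adj v w := by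
  obtain ⟨y, hy, hu⟩ := h
  refine ⟨E.symm y, by simpa using hy, fun w hw => ?_⟩
  exact (Equiv.eq_symm_apply E).mpr (hu (E w) hw)

end HOPAux


theorem hop_solvable_of_odd_of_op (t : ℕ) (ht : 1 ≤ t) (m : Fin t → ℕ)
    (hm : ∀ i, 2 ≤ m i) (n : ℕ) (hn : ∑ i, m i = n)
    (hodd : Odd n) (hop : OPSolvable n m) :
    HOPSolvable n (fun i => 2 * m i) := by
  classical
  obtain ⟨F, hF1, hF2, hF3⟩ := hop
  have hn2 : 2 ≤ n := by
    have hle := Finset.single_le_sum (f := m) (fun i _ => Nat.zero_le (m i))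
      (Finset.mem_univ (⟨0, ht⟩ : Fin t))
    have h2 := hm ⟨0, ht⟩
    omega
  obtain ⟨r, hr⟩ := hodd
  have hq : 0 < (n - 1) / 2 := by omega
  -- neighbor data
  have hpair : ∀ (j : Fin ((n - 1) / 2)) (v : Fin n), ∃ p : Fin n × Fin n,
      p.1 ≠ p.2 ∧ ∀ w, ((F j).Adj v w ↔ (w = p.1 ∨ w = p.2)) := by
    intro j v
    obtain ⟨a, b, hab, hs⟩ := Set.ncard_eq_two.mp (hF2 j v)
    refine ⟨(a, b), hab, fun w => ?_⟩
    rw [← SimpleGraph.mem_neighborSet, hs]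
    simp [Set.mem_insert_iff]
  choose pf hpf using hpair
  have hcolor : ∀ j, ∃ col : Fin n → Fin 3, ∀ v w, (F j).Adj v w → col v ≠ col w := fun j =>
    HOPAux.exists_coloring (F j) (fun v => (pf j v).1) (fun v => (pf j v).2)
      (fun v w h => ((hpf j v).2 w).mp h)
  choose colf hcolf using hcolor
  choose ee hee using hF3
  set E : Fin (2 * n) ≃ Fin n × Bool :=
    (finCongr (by ring : 2 * n = n * 2)).trans
      (finProdFinEquiv.symm.trans (Equiv.prodCongr (Equiv.refl (Fin n)) finTwoEquiv)) with hE
  set jm : Fin (2 * n - 2 + 1) → Fin ((n - 1) / 2) :=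
    fun i => ⟨((i : ℕ) - 1) / 4 % ((n - 1) / 2), Nat.mod_lt _ hq⟩ with hjm
  set km : Fin (2 * n - 2 + 1) → Fin 4 :=
    fun i => ⟨((i : ℕ) - 1) % 4, Nat.mod_lt _ (by omega)⟩ with hkm
  have hjmval : ∀ i : Fin (2 * n - 2 + 1), (jm i : ℕ) = ((i : ℕ) - 1) / 4 := by
    intro i
    have hlt := i.isLt
    simp only [hjm]
    exact Nat.mod_eq_of_lt (by omega)
  have hkmval : ∀ i : Fin (2 * n - 2 + 1), (km i : ℕ) = ((i : ℕ) - 1) % 4 := fun i => rfl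
  set M : Fin (2 * n - 2 + 1) → SimpleGraph (Fin (2 * n)) := fun i =>
    SimpleGraph.comap (⇑E)
      (if (i : ℕ) = 0 then HOPAux.vert n
       else HOPAux.doub (F (jm i)) (colf (jm i)) (fun v => (pf (jm i) v).2) (km i)) with hM
  have hM0 : M 0 = SimpleGraph.comap (⇑E) (HOPAux.vert n) := by
    simp only [hM]
    rw [if_pos (Fin.val_zero _)]
  have hMi : ∀ i : Fin (2 * n - 2 + 1), (i : ℕ) ≠ 0 →
      M i = SimpleGraph.comap (⇑E)
        (HOPAux.doub (F (jm i)) (colf (jm i)) (fun v => (pf (jm i) v).2) (km i)) := by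
    intro i h
    simp only [hM]
    rw [if_neg h]
  refine ⟨M, ⟨?_, ?_⟩, ?_⟩
  · -- perfect matchings
    intro i v
    by_cases hi : (i : ℕ) = 0
    · have : i = 0 := Fin.ext (by rw [hi, Fin.val_zero])
      rw [this, hM0]
      exact HOPAux.comap_existsUnique E _ v (HOPAux.vert_matching (E v))
    · rw [hMi i hi]
      exact HOPAux.comap_existsUnique E _ v
        (HOPAux.doub_matching (F (jm i)) (colf (jm i)) (fun v => (pf (jm i) v).1)
          (fun v => (pf (jm i) v).2) (fun v => (hpf (jm i) v).1)
          (fun v w => (hpf (jm i) v).2 w) (km i) (E v))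
  · -- unique index per edge
    intro v w hvw
    have hEvw : E v ≠ E w := fun h => hvw (E.injective h)
    by_cases hf : (E v).1 = (E w).1
    · have hsnd : (E v).2 ≠ (E w).2 := fun h2 => hEvw (Prod.ext hf h2)
      refine ⟨0, ?_, ?_⟩
      · show (M 0).Adj v w
        rw [hM0]
        exact ⟨hf, hsnd⟩
      · intro i' hi'
        have hi'' : (M i').Adj v w := hi'
        by_cases h0 : (i' : ℕ) = 0
        · exact Fin.ext (by rw [h0, Fin.val_zero])
        · rw [hMi i' h0] at hi''
          exact absurd hf ((F (jm i')).ne_of_adj hi''.1)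
    · obtain ⟨j, hj, hju⟩ := hF1 _ _ hf
      obtain ⟨k, hk, hku⟩ := HOPAux.doub_unique_k (F j) (colf j) (fun v => (pf j v).2)
        (hcolf j) hj (E v).2 (E w).2
      have hidx : 1 + 4 * (j : ℕ) + (k : ℕ) < 2 * n - 2 + 1 := by
        have h1 := j.isLt; have h2 := k.isLt
        omega
      set i0 : Fin (2 * n - 2 + 1) := ⟨1 + 4 * (j : ℕ) + (k : ℕ), hidx⟩ with hi0
      have hi0val : (i0 : ℕ) = 1 + 4 * (j : ℕ) + (k : ℕ) := rfl
      have hi0ne : (i0 : ℕ) ≠ 0 := by rw [hi0val]; omega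
      have hjm0 : jm i0 = j := by
        apply Fin.ext
        rw [hjmval, hi0val]
        have h2 := k.isLt
        omega
      have hkm0 : km i0 = k := by
        apply Fin.ext
        rw [hkmval, hi0val]
        have h2 := k.isLt
        omega
      refine ⟨i0, ?_, ?_⟩
      · show (M i0).Adj v w
        rw [hMi i0 hi0ne, hjm0, hkm0]
        exact ⟨hj, hk.1.symm, hk.2.symm⟩
      · intro i' hi'
        have hi'' : (M i').Adj v w := hi'
        by_cases h0 : (i' : ℕ) = 0
        · exfalso
          have : i' = 0 := Fin.ext (by rw [h0, Fin.val_zero])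
          rw [this, hM0] at hi''
          exact hf hi''.1
        · rw [hMi i' h0] at hi''
          have hj' : jm i' = j := hju _ hi''.1
          rw [hj'] at hi''
          have hk' : km i' = k := hku _ ⟨hi''.2.1.symm, hi''.2.2.symm⟩
          have e1 : ((i' : ℕ) - 1) / 4 = (j : ℕ) := by
            rw [← hjmval]; exact congrArg Fin.val hj'
          have e2 : ((i' : ℕ) - 1) % 4 = (k : ℕ) := by
            rw [← hkmval]; exact congrArg Fin.val hk'
          apply Fin.ext
          rw [hi0val]
          omega
  · -- components
    intro i hi
    have h0 : (i : ℕ) ≠ 0 := fun h => hi (Fin.ext (by rw [h, Fin.val_zero]))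
    rw [hM0, hMi i h0]
    have hsup : SimpleGraph.comap (⇑E) (HOPAux.vert n) ⊔
        SimpleGraph.comap (⇑E)
          (HOPAux.doub (F (jm i)) (colf (jm i)) (fun v => (pf (jm i) v).2) (km i))
        = SimpleGraph.comap (⇑E)
          (HOPAux.vert n ⊔
            HOPAux.doub (F (jm i)) (colf (jm i)) (fun v => (pf (jm i) v).2) (km i)) := by
      ext x y
      simp [SimpleGraph.sup_adj]
    rw [hsup]
    have RR : ∀ x y : Fin (2 * n),
        (SimpleGraph.comap (⇑E) (HOPAux.vert n ⊔
          HOPAux.doub (F (jm i)) (colf (jm i)) (fun v => (pf (jm i) v).2) (km i))).Reachable x y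
        ↔ (F (jm i)).Reachable (E x).1 (E y).1 := by
      intro x y
      constructor
      · intro h
        have h3 : (HOPAux.vert n ⊔
            HOPAux.doub (F (jm i)) (colf (jm i)) (fun v => (pf (jm i) v).2) (km i)).Reachable
              (E x) (E y) := h.map ⟨⇑E, fun h' => h'⟩
        exact HOPAux.reach_fwd (F (jm i)) (colf (jm i)) (fun v => (pf (jm i) v).2) (km i) h3
      · intro h
        have h2 := HOPAux.reach_bwd (F (jm i)) (colf (jm i)) (fun v => (pf (jm i) v).2) (km i)
          h (E x).2 (E y).2
        have h4 : (SimpleGraph.comap (⇑E) (HOPAux.vert n ⊔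
            HOPAux.doub (F (jm i)) (colf (jm i)) (fun v => (pf (jm i) v).2) (km i))).Reachable
              (E.symm (E x)) (E.symm (E y)) :=
          h2.map ⟨⇑E.symm, fun {a b} hh => by simpa using hh⟩
        simpa using h4
    have key : ∀ x y : Fin (2 * n),
        ((SimpleGraph.comap (⇑E) (HOPAux.vert n ⊔
            HOPAux.doub (F (jm i)) (colf (jm i)) (fun v => (pf (jm i) v).2) (km i))).connectedComponentMk x
          = (SimpleGraph.comap (⇑E) (HOPAux.vert n ⊔
            HOPAux.doub (F (jm i)) (colf (jm i)) (fun v => (pf (jm i) v).2) (km i))).connectedComponentMk y)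
        ↔ (F (jm i)).connectedComponentMk (E x).1 = (F (jm i)).connectedComponentMk (E y).1 := by
      intro x y
      rw [SimpleGraph.ConnectedComponent.eq, SimpleGraph.ConnectedComponent.eq, RR]
    refine ⟨{
      toFun := Quot.lift (fun x => ee (jm i) ((F (jm i)).connectedComponentMk (E x).1))
        (fun x y hxy => congrArg (ee (jm i))
          (SimpleGraph.ConnectedComponent.eq.mpr ((RR x y).mp hxy))),
      invFun := fun s => (SimpleGraph.comap (⇑E) (HOPAux.vert n ⊔
          HOPAux.doub (F (jm i)) (colf (jm i)) (fun v => (pf (jm i) v).2) (km i))).connectedComponentMk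
        (E.symm ((((ee (jm i)).symm s).out), false)),
      left_inv := ?_,
      right_inv := ?_ }, ?_⟩
    · intro c
      induction c using SimpleGraph.ConnectedComponent.ind with
      | _ x =>
        show (SimpleGraph.comap (⇑E) _).connectedComponentMk
            (E.symm ((((ee (jm i)).symm (ee (jm i) ((F (jm i)).connectedComponentMk (E x).1))).out), false)) = _
        rw [Equiv.symm_apply_apply]
        apply (key _ _).mpr
        have hout : (F (jm i)).connectedComponentMk
            (((F (jm i)).connectedComponentMk (E x).1).out) = (F (jm i)).connectedComponentMk (E x).1 :=
          Quot.out_eq _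
        calc (F (jm i)).connectedComponentMk
              (E (E.symm ((((F (jm i)).connectedComponentMk (E x).1).out), false))).1
            = (F (jm i)).connectedComponentMk (((F (jm i)).connectedComponentMk (E x).1).out) := by
              rw [Equiv.apply_symm_apply]
          _ = (F (jm i)).connectedComponentMk (E x).1 := hout
    · intro s
      show ee (jm i) ((F (jm i)).connectedComponentMk
          (E (E.symm ((((ee (jm i)).symm s).out), false))).1) = s
      rw [Equiv.apply_symm_apply]
      have h2 : (F (jm i)).connectedComponentMk (((ee (jm i)).symm s).out)
          = (ee (jm i)).symm s := Quot.out_eq _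
      show ee (jm i) ((F (jm i)).connectedComponentMk (((ee (jm i)).symm s).out)) = s
      rw [h2, Equiv.apply_symm_apply]
    · intro c
      induction c using SimpleGraph.ConnectedComponent.ind with
      | _ x =>
        have hsupp : ((SimpleGraph.comap (⇑E) (HOPAux.vert n ⊔
            HOPAux.doub (F (jm i)) (colf (jm i)) (fun v => (pf (jm i) v).2) (km i))).connectedComponentMk x).supp
            = ⇑E ⁻¹' (((F (jm i)).connectedComponentMk (E x).1).supp ×ˢ (Set.univ : Set Bool)) := by
          ext y
          simp only [SimpleGraph.ConnectedComponent.mem_supp_iff, Set.mem_preimage,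
            Set.mem_prod, Set.mem_univ, and_true]
          exact key y x
        have himg : ⇑E ⁻¹' (((F (jm i)).connectedComponentMk (E x).1).supp ×ˢ (Set.univ : Set Bool))
            = ⇑E.symm '' (((F (jm i)).connectedComponentMk (E x).1).supp ×ˢ (Set.univ : Set Bool)) := by
          rw [Equiv.image_eq_preimage_symm, Equiv.symm_symm]
        have hprod : ∀ S : Set (Fin n), (S ×ˢ (Set.univ : Set Bool)).ncard = S.ncard * 2 := by
          intro S
          rw [← Nat.card_coe_set_eq, ← Nat.card_coe_set_eq]
          rw [Nat.card_congr (Equiv.Set.prod S Set.univ), Nat.card_prod]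
          congr 1
          rw [Nat.card_congr (Equiv.Set.univ Bool)]
          simp [Nat.card_eq_fintype_card]
        show (((SimpleGraph.comap (⇑E) _).connectedComponentMk x).supp).ncard
            = 2 * m (ee (jm i) ((F (jm i)).connectedComponentMk (E x).1))
        rw [hsupp, himg, Set.ncard_image_of_injective _ E.symm.injective, hprod,
          hee (jm i)]
        exact Nat.mul_comm _ 2
end

section
/- Let t ≥ 1 and let m_1, …, m_t be integers with each m_i ≥ 2, and set n = m_1 + ⋯ + m_t. If n ≤ 9, then HOP(2m_1, …, 2m_t) has a solution; that is, the complete graph K_{2n} admits a semi-uniform 1-factorization of type (2m_1, …, 2m_t). -/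
open SimpleGraph

def mG {N : ℕ} (f : Fin N → Fin N) : SimpleGraph (Fin N) :=
  SimpleGraph.fromRel (fun v w => f v = w)

lemma mG_adj {N} (f : Fin N → Fin N) (hf : ∀ v, f (f v) = v ∧ f v ≠ v) (v w : Fin N) :
    (mG f).Adj v w ↔ f v = w := by
  simp only [mG, fromRel_adj]
  constructor
  · rintro ⟨hne, h | h⟩
    · exact h
    · rw [← h, (hf w).1]
  · intro h
    refine ⟨?_, Or.inl h⟩
    rintro rfl; exact (hf v).2 h

lemma chain_reachable {V : Type*} {G : SimpleGraph V} :
    ∀ (L : List V) (a : V), List.Chain G.Adj a L → ∀ w ∈ L, G.Reachable a w := by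
  intro L
  induction L with
  | nil => intro a _ w hw; simp at hw
  | cons b L ih =>
    intro a hc w hw
    rw [List.Chain, List.chain_cons] at hc
    rcases List.mem_cons.mp hw with rfl | hw
    · exact hc.1.reachable
    · exact (hc.1.reachable).trans (ih b hc.2 w hw)

lemma chain'_reachable {V : Type*} {G : SimpleGraph V} (L : List V)
    (hc : L.Chain' G.Adj) : ∀ v ∈ L, ∀ w ∈ L, G.Reachable v w := by
  cases L with
  | nil => intro v hv; simp at hv
  | cons a L =>
    intro v hv w hw
    have ha : ∀ x ∈ a :: L, G.Reachable a x := by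
      intro x hx
      rcases List.mem_cons.mp hx with rfl | hx
      · exact Reachable.refl _
      · exact chain_reachable L a hc x hx
    exact (ha v hv).symm.trans (ha w hw)

theorem hop_of_cert (n t : ℕ) (hn : 0 < n) (l : Fin t → ℕ) (hl : ∀ j, 0 < l j)
    (f : Fin (2*n-2+1) → Fin (2*n) → Fin (2*n)) (v0 : Fin (2*n))
    (lbl : Fin (2*n-2+1) → Fin (2*n) → Fin t)
    (cyc : Fin (2*n-2+1) → Fin t → List (Fin (2*n)))
    (H1 : ∀ i v, f i (f i v) = v ∧ f i v ≠ v)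
    (H2 : ∀ v, ((List.finRange (2*n-2+1)).map (fun i => f i v)).Nodup)
    (H3 : ∀ i : Fin (2*n-2+1), i ≠ 0 → ∀ v, v ∈ cyc i (lbl i v))
    (H4 : ∀ i : Fin (2*n-2+1), i ≠ 0 → ∀ j, ∀ v ∈ cyc i j, lbl i v = j)
    (H5 : ∀ i : Fin (2*n-2+1), i ≠ 0 → ∀ j, (cyc i j).Nodup ∧ (cyc i j).length = l j ∧
          ∀ k, k < (cyc i j).length → k + 1 < (cyc i j).length →
            (f 0 ((cyc i j).getD k v0) = (cyc i j).getD (k+1) v0 ∨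
             f i ((cyc i j).getD k v0) = (cyc i j).getD (k+1) v0))
    (H6 : ∀ i : Fin (2*n-2+1), i ≠ 0 → ∀ v, lbl i (f 0 v) = lbl i v ∧ lbl i (f i v) = lbl i v) :
    HOPSolvable n l := by
  have hN : 0 < 2 * n := by omega
  refine ⟨fun i => mG (f i), ⟨?_, ?_⟩, ?_⟩
  · -- perfect matchings
    intro i v
    refine ⟨f i v, (mG_adj (f i) (H1 i) v _).mpr rfl, fun w hw => ?_⟩
    exact ((mG_adj (f i) (H1 i) v w).mp hw).symm
  · -- each edge in exactly one
    intro v w hvw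
    -- the map i ↦ f i v is injective and avoids v; codomain minus {v} has size 2n-1
    have hinj : Function.Injective (fun i => f i v) := by
      have := H2 v
      rw [List.nodup_map_iff_inj_on (List.nodup_finRange _)] at this
      intro a b hab
      exact this a (List.mem_finRange a) b (List.mem_finRange b) hab
    have himg : (Finset.univ.image (fun i => f i v)) = Finset.univ.erase v := by
      apply Finset.eq_of_subset_of_card_le
      · intro x hx
        simp only [Finset.mem_image] at hx
        obtain ⟨i, _, rfl⟩ := hx
        exact Finset.mem_erase.mpr ⟨(H1 i v).2, Finset.mem_univ _⟩
      · rw [Finset.card_erase_of_mem (Finset.mem_univ v)]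
        rw [Finset.card_image_of_injective _ hinj]
        simp only [Finset.card_univ, Fintype.card_fin]
        omega
    have hw : w ∈ Finset.univ.image (fun i => f i v) := by
      rw [himg]; exact Finset.mem_erase.mpr ⟨hvw.symm, Finset.mem_univ _⟩
    simp only [Finset.mem_image] at hw
    obtain ⟨i, _, hi⟩ := hw
    refine ⟨i, (mG_adj (f i) (H1 i) v w).mpr hi, fun j hj => ?_⟩
    exact hinj (((mG_adj (f j) (H1 j) v w).mp hj).trans hi.symm)
  · -- component structure
    intro i hi
    set G := mG (f 0) ⊔ mG (f i) with hG
    have hadj : ∀ v w, G.Adj v w ↔ (f 0 v = w ∨ f i v = w) := by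
      intro v w
      rw [hG, sup_adj, mG_adj (f 0) (H1 0), mG_adj (f i) (H1 i)]
    -- labels are constant on components
    have hlbl_adj : ∀ v w, G.Adj v w → lbl i v = lbl i w := by
      intro v w h
      rcases (hadj v w).mp h with h | h
      · rw [← h, (H6 i hi v).1]
      · rw [← h, (H6 i hi v).2]
    have hlbl_reach : ∀ v w, G.Reachable v w → lbl i v = lbl i w := by
      intro v w h
      rw [reachable_iff_reflTransGen] at h
      induction h with
      | refl => rfl
      | tail _ hadj' ih => exact ih.trans (hlbl_adj _ _ hadj')
    -- all members of a cycle list are mutually reachable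
    have hcyc_reach : ∀ j, ∀ v ∈ cyc i j, ∀ w ∈ cyc i j, G.Reachable v w := by
      intro j
      apply chain'_reachable
      rw [List.Chain', List.isChain_iff_getElem]
      intro k hk
      rw [hadj]
      have h := (H5 i hi j).2.2 k (by omega) (by omega)
      have e1 : (cyc i j).get ⟨k, by omega⟩ = (cyc i j).getD k v0 :=
        (List.getD_eq_getElem _ _ (by omega)).symm
      have e2 : (cyc i j).get ⟨k+1, by omega⟩ = (cyc i j).getD (k+1) v0 :=
        (List.getD_eq_getElem _ _ (by omega)).symm
      rw [← e1, ← e2] at h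
      exact h
    have hne : ∀ j, cyc i j ≠ [] := by
      intro j h
      have h2 := (H5 i hi j).2.1
      rw [h] at h2
      simp only [List.length_nil] at h2
      have := hl j
      omega
    -- membership in cyc i j ↔ label = j
    have hmem : ∀ j v, v ∈ cyc i j ↔ lbl i v = j := by
      intro j v
      constructor
      · exact H4 i hi j v
      · rintro rfl; exact H3 i hi v
    -- the equivalence
    have hlift : ∀ v w, G.Reachable v w → lbl i v = lbl i w := hlbl_reach
    refine ⟨⟨Quot.lift (lbl i) hlift,
      fun j => G.connectedComponentMk ((cyc i j).head (hne j)), ?_, ?_⟩, ?_⟩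
    · -- left inverse
      refine ConnectedComponent.ind ?_
      intro v
      apply ConnectedComponent.sound
      have h1 : v ∈ cyc i (lbl i v) := H3 i hi v
      have h2 : (cyc i (lbl i v)).head (hne _) ∈ cyc i (lbl i v) := List.head_mem (hne _)
      exact (hcyc_reach _ _ h2 _ h1)
    · -- right inverse
      intro j
      exact H4 i hi j _ (List.head_mem (hne j))
    · -- sizes
      refine ConnectedComponent.ind ?_
      intro v
      have hsupp : (G.connectedComponentMk v).supp = {w | w ∈ cyc i (lbl i v)} := by
        ext w
        rw [ConnectedComponent.mem_supp_iff]
        simp only [Set.mem_setOf_eq]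
        constructor
        · intro h
          have := hlbl_reach w v (ConnectedComponent.exact h)
          rw [hmem]
          exact this
        · intro h
          apply ConnectedComponent.sound
          exact hcyc_reach _ _ h _ (H3 i hi v)
      show (G.connectedComponentMk v).supp.ncard = l (lbl i v)
      rw [hsupp]
      have : {w | w ∈ cyc i (lbl i v)} = ↑(cyc i (lbl i v)).toFinset := by
        ext w; simp
      rw [this, Set.ncard_coe_finset, List.toFinset_card_of_nodup (H5 i hi _).1]
      exact (H5 i hi _).2.1



lemma hop_perm {n t : ℕ} {l l' : Fin t → ℕ} (σ : Equiv.Perm (Fin t))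
    (h : ∀ j, l' j = l (σ j)) (hs : HOPSolvable n l') : HOPSolvable n l := by
  obtain ⟨M, hM1, hM2⟩ := hs
  refine ⟨M, hM1, fun i hi => ?_⟩
  obtain ⟨e, he⟩ := hM2 i hi
  exact ⟨e.trans σ, fun c => (he c).trans (h (e c))⟩


def fT2_2 : List (List Nat) := [[1,0,3,2], [2,3,0,1], [3,2,1,0]]
def lT2_2 : List (List Nat) := [[0,0,0,0], [0,0,0,0], [0,0,0,0]]
def cT2_2 : List (List (List Nat)) := [[[]], [[0,1,3,2]], [[0,1,2,3]]]
def fF2_2 : Fin (2*2-2+1) → Fin (2*2) → Fin (2*2) :=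
  fun i v => Fin.ofNat _ ((fT2_2.getD i.val []).getD v.val 0)
def lF2_2 : Fin (2*2-2+1) → Fin (2*2) → Fin 1 :=
  fun i v => Fin.ofNat _ ((lT2_2.getD i.val []).getD v.val 0)
def cF2_2 : Fin (2*2-2+1) → Fin 1 → List (Fin (2*2)) :=
  fun i j => ((cT2_2.getD i.val []).getD j.val []).map (Fin.ofNat _)
lemma cert_2_2 : HOPSolvable 2 ![4] := by
  apply hop_of_cert 2 1 (by norm_num) _ (by decide) fF2_2 (Fin.ofNat _ 0) lF2_2 cF2_2
  · decide
  · decide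
  · decide
  · decide
  · decide
  · decide

def fT3_3 : List (List Nat) := [[1,0,3,2,5,4], [3,4,5,0,1,2], [5,3,4,1,2,0], [2,5,0,4,3,1], [4,2,1,5,0,3]]
def lT3_3 : List (List Nat) := [[0,0,0,0,0,0], [0,0,0,0,0,0], [0,0,0,0,0,0], [0,0,0,0,0,0], [0,0,0,0,0,0]]
def cT3_3 : List (List (List Nat)) := [[[]], [[0,1,4,5,2,3]], [[0,1,3,2,4,5]], [[0,1,5,4,3,2]], [[0,1,2,3,5,4]]]
def fF3_3 : Fin (2*3-2+1) → Fin (2*3) → Fin (2*3) :=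
  fun i v => Fin.ofNat _ ((fT3_3.getD i.val []).getD v.val 0)
def lF3_3 : Fin (2*3-2+1) → Fin (2*3) → Fin 1 :=
  fun i v => Fin.ofNat _ ((lT3_3.getD i.val []).getD v.val 0)
def cF3_3 : Fin (2*3-2+1) → Fin 1 → List (Fin (2*3)) :=
  fun i j => ((cT3_3.getD i.val []).getD j.val []).map (Fin.ofNat _)
lemma cert_3_3 : HOPSolvable 3 ![6] := by
  apply hop_of_cert 3 1 (by norm_num) _ (by decide) fF3_3 (Fin.ofNat _ 0) lF3_3 cF3_3
  · decide
  · decide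
  · decide
  · decide
  · decide
  · decide

def fT4_2_2 : List (List Nat) := [[1,0,3,2,5,4,7,6], [3,2,1,0,7,6,5,4], [5,4,6,7,1,0,2,3], [6,7,4,5,2,3,0,1], [7,6,5,4,3,2,1,0], [4,5,7,6,0,1,3,2], [2,3,0,1,6,7,4,5]]
def lT4_2_2 : List (List Nat) := [[0,0,0,0,0,0,0,0], [0,0,0,0,1,1,1,1], [0,0,1,1,0,0,1,1], [0,0,1,1,1,1,0,0], [0,0,1,1,1,1,0,0], [0,0,1,1,0,0,1,1], [0,0,0,0,1,1,1,1]]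
def cT4_2_2 : List (List (List Nat)) := [[[], []], [[0,1,2,3], [4,5,6,7]], [[0,1,4,5], [2,3,7,6]], [[0,1,7,6], [2,3,5,4]], [[0,1,6,7], [2,3,4,5]], [[0,1,5,4], [2,3,6,7]], [[0,1,3,2], [4,5,7,6]]]
def fF4_2_2 : Fin (2*4-2+1) → Fin (2*4) → Fin (2*4) :=
  fun i v => Fin.ofNat _ ((fT4_2_2.getD i.val []).getD v.val 0)
def lF4_2_2 : Fin (2*4-2+1) → Fin (2*4) → Fin 2 :=
  fun i v => Fin.ofNat _ ((lT4_2_2.getD i.val []).getD v.val 0)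
def cF4_2_2 : Fin (2*4-2+1) → Fin 2 → List (Fin (2*4)) :=
  fun i j => ((cT4_2_2.getD i.val []).getD j.val []).map (Fin.ofNat _)
lemma cert_4_2_2 : HOPSolvable 4 ![4, 4] := by
  apply hop_of_cert 4 2 (by norm_num) _ (by decide) fF4_2_2 (Fin.ofNat _ 0) lF4_2_2 cF4_2_2
  · decide
  · decide
  · decide
  · decide
  · decide
  · decide

def fT4_4 : List (List Nat) := [[1,0,3,2,5,4,7,6], [4,3,7,1,0,6,5,2], [5,7,6,4,3,0,2,1], [2,5,0,6,7,1,3,4], [3,6,4,0,2,7,1,5], [6,4,5,7,1,2,0,3], [7,2,1,5,6,3,4,0]]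
def lT4_4 : List (List Nat) := [[0,0,0,0,0,0,0,0], [0,0,0,0,0,0,0,0], [0,0,0,0,0,0,0,0], [0,0,0,0,0,0,0,0], [0,0,0,0,0,0,0,0], [0,0,0,0,0,0,0,0], [0,0,0,0,0,0,0,0]]
def cT4_4 : List (List (List Nat)) := [[[]], [[0,1,3,2,7,6,5,4]], [[0,1,7,6,2,3,4,5]], [[0,1,5,4,7,6,3,2]], [[0,1,6,7,5,4,2,3]], [[0,1,4,5,2,3,7,6]], [[0,1,2,3,5,4,6,7]]]
def fF4_4 : Fin (2*4-2+1) → Fin (2*4) → Fin (2*4) :=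
  fun i v => Fin.ofNat _ ((fT4_4.getD i.val []).getD v.val 0)
def lF4_4 : Fin (2*4-2+1) → Fin (2*4) → Fin 1 :=
  fun i v => Fin.ofNat _ ((lT4_4.getD i.val []).getD v.val 0)
def cF4_4 : Fin (2*4-2+1) → Fin 1 → List (Fin (2*4)) :=
  fun i j => ((cT4_4.getD i.val []).getD j.val []).map (Fin.ofNat _)
lemma cert_4_4 : HOPSolvable 4 ![8] := by
  apply hop_of_cert 4 1 (by norm_num) _ (by decide) fF4_4 (Fin.ofNat _ 0) lF4_4 cF4_4
  · decide
  · decide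
  · decide
  · decide
  · decide
  · decide

def fT5_2_3 : List (List Nat) := [[1,0,3,2,5,4,7,6,9,8], [6,7,9,5,8,3,0,1,4,2], [8,9,5,6,7,2,3,4,0,1], [2,3,0,1,9,7,8,5,6,4], [3,2,1,0,6,9,4,8,7,5], [4,5,8,7,0,1,9,3,2,6], [9,8,7,4,3,6,5,2,1,0], [7,6,4,9,2,8,1,0,5,3], [5,4,6,8,1,0,2,9,3,7]]
def lT5_2_3 : List (List Nat) := [[0,0,0,0,0,0,0,0,0,0], [0,0,1,1,1,1,0,0,1,1], [0,0,1,1,1,1,1,1,0,0], [0,0,0,0,1,1,1,1,1,1], [0,0,0,0,1,1,1,1,1,1], [0,0,1,1,0,0,1,1,1,1], [0,0,1,1,1,1,1,1,0,0], [0,0,1,1,1,1,0,0,1,1], [0,0,1,1,0,0,1,1,1,1]]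
def cT5_2_3 : List (List (List Nat)) := [[[], []], [[0,1,7,6], [2,3,5,4,8,9]], [[0,1,9,8], [2,3,6,7,4,5]], [[0,1,3,2], [4,5,7,6,8,9]], [[0,1,2,3], [4,5,9,8,7,6]], [[0,1,5,4], [2,3,7,6,9,8]], [[0,1,8,9], [2,3,4,5,6,7]], [[0,1,6,7], [2,3,9,8,5,4]], [[0,1,4,5], [2,3,8,9,7,6]]]
def fF5_2_3 : Fin (2*5-2+1) → Fin (2*5) → Fin (2*5) :=
  fun i v => Fin.ofNat _ ((fT5_2_3.getD i.val []).getD v.val 0)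
def lF5_2_3 : Fin (2*5-2+1) → Fin (2*5) → Fin 2 :=
  fun i v => Fin.ofNat _ ((lT5_2_3.getD i.val []).getD v.val 0)
def cF5_2_3 : Fin (2*5-2+1) → Fin 2 → List (Fin (2*5)) :=
  fun i j => ((cT5_2_3.getD i.val []).getD j.val []).map (Fin.ofNat _)
lemma cert_5_2_3 : HOPSolvable 5 ![4, 6] := by
  apply hop_of_cert 5 2 (by norm_num) _ (by decide) fF5_2_3 (Fin.ofNat _ 0) lF5_2_3 cF5_2_3
  · decide
  · decide
  · decide
  · decide
  · decide
  · decide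

def fT5_5 : List (List Nat) := [[1,0,3,2,5,4,7,6,9,8], [4,8,9,7,0,6,5,3,1,2], [6,9,8,5,7,3,0,4,2,1], [7,2,1,4,3,9,8,0,6,5], [8,3,4,1,2,7,9,5,0,6], [9,4,5,6,1,2,3,8,7,0], [3,5,6,0,8,1,2,9,4,7], [5,6,7,8,9,0,1,2,3,4], [2,7,0,9,6,8,4,1,5,3]]
def lT5_5 : List (List Nat) := [[0,0,0,0,0,0,0,0,0,0], [0,0,0,0,0,0,0,0,0,0], [0,0,0,0,0,0,0,0,0,0], [0,0,0,0,0,0,0,0,0,0], [0,0,0,0,0,0,0,0,0,0], [0,0,0,0,0,0,0,0,0,0], [0,0,0,0,0,0,0,0,0,0], [0,0,0,0,0,0,0,0,0,0], [0,0,0,0,0,0,0,0,0,0]]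
def cT5_5 : List (List (List Nat)) := [[[]], [[0,1,8,9,2,3,7,6,5,4]], [[0,1,9,8,2,3,5,4,7,6]], [[0,1,2,3,4,5,9,8,6,7]], [[0,1,3,2,4,5,7,6,9,8]], [[0,1,4,5,2,3,6,7,8,9]], [[0,1,5,4,8,9,7,6,2,3]], [[0,1,6,7,2,3,8,9,4,5]], [[0,1,7,6,4,5,8,9,3,2]]]
def fF5_5 : Fin (2*5-2+1) → Fin (2*5) → Fin (2*5) :=
  fun i v => Fin.ofNat _ ((fT5_5.getD i.val []).getD v.val 0)
def lF5_5 : Fin (2*5-2+1) → Fin (2*5) → Fin 1 :=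
  fun i v => Fin.ofNat _ ((lT5_5.getD i.val []).getD v.val 0)
def cF5_5 : Fin (2*5-2+1) → Fin 1 → List (Fin (2*5)) :=
  fun i j => ((cT5_5.getD i.val []).getD j.val []).map (Fin.ofNat _)
lemma cert_5_5 : HOPSolvable 5 ![10] := by
  apply hop_of_cert 5 1 (by norm_num) _ (by decide) fF5_5 (Fin.ofNat _ 0) lF5_5 cF5_5
  · decide
  · decide
  · decide
  · decide
  · decide
  · decide

def fT6_2_2_2 : List (List Nat) := [[1,0,3,2,5,4,7,6,9,8,11,10], [9,8,4,5,2,3,10,11,1,0,6,7], [7,6,9,8,11,10,1,0,3,2,5,4], [10,11,6,7,9,8,2,3,5,4,0,1], [6,7,5,4,3,2,0,1,11,10,9,8], [3,2,1,0,8,9,11,10,4,5,7,6], [5,4,11,10,1,0,9,8,7,6,3,2], [8,9,10,11,6,7,4,5,0,1,2,3], [4,5,7,6,0,1,3,2,10,11,8,9], [2,3,0,1,10,11,8,9,6,7,4,5], [11,10,8,9,7,6,5,4,2,3,1,0]]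
def lT6_2_2_2 : List (List Nat) := [[0,0,0,0,0,0,0,0,0,0,0,0], [0,0,1,1,1,1,2,2,0,0,2,2], [0,0,1,1,2,2,0,0,1,1,2,2], [0,0,1,1,2,2,1,1,2,2,0,0], [0,0,1,1,1,1,0,0,2,2,2,2], [0,0,0,0,1,1,2,2,1,1,2,2], [0,0,1,1,0,0,2,2,2,2,1,1], [0,0,1,1,2,2,2,2,0,0,1,1], [0,0,1,1,0,0,1,1,2,2,2,2], [0,0,0,0,1,1,2,2,2,2,1,1], [0,0,1,1,2,2,2,2,1,1,0,0]]
def cT6_2_2_2 : List (List (List Nat)) := [[[], [], []], [[0,1,8,9], [2,3,5,4], [6,7,11,10]], [[0,1,6,7], [2,3,8,9], [4,5,10,11]], [[0,1,11,10], [2,3,7,6], [4,5,8,9]], [[0,1,7,6], [2,3,4,5], [8,9,10,11]], [[0,1,2,3], [4,5,9,8], [6,7,10,11]], [[0,1,4,5], [2,3,10,11], [6,7,8,9]], [[0,1,9,8], [2,3,11,10], [4,5,7,6]], [[0,1,5,4], [2,3,6,7], [8,9,11,10]], [[0,1,3,2], [4,5,11,10], [6,7,9,8]], [[0,1,10,11],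 [2,3,9,8], [4,5,6,7]]]
def fF6_2_2_2 : Fin (2*6-2+1) → Fin (2*6) → Fin (2*6) :=
  fun i v => Fin.ofNat _ ((fT6_2_2_2.getD i.val []).getD v.val 0)
def lF6_2_2_2 : Fin (2*6-2+1) → Fin (2*6) → Fin 3 :=
  fun i v => Fin.ofNat _ ((lT6_2_2_2.getD i.val []).getD v.val 0)
def cF6_2_2_2 : Fin (2*6-2+1) → Fin 3 → List (Fin (2*6)) :=
  fun i j => ((cT6_2_2_2.getD i.val []).getD j.val []).map (Fin.ofNat _)
lemma cert_6_2_2_2 : HOPSolvable 6 ![4, 4, 4] := by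
  apply hop_of_cert 6 3 (by norm_num) _ (by decide) fF6_2_2_2 (Fin.ofNat _ 0) lF6_2_2_2 cF6_2_2_2
  · decide
  · decide
  · decide
  · decide
  · decide
  · decide

def fT6_2_4 : List (List Nat) := [[1,0,3,2,5,4,7,6,9,8,11,10], [7,11,10,6,9,8,3,0,5,4,2,1], [4,6,7,5,0,3,1,2,11,10,9,8], [8,4,11,10,1,6,5,9,0,7,3,2], [10,5,9,8,7,1,11,4,3,2,0,6], [5,8,4,9,2,0,10,11,1,3,6,7], [2,9,0,7,11,10,8,3,6,1,5,4], [3,7,8,0,10,11,9,1,2,6,4,5], [11,3,6,1,8,9,2,10,4,5,7,0], [6,10,5,4,3,2,0,8,7,11,1,9], [9,2,1,11,6,7,4,5,10,0,8,3]]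
def lT6_2_4 : List (List Nat) := [[0,0,0,0,0,0,0,0,0,0,0,0], [1,1,1,1,0,0,1,1,0,0,1,1], [1,1,1,1,1,1,1,1,0,0,0,0], [1,1,0,0,1,1,1,1,1,1,0,0], [1,1,0,0,1,1,1,1,0,0,1,1], [1,1,1,1,1,1,0,0,1,1,0,0], [1,1,1,1,0,0,1,1,1,1,0,0], [1,1,1,1,0,0,1,1,1,1,0,0], [1,1,1,1,0,0,1,1,0,0,1,1], [1,1,0,0,0,0,1,1,1,1,1,1], [1,1,1,1,0,0,0,0,1,1,1,1]]
def cT6_2_4 : List (List (List Nat)) := [[[], []], [[4,5,8,9], [0,1,11,10,2,3,6,7]], [[8,9,10,11], [0,1,6,7,2,3,5,4]], [[2,3,10,11], [0,1,4,5,6,7,9,8]], [[2,3,8,9], [0,1,5,4,7,6,11,10]], [[6,7,11,10], [0,1,8,9,3,2,4,5]], [[4,5,10,11], [0,1,9,8,6,7,3,2]], [[4,5,11,10], [0,1,7,6,9,8,2,3]], [[4,5,9,8], [0,1,3,2,6,7,10,11]], [[2,3,4,5], [0,1,10,11,9,8,7,6]], [[4,5,7,6], [0,1,2,3,11,10,8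,9]]]
def fF6_2_4 : Fin (2*6-2+1) → Fin (2*6) → Fin (2*6) :=
  fun i v => Fin.ofNat _ ((fT6_2_4.getD i.val []).getD v.val 0)
def lF6_2_4 : Fin (2*6-2+1) → Fin (2*6) → Fin 2 :=
  fun i v => Fin.ofNat _ ((lT6_2_4.getD i.val []).getD v.val 0)
def cF6_2_4 : Fin (2*6-2+1) → Fin 2 → List (Fin (2*6)) :=
  fun i j => ((cT6_2_4.getD i.val []).getD j.val []).map (Fin.ofNat _)
lemma cert_6_2_4 : HOPSolvable 6 ![4, 8] := by
  apply hop_of_cert 6 2 (by norm_num) _ (by decide) fF6_2_4 (Fin.ofNat _ 0) lF6_2_4 cF6_2_4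
  · decide
  · decide
  · decide
  · decide
  · decide
  · decide

def fT6_3_3 : List (List Nat) := [[1,0,3,2,5,4,7,6,9,8,11,10], [9,5,7,10,8,1,11,2,4,0,3,6], [7,2,1,6,9,11,3,0,10,4,8,5], [11,4,8,7,1,10,9,3,2,6,5,0], [6,11,9,4,3,8,0,10,5,2,7,1], [10,8,6,5,7,3,2,4,1,11,0,9], [3,10,11,0,6,9,4,8,7,5,1,2], [8,6,5,11,10,2,1,9,0,7,4,3], [5,3,4,1,2,0,8,11,6,10,9,7], [4,7,10,9,0,6,5,1,11,3,2,8], [2,9,0,8,11,7,10,5,3,1,6,4]]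
def lT6_3_3 : List (List Nat) := [[0,0,0,0,0,0,0,0,0,0,0,0], [0,0,1,1,0,0,1,1,0,0,1,1], [0,0,0,0,1,1,0,0,1,1,1,1], [0,0,1,1,0,0,1,1,1,1,0,0], [0,0,1,1,1,1,0,0,1,1,0,0], [0,0,1,1,1,1,1,1,0,0,0,0], [0,0,0,0,1,1,1,1,1,1,0,0], [0,0,1,1,1,1,0,0,0,0,1,1], [0,0,0,0,0,0,1,1,1,1,1,1], [0,0,1,1,0,0,0,0,1,1,1,1], [0,0,0,0,1,1,1,1,0,0,1,1]]
def cT6_3_3 : List (List (List Nat)) := [[[], []], [[0,1,5,4,8,9], [2,3,10,11,6,7]], [[0,1,2,3,6,7], [4,5,11,10,8,9]], [[0,1,4,5,10,11], [2,3,7,6,9,8]], [[0,1,11,10,7,6], [2,3,4,5,8,9]], [[0,1,8,9,11,10], [2,3,5,4,7,6]], [[0,1,10,11,2,3], [4,5,9,8,7,6]], [[0,1,6,7,9,8], [2,3,11,10,4,5]], [[0,1,3,2,4,5], [6,7,11,10,9,8]], [[0,1,7,6,5,4], [2,3,9,8,11,10]], [[0,1,9,8,3,2], [4,5,7,6,1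0,11]]]
def fF6_3_3 : Fin (2*6-2+1) → Fin (2*6) → Fin (2*6) :=
  fun i v => Fin.ofNat _ ((fT6_3_3.getD i.val []).getD v.val 0)
def lF6_3_3 : Fin (2*6-2+1) → Fin (2*6) → Fin 2 :=
  fun i v => Fin.ofNat _ ((lT6_3_3.getD i.val []).getD v.val 0)
def cF6_3_3 : Fin (2*6-2+1) → Fin 2 → List (Fin (2*6)) :=
  fun i j => ((cT6_3_3.getD i.val []).getD j.val []).map (Fin.ofNat _)
lemma cert_6_3_3 : HOPSolvable 6 ![6, 6] := by
  apply hop_of_cert 6 2 (by norm_num) _ (by decide) fF6_3_3 (Fin.ofNat _ 0) lF6_3_3 cF6_3_3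
  · decide
  · decide
  · decide
  · decide
  · decide
  · decide

def fT6_6 : List (List Nat) := [[1,0,3,2,5,4,7,6,9,8,11,10], [9,7,5,8,11,2,10,1,3,0,6,4], [5,8,6,10,7,0,2,4,1,11,3,9], [3,10,9,0,8,7,11,5,4,2,1,6], [7,9,11,5,6,3,4,0,10,1,8,2], [11,5,8,4,3,1,9,10,2,6,7,0], [10,6,4,9,2,11,1,8,7,3,0,5], [2,11,0,7,10,9,8,3,6,5,4,1], [6,4,7,11,1,8,0,2,5,10,9,3], [4,2,1,6,0,10,3,9,11,7,5,8], [8,3,10,1,9,6,5,11,0,4,2,7]]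
def lT6_6 : List (List Nat) := [[0,0,0,0,0,0,0,0,0,0,0,0], [0,0,0,0,0,0,0,0,0,0,0,0], [0,0,0,0,0,0,0,0,0,0,0,0], [0,0,0,0,0,0,0,0,0,0,0,0], [0,0,0,0,0,0,0,0,0,0,0,0], [0,0,0,0,0,0,0,0,0,0,0,0], [0,0,0,0,0,0,0,0,0,0,0,0], [0,0,0,0,0,0,0,0,0,0,0,0], [0,0,0,0,0,0,0,0,0,0,0,0], [0,0,0,0,0,0,0,0,0,0,0,0], [0,0,0,0,0,0,0,0,0,0,0,0]]
def cT6_6 : List (List (List Nat)) := [[[]], [[0,1,7,6,10,11,4,5,2,3,8,9]], [[0,1,8,9,11,10,3,2,6,7,4,5]], [[0,1,10,11,6,7,5,4,8,9,2,3]], [[0,1,9,8,10,11,2,3,5,4,6,7]], [[0,1,5,4,3,2,8,9,6,7,10,11]], [[0,1,6,7,8,9,3,2,4,5,11,10]], [[0,1,11,10,4,5,9,8,6,7,3,2]], [[0,1,4,5,8,9,10,11,3,2,7,6]], [[0,1,2,3,6,7,9,8,11,10,5,4]], [[0,1,3,2,10,11,7,6,5,4,9,8]]]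
def fF6_6 : Fin (2*6-2+1) → Fin (2*6) → Fin (2*6) :=
  fun i v => Fin.ofNat _ ((fT6_6.getD i.val []).getD v.val 0)
def lF6_6 : Fin (2*6-2+1) → Fin (2*6) → Fin 1 :=
  fun i v => Fin.ofNat _ ((lT6_6.getD i.val []).getD v.val 0)
def cF6_6 : Fin (2*6-2+1) → Fin 1 → List (Fin (2*6)) :=
  fun i j => ((cT6_6.getD i.val []).getD j.val []).map (Fin.ofNat _)
lemma cert_6_6 : HOPSolvable 6 ![12] := by
  apply hop_of_cert 6 1 (by norm_num) _ (by decide) fF6_6 (Fin.ofNat _ 0) lF6_6 cF6_6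
  · decide
  · decide
  · decide
  · decide
  · decide
  · decide

def fT7_2_2_3 : List (List Nat) := [[1,0,3,2,5,4,7,6,9,8,11,10,13,12], [5,12,8,9,13,0,10,11,2,3,6,7,1,4], [13,5,7,6,12,1,3,2,11,10,9,8,4,0], [8,6,13,12,10,11,1,9,0,7,4,5,3,2], [10,8,5,4,3,2,12,13,1,11,0,9,6,7], [7,3,6,1,11,10,2,0,13,12,5,4,9,8], [12,4,9,8,1,13,11,10,3,2,7,6,0,5], [9,7,4,5,2,3,8,1,6,0,13,12,11,10], [2,10,0,11,8,9,13,12,4,5,1,3,7,6], [6,2,1,7,9,8,0,3,5,4,12,13,10,11], [11,9,12,13,6,7,4,5,10,1,8,0,2,3], [4,13,11,10,0,12,9,8,7,6,3,2,5,1], [3,11,10,0,7,6,5,4,12,13,2,1,8,9]]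
def lT7_2_2_3 : List (List Nat) := [[0,0,0,0,0,0,0,0,0,0,0,0,0,0], [2,2,0,0,2,2,1,1,0,0,1,1,2,2], [2,2,0,0,2,2,0,0,1,1,1,1,2,2], [2,2,0,0,1,1,2,2,2,2,1,1,0,0], [2,2,0,0,0,0,1,1,2,2,2,2,1,1], [2,2,2,2,0,0,2,2,1,1,0,0,1,1], [2,2,0,0,2,2,1,1,0,0,1,1,2,2], [2,2,0,0,0,0,2,2,2,2,1,1,1,1], [2,2,2,2,0,0,1,1,0,0,2,2,1,1], [2,2,2,2,0,0,2,2,0,0,1,1,1,1], [2,2,0,0,1,1,1,1,2,2,2,2,0,0], [2,2,0,0,2,2,1,1,1,1,0,0,2,2], [2,2,2,2,0,0,0,0,1,1,2,2,1,1]]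
def cT7_2_2_3 : List (List (List Nat)) := [[[], [], []], [[2,3,9,8], [6,7,11,10], [0,1,12,13,4,5]], [[2,3,6,7], [8,9,10,11], [0,1,5,4,12,13]], [[2,3,12,13], [4,5,11,10], [0,1,6,7,9,8]], [[2,3,4,5], [6,7,13,12], [0,1,8,9,11,10]], [[4,5,10,11], [8,9,12,13], [0,1,3,2,6,7]], [[2,3,8,9], [6,7,10,11], [0,1,4,5,13,12]], [[2,3,5,4], [10,11,12,13], [0,1,7,6,8,9]], [[4,5,9,8], [6,7,12,13], [0,1,10,11,3,2]], [[4,5,8,9], [10,11,13,12], [0,1,2,3,7,6]], [[2,3,13,12], [4,5,7,6], [0,1,9,8,10,11]], [[2,3,10,11], [6,7,8,9], [0,1,13,12,5,4]], [[4,5,6,7], [8,9,13,12], [0,1,11,10,2,3]]]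
def fF7_2_2_3 : Fin (2*7-2+1) → Fin (2*7) → Fin (2*7) :=
  fun i v => Fin.ofNat _ ((fT7_2_2_3.getD i.val []).getD v.val 0)
def lF7_2_2_3 : Fin (2*7-2+1) → Fin (2*7) → Fin 3 :=
  fun i v => Fin.ofNat _ ((lT7_2_2_3.getD i.val []).getD v.val 0)
def cF7_2_2_3 : Fin (2*7-2+1) → Fin 3 → List (Fin (2*7)) :=
  fun i j => ((cT7_2_2_3.getD i.val []).getD j.val []).map (Fin.ofNat _)
lemma cert_7_2_2_3 : HOPSolvable 7 ![4, 4, 6] := by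
  apply hop_of_cert 7 3 (by norm_num) _ (by decide) fF7_2_2_3 (Fin.ofNat _ 0) lF7_2_2_3 cF7_2_2_3
  · decide
  · decide
  · decide
  · decide
  · decide
  · decide

def fT7_2_5 : List (List Nat) := [[1,0,3,2,5,4,7,6,9,8,11,10,13,12], [9,2,1,4,3,11,13,12,10,0,8,5,7,6], [8,11,13,9,6,7,4,5,0,3,12,1,10,2], [13,10,5,12,11,2,8,9,6,7,1,4,3,0], [4,7,11,10,0,12,9,1,13,6,3,2,5,8], [12,5,8,13,9,1,10,11,2,4,6,7,0,3], [2,8,0,11,10,9,12,13,1,5,4,3,6,7], [5,13,12,6,7,0,3,4,11,10,9,8,2,1], [6,9,7,5,8,3,0,2,4,1,13,12,11,10], [10,4,6,7,1,8,2,3,5,12,0,13,9,11], [3,6,10,0,12,13,1,8,7,11,2,9,4,5], [11,3,4,1,2,6,5,10,12,13,7,0,8,9], [7,12,9,8,13,10,11,0,3,2,5,6,1,4]]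
def lT7_2_5 : List (List Nat) := [[0,0,0,0,0,0,0,0,0,0,0,0,0,0], [1,1,1,1,1,1,0,0,1,1,1,1,0,0], [1,1,1,1,0,0,0,0,1,1,1,1,1,1], [1,1,1,1,1,1,0,0,0,0,1,1,1,1], [1,1,0,0,1,1,1,1,1,1,0,0,1,1], [1,1,1,1,1,1,0,0,1,1,0,0,1,1], [1,1,1,1,1,1,0,0,1,1,1,1,0,0], [1,1,1,1,1,1,1,1,0,0,0,0,1,1], [1,1,1,1,1,1,1,1,1,1,0,0,0,0], [1,1,0,0,1,1,0,0,1,1,1,1,1,1], [1,1,1,1,0,0,1,1,1,1,1,1,0,0], [1,1,1,1,1,1,1,1,0,0,1,1,0,0], [1,1,0,0,1,1,1,1,0,0,1,1,1,1]]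
def cT7_2_5 : List (List (List Nat)) := [[[], []], [[6,7,12,13], [0,1,2,3,4,5,11,10,8,9]], [[4,5,7,6], [0,1,11,10,12,13,2,3,9,8]], [[6,7,9,8], [0,1,10,11,4,5,2,3,12,13]], [[2,3,10,11], [0,1,7,6,9,8,13,12,5,4]], [[6,7,11,10], [0,1,5,4,9,8,2,3,13,12]], [[6,7,13,12], [0,1,8,9,5,4,10,11,3,2]], [[8,9,10,11], [0,1,13,12,2,3,6,7,4,5]], [[10,11,12,13], [0,1,9,8,4,5,3,2,7,6]], [[2,3,7,6], [0,1,4,5,8,9,12,13,11,10]], [[4,5,13,12], [0,1,6,7,8,9,11,10,2,3]], [[8,9,13,12], [0,1,3,2,4,5,6,7,10,11]], [[2,3,8,9], [0,1,12,13,4,5,10,11,6,7]]]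
def fF7_2_5 : Fin (2*7-2+1) → Fin (2*7) → Fin (2*7) :=
  fun i v => Fin.ofNat _ ((fT7_2_5.getD i.val []).getD v.val 0)
def lF7_2_5 : Fin (2*7-2+1) → Fin (2*7) → Fin 2 :=
  fun i v => Fin.ofNat _ ((lT7_2_5.getD i.val []).getD v.val 0)
def cF7_2_5 : Fin (2*7-2+1) → Fin 2 → List (Fin (2*7)) :=
  fun i j => ((cT7_2_5.getD i.val []).getD j.val []).map (Fin.ofNat _)
lemma cert_7_2_5 : HOPSolvable 7 ![4, 10] := by
  apply hop_of_cert 7 2 (by norm_num) _ (by decide) fF7_2_5 (Fin.ofNat _ 0) lF7_2_5 cF7_2_5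
  · decide
  · decide
  · decide
  · decide
  · decide
  · decide

def fT7_3_4 : List (List Nat) := [[1,0,3,2,5,4,7,6,9,8,11,10,13,12], [8,11,5,13,12,2,9,10,0,6,7,1,4,3], [2,10,0,9,13,7,12,5,11,3,1,8,6,4], [12,4,8,11,1,6,5,13,2,10,9,3,0,7], [6,8,4,10,2,11,0,12,1,13,3,5,7,9], [11,9,12,4,3,13,10,8,7,1,6,0,2,5], [9,6,10,12,7,8,1,4,5,0,2,13,3,11], [5,3,9,1,8,0,13,11,4,2,12,7,10,6], [3,5,7,0,6,1,4,2,12,11,13,9,8,10], [7,12,13,6,11,9,3,0,10,5,8,4,1,2], [4,13,6,8,0,10,2,9,3,7,5,12,11,1], [13,7,11,5,10,3,8,1,6,12,4,2,9,0], [10,2,1,7,9,12,11,3,13,4,0,6,5,8]]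
def lT7_3_4 : List (List Nat) := [[0,0,0,0,0,0,0,0,0,0,0,0,0,0], [1,1,0,0,0,0,1,1,1,1,1,1,0,0], [1,1,1,1,0,0,0,0,1,1,1,1,0,0], [1,1,0,0,1,1,1,1,0,0,0,0,1,1], [1,1,0,0,0,0,1,1,1,1,0,0,1,1], [1,1,0,0,0,0,1,1,1,1,1,1,0,0], [1,1,0,0,1,1,1,1,1,1,0,0,0,0], [1,1,1,1,1,1,0,0,1,1,0,0,0,0], [1,1,1,1,1,1,1,1,0,0,0,0,0,0], [1,1,1,1,0,0,1,1,0,0,0,0,1,1], [1,1,0,0,1,1,0,0,0,0,1,1,1,1], [1,1,0,0,0,0,1,1,1,1,0,0,1,1], [1,1,1,1,0,0,1,1,0,0,1,1,0,0]]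
def cT7_3_4 : List (List (List Nat)) := [[[], []], [[2,3,13,12,4,5], [0,1,11,10,7,6,9,8]], [[4,5,7,6,12,13], [0,1,10,11,8,9,3,2]], [[2,3,11,10,9,8], [0,1,4,5,6,7,13,12]], [[2,3,10,11,5,4], [0,1,8,9,13,12,7,6]], [[2,3,4,5,13,12], [0,1,9,8,7,6,10,11]], [[2,3,12,13,11,10], [0,1,6,7,4,5,8,9]], [[6,7,11,10,12,13], [0,1,3,2,9,8,4,5]], [[8,9,11,10,13,12], [0,1,5,4,6,7,2,3]], [[4,5,9,8,10,11], [0,1,12,13,2,3,6,7]], [[2,3,8,9,7,6], [0,1,13,12,11,10,5,4]], [[2,3,5,4,10,11], [0,1,7,6,8,9,12,13]], [[4,5,12,13,8,9], [0,1,2,3,7,6,11,10]]]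
def fF7_3_4 : Fin (2*7-2+1) → Fin (2*7) → Fin (2*7) :=
  fun i v => Fin.ofNat _ ((fT7_3_4.getD i.val []).getD v.val 0)
def lF7_3_4 : Fin (2*7-2+1) → Fin (2*7) → Fin 2 :=
  fun i v => Fin.ofNat _ ((lT7_3_4.getD i.val []).getD v.val 0)
def cF7_3_4 : Fin (2*7-2+1) → Fin 2 → List (Fin (2*7)) :=
  fun i j => ((cT7_3_4.getD i.val []).getD j.val []).map (Fin.ofNat _)
lemma cert_7_3_4 : HOPSolvable 7 ![6, 8] := by
  apply hop_of_cert 7 2 (by norm_num) _ (by decide) fF7_3_4 (Fin.ofNat _ 0) lF7_3_4 cF7_3_4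
  · decide
  · decide
  · decide
  · decide
  · decide
  · decide

def fT7_7 : List (List Nat) := [[1,0,3,2,5,4,7,6,9,8,11,10,13,12], [13,7,10,4,3,6,5,1,11,12,2,8,9,0], [12,6,11,5,13,3,1,9,10,7,8,2,0,4], [4,12,9,7,0,8,10,3,5,2,6,13,1,11], [8,2,1,11,6,12,4,10,0,13,7,3,5,9], [2,8,0,13,10,9,11,12,1,5,4,6,7,3], [7,3,13,1,12,11,8,0,6,10,9,5,4,2], [10,5,8,6,9,1,3,13,2,4,0,12,11,7], [9,4,6,8,1,13,2,11,3,0,12,7,10,5], [6,13,4,12,2,10,0,8,7,11,5,9,3,1], [3,10,12,0,11,7,9,5,13,6,1,4,2,8], [11,9,5,10,7,2,13,4,12,1,3,0,8,6], [5,11,7,9,8,0,12,2,4,3,13,1,6,10]]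
def lT7_7 : List (List Nat) := [[0,0,0,0,0,0,0,0,0,0,0,0,0,0], [0,0,0,0,0,0,0,0,0,0,0,0,0,0], [0,0,0,0,0,0,0,0,0,0,0,0,0,0], [0,0,0,0,0,0,0,0,0,0,0,0,0,0], [0,0,0,0,0,0,0,0,0,0,0,0,0,0], [0,0,0,0,0,0,0,0,0,0,0,0,0,0], [0,0,0,0,0,0,0,0,0,0,0,0,0,0], [0,0,0,0,0,0,0,0,0,0,0,0,0,0], [0,0,0,0,0,0,0,0,0,0,0,0,0,0], [0,0,0,0,0,0,0,0,0,0,0,0,0,0], [0,0,0,0,0,0,0,0,0,0,0,0,0,0], [0,0,0,0,0,0,0,0,0,0,0,0,0,0], [0,0,0,0,0,0,0,0,0,0,0,0,0,0]]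
def cT7_7 : List (List (List Nat)) := [[[]], [[0,1,7,6,5,4,3,2,10,11,8,9,12,13]], [[0,1,6,7,9,8,10,11,2,3,5,4,13,12]], [[0,1,12,13,11,10,6,7,3,2,9,8,5,4]], [[0,1,2,3,11,10,7,6,4,5,12,13,9,8]], [[0,1,8,9,5,4,10,11,6,7,12,13,3,2]], [[0,1,3,2,13,12,4,5,11,10,9,8,6,7]], [[0,1,5,4,9,8,2,3,6,7,13,12,11,10]], [[0,1,4,5,13,12,10,11,7,6,2,3,8,9]], [[0,1,13,12,3,2,4,5,10,11,9,8,7,6]], [[0,1,10,11,4,5,7,6,9,8,13,12,2,3]], [[0,1,9,8,12,13,6,7,4,5,2,3,10,11]], [[0,1,11,10,13,12,6,7,2,3,9,8,4,5]]]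
def fF7_7 : Fin (2*7-2+1) → Fin (2*7) → Fin (2*7) :=
  fun i v => Fin.ofNat _ ((fT7_7.getD i.val []).getD v.val 0)
def lF7_7 : Fin (2*7-2+1) → Fin (2*7) → Fin 1 :=
  fun i v => Fin.ofNat _ ((lT7_7.getD i.val []).getD v.val 0)
def cF7_7 : Fin (2*7-2+1) → Fin 1 → List (Fin (2*7)) :=
  fun i j => ((cT7_7.getD i.val []).getD j.val []).map (Fin.ofNat _)
lemma cert_7_7 : HOPSolvable 7 ![14] := by
  apply hop_of_cert 7 1 (by norm_num) _ (by decide) fF7_7 (Fin.ofNat _ 0) lF7_7 cF7_7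
  · decide
  · decide
  · decide
  · decide
  · decide
  · decide

def fT8_2_2_2_2 : List (List Nat) := [[1,0,3,2,5,4,7,6,9,8,11,10,13,12,15,14], [3,2,1,0,6,7,4,5,13,12,14,15,9,8,10,11], [11,10,14,15,9,8,12,13,5,4,1,0,6,7,2,3], [2,3,0,1,11,10,9,8,7,6,5,4,14,15,12,13], [14,15,8,9,12,13,11,10,2,3,7,6,4,5,0,1], [15,14,4,5,2,3,13,12,11,10,9,8,7,6,1,0], [7,6,12,13,15,14,1,0,10,11,8,9,2,3,5,4], [9,8,13,12,10,11,15,14,1,0,4,5,3,2,7,6], [13,12,15,14,8,9,10,11,4,5,6,7,1,0,3,2], [6,7,10,11,13,12,0,1,15,14,2,3,5,4,9,8], [4,5,7,6,0,1,3,2,12,13,15,14,8,9,11,10], [10,11,5,4,3,2,8,9,6,7,0,1,15,14,13,12], [8,9,6,7,14,15,2,3,0,1,13,12,11,10,4,5], [12,13,11,10,7,6,5,4,14,15,3,2,0,1,8,9], [5,4,9,8,1,0,14,15,3,2,12,13,10,11,6,7]]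
def lT8_2_2_2_2 : List (List Nat) := [[0,0,0,0,0,0,0,0,0,0,0,0,0,0,0,0], [0,0,0,0,1,1,1,1,2,2,3,3,2,2,3,3], [0,0,1,1,2,2,3,3,2,2,0,0,3,3,1,1], [0,0,0,0,1,1,2,2,2,2,1,1,3,3,3,3], [0,0,1,1,2,2,3,3,1,1,3,3,2,2,0,0], [0,0,1,1,1,1,2,2,3,3,3,3,2,2,0,0], [0,0,1,1,2,2,0,0,3,3,3,3,1,1,2,2], [0,0,1,1,2,2,3,3,0,0,2,2,1,1,3,3], [0,0,1,1,2,2,3,3,2,2,3,3,0,0,1,1], [0,0,1,1,2,2,0,0,3,3,1,1,2,2,3,3], [0,0,1,1,0,0,1,1,2,2,3,3,2,2,3,3], [0,0,1,1,1,1,2,2,2,2,0,0,3,3,3,3], [0,0,1,1,2,2,1,1,0,0,3,3,3,3,2,2], [0,0,1,1,2,2,2,2,3,3,1,1,0,0,3,3], [0,0,1,1,0,0,2,2,1,1,3,3,3,3,2,2]]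
def cT8_2_2_2_2 : List (List (List Nat)) := [[[], [], [], []], [[0,1,2,3], [4,5,7,6], [8,9,12,13], [10,11,15,14]], [[0,1,10,11], [2,3,15,14], [4,5,8,9], [6,7,13,12]], [[0,1,3,2], [4,5,10,11], [6,7,8,9], [12,13,15,14]], [[0,1,15,14], [2,3,9,8], [4,5,13,12], [6,7,10,11]], [[0,1,14,15], [2,3,5,4], [6,7,12,13], [8,9,10,11]], [[0,1,6,7], [2,3,13,12], [4,5,14,15], [8,9,11,10]], [[0,1,8,9], [2,3,12,13], [4,5,11,10], [6,7,14,15]], [[0,1,12,13], [2,3,14,15], [4,5,9,8], [6,7,11,10]], [[0,1,7,6], [2,3,11,10], [4,5,12,13], [8,9,14,15]], [[0,1,5,4], [2,3,6,7], [8,9,13,12], [10,11,14,15]], [[0,1,11,10], [2,3,4,5], [6,7,9,8], [12,13,14,15]], [[0,1,9,8], [2,3,7,6], [4,5,15,14], [10,11,12,13]], [[0,1,13,12], [2,3,10,11], [4,5,6,7], [8,9,15,14]], [[0,1,4,5], [2,3,8,9], [6,7,15,14], [10,11,13,12]]]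
def fF8_2_2_2_2 : Fin (2*8-2+1) → Fin (2*8) → Fin (2*8) :=
  fun i v => Fin.ofNat _ ((fT8_2_2_2_2.getD i.val []).getD v.val 0)
def lF8_2_2_2_2 : Fin (2*8-2+1) → Fin (2*8) → Fin 4 :=
  fun i v => Fin.ofNat _ ((lT8_2_2_2_2.getD i.val []).getD v.val 0)
def cF8_2_2_2_2 : Fin (2*8-2+1) → Fin 4 → List (Fin (2*8)) :=
  fun i j => ((cT8_2_2_2_2.getD i.val []).getD j.val []).map (Fin.ofNat _)
lemma cert_8_2_2_2_2 : HOPSolvable 8 ![4, 4, 4, 4] := by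
  apply hop_of_cert 8 4 (by norm_num) _ (by decide) fF8_2_2_2_2 (Fin.ofNat _ 0) lF8_2_2_2_2 cF8_2_2_2_2
  · decide
  · decide
  · decide
  · decide
  · decide
  · decide

def fT8_2_2_4 : List (List Nat) := [[1,0,3,2,5,4,7,6,9,8,11,10,13,12,15,14], [6,7,14,15,10,13,0,1,12,11,4,9,8,5,2,3], [3,2,1,0,11,10,13,9,14,7,5,4,15,6,8,12], [8,9,7,6,13,15,3,2,0,1,12,14,10,4,11,5], [2,3,0,1,9,8,12,14,5,4,15,13,6,11,7,10], [5,4,6,7,1,0,2,3,11,12,14,8,9,15,10,13], [15,14,8,9,12,11,10,13,2,3,6,5,4,7,1,0], [13,12,4,5,2,3,14,8,7,10,9,15,1,0,6,11], [11,10,9,8,15,6,5,12,3,2,1,0,7,14,13,4], [7,6,11,10,14,12,1,0,13,15,3,2,5,8,4,9], [4,5,15,14,0,1,8,10,6,13,7,12,11,9,3,2], [9,8,5,4,3,2,11,15,1,0,13,6,14,10,12,7], [12,13,10,11,7,14,9,4,15,6,2,3,0,1,5,8], [14,15,12,13,6,9,4,11,10,5,8,7,2,3,0,1], [10,11,13,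12,8,7,15,5,4,14,0,1,3,2,9,6]]
def lT8_2_2_4 : List (List Nat) := [[0,0,0,0,0,0,0,0,0,0,0,0,0,0,0,0], [0,0,1,1,2,2,0,0,2,2,2,2,2,2,1,1], [0,0,0,0,1,1,2,2,2,2,1,1,2,2,2,2], [0,0,1,1,2,2,1,1,0,0,2,2,2,2,2,2], [0,0,0,0,1,1,2,2,1,1,2,2,2,2,2,2], [0,0,1,1,0,0,1,1,2,2,2,2,2,2,2,2], [0,0,1,1,2,2,2,2,1,1,2,2,2,2,0,0], [0,0,1,1,1,1,2,2,2,2,2,2,0,0,2,2], [0,0,1,1,2,2,2,2,1,1,0,0,2,2,2,2], [0,0,1,1,2,2,0,0,2,2,1,1,2,2,2,2], [0,0,1,1,0,0,2,2,2,2,2,2,2,2,1,1], [0,0,1,1,1,1,2,2,0,0,2,2,2,2,2,2], [0,0,1,1,2,2,2,2,2,2,1,1,0,0,2,2], [0,0,1,1,2,2,2,2,2,2,2,2,1,1,0,0], [0,0,1,1,2,2,2,2,2,2,0,0,1,1,2,2]]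
def cT8_2_2_4 : List (List (List Nat)) := [[[], [], []], [[0,1,7,6], [2,3,15,14], [4,5,13,12,8,9,11,10]], [[0,1,2,3], [4,5,10,11], [6,7,9,8,14,15,12,13]], [[0,1,9,8], [2,3,6,7], [4,5,15,14,11,10,12,13]], [[0,1,3,2], [4,5,8,9], [6,7,14,15,10,11,13,12]], [[0,1,4,5], [2,3,7,6], [8,9,12,13,15,14,10,11]], [[0,1,14,15], [2,3,9,8], [4,5,11,10,6,7,13,12]], [[0,1,12,13], [2,3,5,4], [6,7,8,9,10,11,15,14]], [[0,1,10,11], [2,3,8,9], [4,5,6,7,12,13,14,15]], [[0,1,6,7], [2,3,10,11], [4,5,12,13,8,9,15,14]], [[0,1,5,4], [2,3,14,15], [6,7,10,11,12,13,9,8]], [[0,1,8,9], [2,3,4,5], [6,7,15,14,12,13,10,11]], [[0,1,13,12], [2,3,11,10], [4,5,14,15,8,9,6,7]], [[0,1,15,14], [2,3,13,12], [4,5,9,8,10,11,7,6]], [[0,1,11,10], [2,3,12,13], [4,5,7,6,15,14,9,8]]]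
def fF8_2_2_4 : Fin (2*8-2+1) → Fin (2*8) → Fin (2*8) :=
  fun i v => Fin.ofNat _ ((fT8_2_2_4.getD i.val []).getD v.val 0)
def lF8_2_2_4 : Fin (2*8-2+1) → Fin (2*8) → Fin 3 :=
  fun i v => Fin.ofNat _ ((lT8_2_2_4.getD i.val []).getD v.val 0)
def cF8_2_2_4 : Fin (2*8-2+1) → Fin 3 → List (Fin (2*8)) :=
  fun i j => ((cT8_2_2_4.getD i.val []).getD j.val []).map (Fin.ofNat _)
lemma cert_8_2_2_4 : HOPSolvable 8 ![4, 4, 8] := by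
  apply hop_of_cert 8 3 (by norm_num) _ (by decide) fF8_2_2_4 (Fin.ofNat _ 0) lF8_2_2_4 cF8_2_2_4
  · decide
  · decide
  · decide
  · decide
  · decide
  · decide

def fT8_2_3_3 : List (List Nat) := [[1,0,3,2,5,4,7,6,9,8,11,10,13,12,15,14], [2,3,0,1,15,10,12,8,7,13,5,14,6,9,11,4], [11,10,13,4,3,12,15,9,14,7,1,0,5,2,8,6], [4,5,9,7,0,1,8,3,6,2,15,12,11,14,13,10], [7,6,5,10,11,2,1,0,12,14,3,4,8,15,9,13], [3,2,1,0,7,8,9,4,5,6,14,13,15,11,10,12], [12,13,8,11,6,14,4,15,2,10,9,3,0,1,5,7], [13,12,11,6,14,9,3,10,15,5,7,2,1,0,4,8], [6,7,4,14,2,15,0,1,13,11,12,9,10,8,3,5], [9,8,15,13,10,6,5,11,1,0,4,7,14,3,12,2], [15,14,10,9,12,7,13,5,11,3,2,8,4,6,1,0], [8,9,12,5,13,3,10,14,0,1,6,15,2,4,7,11], [14,15,6,12,9,11,2,13,10,4,8,5,3,7,0,1], [10,11,7,15,8,13,14,2,4,12,0,1,9,5,6,3], [5,4,14,8,1,0,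11,12,3,15,13,6,7,10,2,9]]
def lT8_2_3_3 : List (List Nat) := [[0,0,0,0,0,0,0,0,0,0,0,0,0,0,0,0], [0,0,0,0,1,1,2,2,2,2,1,1,2,2,1,1], [0,0,1,1,1,1,2,2,2,2,0,0,1,1,2,2], [0,0,1,1,0,0,1,1,1,1,2,2,2,2,2,2], [0,0,1,1,1,1,0,0,2,2,1,1,2,2,2,2], [0,0,0,0,1,1,1,1,1,1,2,2,2,2,2,2], [0,0,1,1,2,2,2,2,1,1,1,1,0,0,2,2], [0,0,1,1,2,2,1,1,2,2,1,1,0,0,2,2], [0,0,1,1,1,1,0,0,2,2,2,2,2,2,1,1], [0,0,1,1,2,2,2,2,0,0,2,2,1,1,1,1], [0,0,1,1,2,2,2,2,1,1,1,1,2,2,0,0], [0,0,1,1,1,1,2,2,0,0,2,2,1,1,2,2], [0,0,1,1,2,2,1,1,2,2,2,2,1,1,0,0], [0,0,1,1,2,2,1,1,2,2,0,0,2,2,1,1], [0,0,1,1,0,0,2,2,1,1,2,2,2,2,1,1]]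
def cT8_2_3_3 : List (List (List Nat)) := [[[], [], []], [[0,1,3,2], [4,5,10,11,14,15], [6,7,8,9,13,12]], [[0,1,10,11], [2,3,4,5,12,13], [6,7,9,8,14,15]], [[0,1,5,4], [2,3,7,6,8,9], [10,11,12,13,14,15]], [[0,1,6,7], [2,3,10,11,4,5], [8,9,14,15,13,12]], [[0,1,2,3], [4,5,8,9,6,7], [10,11,13,12,15,14]], [[0,1,13,12], [2,3,11,10,9,8], [4,5,14,15,7,6]], [[0,1,12,13], [2,3,6,7,10,11], [4,5,9,8,15,14]], [[0,1,7,6], [2,3,14,15,5,4], [8,9,11,10,12,13]], [[0,1,8,9], [2,3,13,12,14,15], [4,5,6,7,11,10]], [[0,1,14,15], [2,3,9,8,11,10], [4,5,7,6,13,12]], [[0,1,9,8], [2,3,5,4,13,12], [6,7,14,15,11,10]], [[0,1,15,14], [2,3,12,13,7,6], [4,5,11,10,8,9]], [[0,1,11,10], [2,3,15,14,6,7], [4,5,13,12,9,8]], [[0,1,4,5], [2,3,8,9,15,14], [6,7,12,13,10,11]]]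
def fF8_2_3_3 : Fin (2*8-2+1) → Fin (2*8) → Fin (2*8) :=
  fun i v => Fin.ofNat _ ((fT8_2_3_3.getD i.val []).getD v.val 0)
def lF8_2_3_3 : Fin (2*8-2+1) → Fin (2*8) → Fin 3 :=
  fun i v => Fin.ofNat _ ((lT8_2_3_3.getD i.val []).getD v.val 0)
def cF8_2_3_3 : Fin (2*8-2+1) → Fin 3 → List (Fin (2*8)) :=
  fun i j => ((cT8_2_3_3.getD i.val []).getD j.val []).map (Fin.ofNat _)
lemma cert_8_2_3_3 : HOPSolvable 8 ![4, 6, 6] := by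
  apply hop_of_cert 8 3 (by norm_num) _ (by decide) fF8_2_3_3 (Fin.ofNat _ 0) lF8_2_3_3 cF8_2_3_3
  · decide
  · decide
  · decide
  · decide
  · decide
  · decide

def fT8_2_6 : List (List Nat) := [[1,0,3,2,5,4,7,6,9,8,11,10,13,12,15,14], [11,6,8,4,3,7,1,5,2,10,9,0,14,15,12,13], [5,15,6,13,12,0,2,14,10,11,8,9,4,3,7,1], [15,13,5,14,10,2,8,9,6,7,4,12,11,1,3,0], [10,7,11,5,8,3,9,1,4,6,0,2,15,14,13,12], [13,14,10,11,6,8,4,12,5,15,2,3,7,0,1,9], [8,5,14,15,7,1,11,4,0,12,13,6,9,10,2,3], [12,2,1,9,13,10,14,15,11,3,5,8,0,4,6,7], [3,4,7,0,1,9,15,2,14,5,12,13,10,11,8,6], [9,3,4,1,2,13,12,8,7,0,14,15,6,5,10,11], [2,8,0,12,9,6,5,13,1,4,15,14,3,7,11,10], [7,10,15,6,14,11,3,0,12,13,1,5,8,9,4,2], [14,12,9,8,11,15,13,10,3,2,7,4,1,6,0,5], [6,9,12,10,15,14,0,11,13,1,3,7,2,8,5,4], [4,11,13,7,0,12,10,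3,15,14,6,1,5,2,9,8]]
def lT8_2_6 : List (List Nat) := [[0,0,0,0,0,0,0,0,0,0,0,0,0,0,0,0], [1,1,1,1,1,1,1,1,1,1,1,1,0,0,0,0], [1,1,1,1,1,1,1,1,0,0,0,0,1,1,1,1], [1,1,1,1,1,1,0,0,0,0,1,1,1,1,1,1], [1,1,1,1,1,1,1,1,1,1,1,1,0,0,0,0], [1,1,0,0,1,1,1,1,1,1,0,0,1,1,1,1], [1,1,0,0,1,1,1,1,1,1,1,1,1,1,0,0], [1,1,1,1,1,1,0,0,1,1,1,1,1,1,0,0], [1,1,1,1,1,1,1,1,1,1,0,0,0,0,1,1], [1,1,1,1,1,1,1,1,1,1,0,0,1,1,0,0], [1,1,1,1,1,1,1,1,1,1,0,0,1,1,0,0], [1,1,1,1,1,1,1,1,0,0,1,1,0,0,1,1], [1,1,0,0,1,1,1,1,0,0,1,1,1,1,1,1], [1,1,1,1,0,0,1,1,1,1,1,1,1,1,0,0], [1,1,1,1,1,1,1,1,0,0,1,1,1,1,0,0]]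
def cT8_2_6 : List (List (List Nat)) := [[[], []], [[12,13,15,14], [0,1,6,7,5,4,3,2,8,9,10,11]], [[8,9,11,10], [0,1,15,14,7,6,2,3,13,12,4,5]], [[6,7,9,8], [0,1,13,12,11,10,4,5,2,3,14,15]], [[12,13,14,15], [0,1,7,6,9,8,4,5,3,2,11,10]], [[2,3,11,10], [0,1,14,15,9,8,5,4,6,7,12,13]], [[2,3,15,14], [0,1,5,4,7,6,11,10,13,12,9,8]], [[6,7,15,14], [0,1,2,3,9,8,11,10,5,4,13,12]], [[10,11,13,12], [0,1,4,5,9,8,14,15,6,7,2,3]], [[10,11,15,14], [0,1,3,2,4,5,13,12,6,7,8,9]], [[10,11,14,15], [0,1,8,9,4,5,6,7,13,12,3,2]], [[8,9,13,12], [0,1,10,11,5,4,14,15,2,3,6,7]], [[2,3,8,9], [0,1,12,13,6,7,10,11,4,5,15,14]], [[4,5,14,15], [0,1,9,8,13,12,2,3,10,11,7,6]], [[8,9,14,15], [0,1,11,10,6,7,3,2,13,12,5,4]]]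
def fF8_2_6 : Fin (2*8-2+1) → Fin (2*8) → Fin (2*8) :=
  fun i v => Fin.ofNat _ ((fT8_2_6.getD i.val []).getD v.val 0)
def lF8_2_6 : Fin (2*8-2+1) → Fin (2*8) → Fin 2 :=
  fun i v => Fin.ofNat _ ((lT8_2_6.getD i.val []).getD v.val 0)
def cF8_2_6 : Fin (2*8-2+1) → Fin 2 → List (Fin (2*8)) :=
  fun i j => ((cT8_2_6.getD i.val []).getD j.val []).map (Fin.ofNat _)
lemma cert_8_2_6 : HOPSolvable 8 ![4, 12] := by
  apply hop_of_cert 8 2 (by norm_num) _ (by decide) fF8_2_6 (Fin.ofNat _ 0) lF8_2_6 cF8_2_6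
  · decide
  · decide
  · decide
  · decide
  · decide
  · decide

def fT8_3_5 : List (List Nat) := [[1,0,3,2,5,4,7,6,9,8,11,10,13,12,15,14], [8,15,12,7,14,10,13,3,0,11,5,9,2,6,4,1], [7,12,15,8,13,11,10,0,3,14,6,5,1,4,9,2], [3,13,11,0,8,7,9,5,4,6,15,2,14,1,12,10], [12,6,5,14,15,2,1,9,11,7,13,8,0,10,3,4], [13,2,1,5,11,3,14,8,7,15,12,4,10,0,6,9], [9,7,10,13,6,14,4,1,15,0,2,12,11,3,5,8], [15,4,6,12,1,9,2,13,10,5,8,14,3,7,11,0], [14,3,4,1,2,13,8,11,6,10,9,7,15,5,0,12], [6,8,9,15,10,12,0,14,1,2,4,13,5,11,7,3], [2,14,0,6,12,8,3,10,5,13,7,15,4,9,1,11], [5,10,8,11,9,0,12,15,2,4,1,3,6,14,13,7], [4,11,7,10,0,6,5,2,14,12,3,1,9,15,8,13], [11,5,13,9,7,1,15,4,12,3,14,0,8,2,10,6], [10,9,14,4,3,15,11,12,13,1,0,6,7,8,2,5]]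
def lT8_3_5 : List (List Nat) := [[0,0,0,0,0,0,0,0,0,0,0,0,0,0,0,0], [1,1,0,0,1,1,0,0,1,1,1,1,0,0,1,1], [1,1,0,0,1,1,1,1,0,0,1,1,1,1,0,0], [1,1,1,1,0,0,0,0,0,0,1,1,1,1,1,1], [1,1,0,0,0,0,1,1,1,1,1,1,1,1,0,0], [1,1,1,1,1,1,0,0,0,0,1,1,1,1,0,0], [1,1,0,0,1,1,1,1,1,1,0,0,0,0,1,1], [1,1,0,0,1,1,0,0,1,1,1,1,0,0,1,1], [1,1,1,1,1,1,0,0,0,0,0,0,1,1,1,1], [1,1,1,1,0,0,1,1,1,1,0,0,0,0,1,1], [1,1,1,1,0,0,1,1,0,0,1,1,0,0,1,1], [1,1,1,1,1,1,0,0,1,1,1,1,0,0,0,0], [1,1,1,1,1,1,1,1,0,0,1,1,0,0,0,0], [1,1,0,0,1,1,1,1,0,0,1,1,0,0,1,1], [1,1,0,0,0,0,1,1,1,1,1,1,1,1,0,0]]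
def cT8_3_5 : List (List (List Nat)) := [[[], []], [[2,3,7,6,13,12], [0,1,15,14,4,5,10,11,9,8]], [[2,3,8,9,14,15], [0,1,12,13,4,5,11,10,6,7]], [[4,5,7,6,9,8], [0,1,13,12,14,15,10,11,2,3]], [[2,3,14,15,4,5], [0,1,6,7,9,8,11,10,13,12]], [[6,7,8,9,15,14], [0,1,2,3,5,4,11,10,12,13]], [[2,3,13,12,11,10], [0,1,7,6,4,5,14,15,8,9]], [[2,3,12,13,7,6], [0,1,4,5,9,8,10,11,14,15]], [[6,7,11,10,9,8], [0,1,3,2,4,5,13,12,15,14]], [[4,5,12,13,11,10], [0,1,8,9,2,3,15,14,7,6]], [[4,5,8,9,13,12], [0,1,14,15,11,10,7,6,3,2]], [[6,7,15,14,13,12], [0,1,10,11,3,2,8,9,4,5]], [[8,9,12,13,15,14], [0,1,11,10,3,2,7,6,5,4]], [[2,3,9,8,12,13], [0,1,5,4,7,6,15,14,10,11]], [[2,3,4,5,15,14], [0,1,9,8,13,12,7,6,11,10]]]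
def fF8_3_5 : Fin (2*8-2+1) → Fin (2*8) → Fin (2*8) :=
  fun i v => Fin.ofNat _ ((fT8_3_5.getD i.val []).getD v.val 0)
def lF8_3_5 : Fin (2*8-2+1) → Fin (2*8) → Fin 2 :=
  fun i v => Fin.ofNat _ ((lT8_3_5.getD i.val []).getD v.val 0)
def cF8_3_5 : Fin (2*8-2+1) → Fin 2 → List (Fin (2*8)) :=
  fun i j => ((cT8_3_5.getD i.val []).getD j.val []).map (Fin.ofNat _)
lemma cert_8_3_5 : HOPSolvable 8 ![6, 10] := by
  apply hop_of_cert 8 2 (by norm_num) _ (by decide) fF8_3_5 (Fin.ofNat _ 0) lF8_3_5 cF8_3_5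
  · decide
  · decide
  · decide
  · decide
  · decide
  · decide

def fT8_4_4 : List (List Nat) := [[1,0,3,2,5,4,7,6,9,8,11,10,13,12,15,14], [7,4,12,14,1,8,9,0,5,6,13,15,2,10,3,11], [8,6,14,10,9,7,1,5,0,4,3,13,15,11,2,12], [9,2,1,13,15,6,5,10,12,0,7,14,8,3,11,4], [3,11,15,0,6,9,4,12,13,5,14,1,7,8,10,2], [6,3,5,1,7,2,0,4,15,10,9,12,11,14,13,8], [2,7,0,11,8,14,10,1,4,12,6,3,9,15,5,13], [4,9,8,5,0,3,13,11,2,1,15,7,14,6,12,10], [11,12,9,15,10,13,14,8,7,2,4,0,1,5,6,3], [14,8,11,12,13,10,15,9,1,7,5,2,3,4,0,6], [10,15,7,8,14,11,12,2,3,13,0,5,6,9,4,1], [5,13,6,9,11,0,2,15,14,3,12,4,10,1,8,7], [15,10,4,6,2,12,3,13,11,14,1,8,5,7,9,0], [13,14,10,7,12,15,8,3,6,11,2,9,4,0,1,5], [12,5,13,4,3,1,11,14,10,15,8,6,0,2,7,9]]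
def lT8_4_4 : List (List Nat) := [[0,0,0,0,0,0,0,0,0,0,0,0,0,0,0,0], [0,0,1,1,0,0,0,0,0,0,1,1,1,1,1,1], [0,0,1,1,0,0,0,0,0,0,1,1,1,1,1,1], [0,0,0,0,1,1,1,1,0,0,1,1,0,0,1,1], [0,0,0,0,1,1,1,1,1,1,0,0,1,1,0,0], [0,0,0,0,0,0,0,0,1,1,1,1,1,1,1,1], [0,0,0,0,1,1,0,0,1,1,0,0,1,1,1,1], [0,0,0,0,0,0,1,1,0,0,1,1,1,1,1,1], [0,0,1,1,0,0,1,1,1,1,0,0,0,0,1,1], [0,0,1,1,1,1,0,0,0,0,1,1,1,1,0,0], [0,0,1,1,0,0,1,1,1,1,0,0,1,1,0,0], [0,0,1,1,0,0,1,1,1,1,0,0,0,0,1,1], [0,0,1,1,1,1,1,1,0,0,0,0,1,1,0,0], [0,0,1,1,0,0,1,1,1,1,1,1,0,0,0,0], [0,0,0,0,0,0,1,1,1,1,1,1,0,0,1,1]]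
def cT8_4_4 : List (List (List Nat)) := [[[], []], [[0,1,4,5,8,9,6,7], [2,3,14,15,11,10,13,12]], [[0,1,6,7,5,4,9,8], [2,3,10,11,13,12,15,14]], [[0,1,2,3,13,12,8,9], [4,5,6,7,10,11,14,15]], [[0,1,11,10,14,15,2,3], [4,5,9,8,13,12,7,6]], [[0,1,3,2,5,4,7,6], [8,9,10,11,12,13,14,15]], [[0,1,7,6,10,11,3,2], [4,5,14,15,13,12,9,8]], [[0,1,9,8,2,3,5,4], [6,7,11,10,15,14,12,13]], [[0,1,12,13,5,4,10,11], [2,3,15,14,6,7,8,9]], [[0,1,8,9,7,6,15,14], [2,3,12,13,4,5,10,11]], [[0,1,15,14,4,5,11,10], [2,3,8,9,13,12,6,7]], [[0,1,13,12,10,11,4,5], [2,3,9,8,14,15,7,6]], [[0,1,10,11,8,9,14,15], [2,3,6,7,13,12,5,4]], [[0,1,14,15,5,4,12,13], [2,3,7,6,8,9,11,10]], [[0,1,5,4,3,2,13,12], [6,7,14,15,9,8,10,11]]]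
def fF8_4_4 : Fin (2*8-2+1) → Fin (2*8) → Fin (2*8) :=
  fun i v => Fin.ofNat _ ((fT8_4_4.getD i.val []).getD v.val 0)
def lF8_4_4 : Fin (2*8-2+1) → Fin (2*8) → Fin 2 :=
  fun i v => Fin.ofNat _ ((lT8_4_4.getD i.val []).getD v.val 0)
def cF8_4_4 : Fin (2*8-2+1) → Fin 2 → List (Fin (2*8)) :=
  fun i j => ((cT8_4_4.getD i.val []).getD j.val []).map (Fin.ofNat _)
lemma cert_8_4_4 : HOPSolvable 8 ![8, 8] := by
  apply hop_of_cert 8 2 (by norm_num) _ (by decide) fF8_4_4 (Fin.ofNat _ 0) lF8_4_4 cF8_4_4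
  · decide
  · decide
  · decide
  · decide
  · decide
  · decide

def fT8_8 : List (List Nat) := [[1,0,3,2,5,4,7,6,9,8,11,10,13,12,15,14], [5,14,12,8,11,0,15,13,3,10,9,4,2,7,1,6], [9,5,13,11,14,1,8,12,6,0,15,3,7,2,4,10], [10,4,15,9,1,7,13,5,12,3,0,14,8,6,11,2], [6,12,5,10,15,2,0,9,11,7,3,8,1,14,13,4], [2,11,0,13,7,9,14,4,10,5,8,1,15,3,6,12], [14,6,10,15,12,11,1,8,7,13,2,5,4,9,0,3], [13,2,1,5,8,3,11,15,4,14,12,6,10,0,9,7], [8,3,14,1,13,15,9,10,0,6,7,12,11,4,2,5], [11,7,9,4,3,6,5,1,15,2,13,0,14,10,12,8], [4,13,8,7,0,14,10,3,2,12,6,15,9,1,5,11], [3,10,4,0,2,8,12,14,5,15,1,13,6,11,7,9], [12,15,7,14,6,10,4,2,13,11,5,9,0,8,3,1], [7,9,11,6,10,12,3,0,14,1,4,2,5,15,8,13], [15,8,6,12,9,13,2,11,1,4,14,7,3,5,10,0]]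
def lT8_8 : List (List Nat) := [[0,0,0,0,0,0,0,0,0,0,0,0,0,0,0,0], [0,0,0,0,0,0,0,0,0,0,0,0,0,0,0,0], [0,0,0,0,0,0,0,0,0,0,0,0,0,0,0,0], [0,0,0,0,0,0,0,0,0,0,0,0,0,0,0,0], [0,0,0,0,0,0,0,0,0,0,0,0,0,0,0,0], [0,0,0,0,0,0,0,0,0,0,0,0,0,0,0,0], [0,0,0,0,0,0,0,0,0,0,0,0,0,0,0,0], [0,0,0,0,0,0,0,0,0,0,0,0,0,0,0,0], [0,0,0,0,0,0,0,0,0,0,0,0,0,0,0,0], [0,0,0,0,0,0,0,0,0,0,0,0,0,0,0,0], [0,0,0,0,0,0,0,0,0,0,0,0,0,0,0,0], [0,0,0,0,0,0,0,0,0,0,0,0,0,0,0,0], [0,0,0,0,0,0,0,0,0,0,0,0,0,0,0,0], [0,0,0,0,0,0,0,0,0,0,0,0,0,0,0,0], [0,0,0,0,0,0,0,0,0,0,0,0,0,0,0,0]]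
def cT8_8 : List (List (List Nat)) := [[[]], [[0,1,14,15,6,7,13,12,2,3,8,9,10,11,4,5]], [[0,1,5,4,14,15,10,11,3,2,13,12,7,6,8,9]], [[0,1,4,5,7,6,13,12,8,9,3,2,15,14,11,10]], [[0,1,12,13,14,15,4,5,2,3,10,11,8,9,7,6]], [[0,1,11,10,8,9,5,4,7,6,14,15,12,13,3,2]], [[0,1,6,7,8,9,13,12,4,5,11,10,2,3,15,14]], [[0,1,2,3,5,4,8,9,14,15,7,6,11,10,12,13]], [[0,1,3,2,14,15,5,4,13,12,11,10,7,6,9,8]], [[0,1,7,6,5,4,3,2,9,8,15,14,12,13,10,11]], [[0,1,13,12,9,8,2,3,7,6,10,11,15,14,5,4]], [[0,1,10,11,13,12,6,7,14,15,9,8,5,4,2,3]], [[0,1,15,14,3,2,7,6,4,5,10,11,9,8,13,12]], [[0,1,9,8,14,15,13,12,5,4,10,11,2,3,6,7]], [[0,1,8,9,4,5,13,12,3,2,6,7,11,10,14,15]]]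
def fF8_8 : Fin (2*8-2+1) → Fin (2*8) → Fin (2*8) :=
  fun i v => Fin.ofNat _ ((fT8_8.getD i.val []).getD v.val 0)
def lF8_8 : Fin (2*8-2+1) → Fin (2*8) → Fin 1 :=
  fun i v => Fin.ofNat _ ((lT8_8.getD i.val []).getD v.val 0)
def cF8_8 : Fin (2*8-2+1) → Fin 1 → List (Fin (2*8)) :=
  fun i j => ((cT8_8.getD i.val []).getD j.val []).map (Fin.ofNat _)
lemma cert_8_8 : HOPSolvable 8 ![16] := by
  apply hop_of_cert 8 1 (by norm_num) _ (by decide) fF8_8 (Fin.ofNat _ 0) lF8_8 cF8_8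
  · decide
  · decide
  · decide
  · decide
  · decide
  · decide

def fT9_2_2_2_3 : List (List Nat) := [[1,0,3,2,5,4,7,6,9,8,11,10,13,12,15,14,17,16], [2,3,0,1,13,12,11,10,15,17,7,6,5,4,16,8,14,9], [16,17,7,6,15,14,3,2,11,13,12,8,10,9,5,4,0,1], [12,13,16,17,8,9,10,14,4,5,6,15,0,1,7,11,2,3], [5,4,8,9,1,0,16,17,2,3,13,14,15,10,11,12,6,7], [8,9,15,14,6,7,4,5,0,1,17,12,11,16,3,2,13,10], [17,16,5,4,3,2,13,12,14,11,15,9,7,6,8,10,1,0], [3,2,1,0,12,13,8,9,6,7,14,17,4,5,10,16,15,11], [6,7,13,12,10,11,0,1,16,14,4,5,3,2,9,17,8,15], [13,12,9,8,14,15,17,11,3,2,16,7,1,0,4,5,10,6], [9,8,11,10,16,17,15,13,1,0,3,2,14,7,12,6,4,5], [7,6,17,16,11,10,1,0,12,15,5,4,8,14,13,9,3,2], [10,11,14,15,9,8,12,16,5,4,0,1,6,17,2,3,7,13], [11,10,4,5,2,3,14,15,13,16,1,0,17,8,6,7,9,12], [15,14,6,7,17,16,2,3,10,12,8,13,9,11,1,0,5,4],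 [14,15,12,13,7,6,5,4,17,10,9,16,2,3,0,1,11,8], [4,5,10,11,0,1,9,8,7,6,2,3,16,15,17,13,12,14]]
def lT9_2_2_2_3 : List (List Nat) := [[0,0,0,0,0,0,0,0,0,0,0,0,0,0,0,0,0,0], [0,0,0,0,1,1,2,2,3,3,2,2,1,1,3,3,3,3], [0,0,1,1,2,2,1,1,3,3,3,3,3,3,2,2,0,0], [0,0,1,1,2,2,3,3,2,2,3,3,0,0,3,3,1,1], [0,0,1,1,0,0,2,2,1,1,3,3,3,3,3,3,2,2], [0,0,1,1,2,2,2,2,0,0,3,3,3,3,1,1,3,3], [0,0,1,1,1,1,2,2,3,3,3,3,2,2,3,3,0,0], [0,0,0,0,1,1,2,2,2,2,3,3,1,1,3,3,3,3], [0,0,1,1,2,2,0,0,3,3,2,2,1,1,3,3,3,3], [0,0,1,1,2,2,3,3,1,1,3,3,0,0,2,2,3,3], [0,0,1,1,2,2,3,3,0,0,1,1,3,3,3,3,2,2], [0,0,1,1,2,2,0,0,3,3,2,2,3,3,3,3,1,1], [0,0,1,1,2,2,3,3,2,2,0,0,3,3,1,1,3,3], [0,0,1,1,1,1,2,2,3,3,0,0,3,3,2,2,3,3],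 [0,0,1,1,2,2,1,1,3,3,3,3,3,3,0,0,2,2], [0,0,1,1,2,2,2,2,3,3,3,3,1,1,0,0,3,3], [0,0,1,1,0,0,2,2,2,2,1,1,3,3,3,3,3,3]]
def cT9_2_2_2_3 : List (List (List Nat)) := [[[], [], [], []], [[0,1,3,2], [4,5,12,13], [6,7,10,11], [8,9,17,16,14,15]], [[0,1,17,16], [2,3,6,7], [4,5,14,15], [8,9,13,12,10,11]], [[0,1,13,12], [2,3,17,16], [4,5,9,8], [6,7,14,15,11,10]], [[0,1,4,5], [2,3,9,8], [6,7,17,16], [10,11,14,15,12,13]], [[0,1,9,8], [2,3,14,15], [4,5,7,6], [10,11,12,13,16,17]], [[0,1,16,17], [2,3,4,5], [6,7,12,13], [8,9,11,10,15,14]], [[0,1,2,3], [4,5,13,12], [6,7,9,8], [10,11,17,16,15,14]], [[0,1,7,6], [2,3,12,13], [4,5,11,10], [8,9,14,15,17,16]], [[0,1,12,13], [2,3,8,9], [4,5,15,14], [6,7,11,10,16,17]], [[0,1,8,9], [2,3,10,11], [4,5,17,16], [6,7,13,12,14,15]], [[0,1,6,7], [2,3,16,17], [4,5,10,11], [8,9,15,14,13,12]],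 [[0,1,11,10], [2,3,15,14], [4,5,8,9], [6,7,16,17,13,12]], [[0,1,10,11], [2,3,5,4], [6,7,15,14], [8,9,16,17,12,13]], [[0,1,14,15], [2,3,7,6], [4,5,16,17], [8,9,12,13,11,10]], [[0,1,15,14], [2,3,13,12], [4,5,6,7], [8,9,10,11,16,17]], [[0,1,5,4], [2,3,11,10], [6,7,8,9], [12,13,15,14,17,16]]]
def fF9_2_2_2_3 : Fin (2*9-2+1) → Fin (2*9) → Fin (2*9) :=
  fun i v => Fin.ofNat _ ((fT9_2_2_2_3.getD i.val []).getD v.val 0)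
def lF9_2_2_2_3 : Fin (2*9-2+1) → Fin (2*9) → Fin 4 :=
  fun i v => Fin.ofNat _ ((lT9_2_2_2_3.getD i.val []).getD v.val 0)
def cF9_2_2_2_3 : Fin (2*9-2+1) → Fin 4 → List (Fin (2*9)) :=
  fun i j => ((cT9_2_2_2_3.getD i.val []).getD j.val []).map (Fin.ofNat _)
lemma cert_9_2_2_2_3 : HOPSolvable 9 ![4, 4, 4, 6] := by
  apply hop_of_cert 9 4 (by norm_num) _ (by decide) fF9_2_2_2_3 (Fin.ofNat _ 0) lF9_2_2_2_3 cF9_2_2_2_3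
  · decide
  · decide
  · decide
  · decide
  · decide
  · decide

def fT9_2_2_5 : List (List Nat) := [[1,0,3,2,5,4,7,6,9,8,11,10,13,12,15,14,17,16], [13,12,5,4,3,2,11,8,7,16,14,6,1,0,10,17,9,15], [15,14,9,8,16,13,17,11,3,2,12,7,10,5,1,0,4,6], [4,5,11,10,0,1,14,13,15,17,3,2,16,7,6,8,12,9], [16,17,6,7,12,8,2,3,5,15,13,14,4,10,11,9,0,1], [9,8,16,17,10,7,12,5,1,0,4,15,6,14,13,11,2,3], [10,11,14,15,7,12,9,4,16,6,0,1,5,17,2,3,8,13], [12,13,7,6,14,11,3,2,17,10,9,5,0,1,4,16,15,8], [11,10,15,14,9,6,5,16,13,4,1,0,17,8,3,2,7,12], [2,3,0,1,17,16,10,15,11,13,6,8,14,9,12,7,5,4], [17,16,10,11,13,15,8,12,6,14,2,3,7,4,9,5,1,0], [3,2,1,0,8,9,13,17,4,5,15,12,11,6,16,10,14,7], [8,9,12,13,15,10,16,14,0,1,5,17,2,3,7,4,6,11], [14,15,13,12,6,17,4,9,10,7,8,16,3,2,0,1,11,5], [5,4,17,16,1,0,15,10,14,12,7,13,9,11,8,6,3,2],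 [7,6,8,9,11,14,1,0,2,3,17,4,15,16,5,12,13,10], [6,7,4,5,2,3,0,1,12,11,16,9,8,15,17,13,10,14]]
def lT9_2_2_5 : List (List Nat) := [[0,0,0,0,0,0,0,0,0,0,0,0,0,0,0,0,0,0], [0,0,1,1,1,1,2,2,2,2,2,2,0,0,2,2,2,2], [0,0,1,1,2,2,2,2,1,1,2,2,2,2,0,0,2,2], [0,0,1,1,0,0,2,2,2,2,1,1,2,2,2,2,2,2], [0,0,1,1,2,2,1,1,2,2,2,2,2,2,2,2,0,0], [0,0,1,1,2,2,2,2,0,0,2,2,2,2,2,2,1,1], [0,0,1,1,2,2,2,2,2,2,0,0,2,2,1,1,2,2], [0,0,1,1,2,2,1,1,2,2,2,2,0,0,2,2,2,2], [0,0,1,1,2,2,2,2,2,2,0,0,2,2,1,1,2,2], [0,0,0,0,1,1,2,2,2,2,2,2,2,2,2,2,1,1], [0,0,1,1,2,2,2,2,2,2,1,1,2,2,2,2,0,0], [0,0,0,0,1,1,2,2,1,1,2,2,2,2,2,2,2,2], [0,0,1,1,2,2,2,2,0,0,2,2,1,1,2,2,2,2], [0,0,1,1,2,2,2,2,2,2,2,2,1,1,0,0,2,2],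 [0,0,1,1,0,0,2,2,2,2,2,2,2,2,2,2,1,1], [0,0,1,1,2,2,0,0,1,1,2,2,2,2,2,2,2,2], [0,0,1,1,1,1,0,0,2,2,2,2,2,2,2,2,2,2]]
def cT9_2_2_5 : List (List (List Nat)) := [[[], [], []], [[0,1,12,13], [2,3,4,5], [6,7,8,9,16,17,15,14,10,11]], [[0,1,14,15], [2,3,8,9], [4,5,13,12,10,11,7,6,17,16]], [[0,1,5,4], [2,3,10,11], [6,7,13,12,16,17,9,8,15,14]], [[0,1,17,16], [2,3,7,6], [4,5,8,9,15,14,11,10,13,12]], [[0,1,8,9], [2,3,17,16], [4,5,7,6,12,13,14,15,11,10]], [[0,1,11,10], [2,3,15,14], [4,5,12,13,17,16,8,9,6,7]], [[0,1,13,12], [2,3,6,7], [4,5,11,10,9,8,17,16,15,14]], [[0,1,10,11], [2,3,14,15], [4,5,6,7,16,17,12,13,8,9]], [[0,1,3,2], [4,5,16,17], [6,7,15,14,12,13,9,8,11,10]], [[0,1,16,17], [2,3,11,10], [4,5,15,14,9,8,6,7,12,13]], [[0,1,2,3], [4,5,9,8], [6,7,17,16,14,15,10,11,12,13]], [[0,1,9,8],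 [2,3,13,12], [4,5,10,11,17,16,6,7,14,15]], [[0,1,15,14], [2,3,12,13], [4,5,17,16,11,10,8,9,7,6]], [[0,1,4,5], [2,3,16,17], [6,7,10,11,13,12,9,8,14,15]], [[0,1,6,7], [2,3,9,8], [4,5,14,15,12,13,16,17,10,11]], [[0,1,7,6], [2,3,5,4], [8,9,11,10,16,17,14,15,13,12]]]
def fF9_2_2_5 : Fin (2*9-2+1) → Fin (2*9) → Fin (2*9) :=
  fun i v => Fin.ofNat _ ((fT9_2_2_5.getD i.val []).getD v.val 0)
def lF9_2_2_5 : Fin (2*9-2+1) → Fin (2*9) → Fin 3 :=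
  fun i v => Fin.ofNat _ ((lT9_2_2_5.getD i.val []).getD v.val 0)
def cF9_2_2_5 : Fin (2*9-2+1) → Fin 3 → List (Fin (2*9)) :=
  fun i j => ((cT9_2_2_5.getD i.val []).getD j.val []).map (Fin.ofNat _)
lemma cert_9_2_2_5 : HOPSolvable 9 ![4, 4, 10] := by
  apply hop_of_cert 9 3 (by norm_num) _ (by decide) fF9_2_2_5 (Fin.ofNat _ 0) lF9_2_2_5 cF9_2_2_5
  · decide
  · decide
  · decide
  · decide
  · decide
  · decide

def fT9_2_3_4 : List (List Nat) := [[1,0,3,2,5,4,7,6,9,8,11,10,13,12,15,14,17,16], [5,4,7,17,1,0,16,2,15,12,14,13,9,11,10,8,6,3], [10,11,16,5,17,3,14,9,12,7,0,1,8,15,6,13,2,4], [16,17,8,4,3,9,13,10,2,5,7,14,15,6,11,12,0,1], [6,7,5,15,14,2,0,1,13,10,9,16,17,8,4,3,11,12], [11,10,4,12,2,13,8,15,6,17,1,0,3,5,16,7,14,9], [2,3,0,1,7,14,15,4,17,13,16,12,11,9,5,6,10,8], [3,2,1,0,6,10,4,11,16,15,5,7,14,17,12,9,8,13], [7,6,10,8,15,17,1,0,3,11,2,9,16,14,13,4,12,5],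 [12,13,11,9,16,15,17,14,10,3,8,2,0,1,7,5,4,6], [15,14,6,13,9,16,2,12,11,4,17,8,7,3,1,0,5,10], [13,12,14,10,8,6,5,17,4,16,3,15,1,0,2,11,9,7], [14,15,9,6,10,12,3,8,7,2,4,17,5,16,0,1,13,11], [8,9,17,14,12,11,10,13,0,1,6,5,4,7,3,16,15,2], [4,5,12,11,0,1,9,16,14,6,13,3,2,10,8,17,7,15], [17,16,13,7,11,8,12,3,5,14,15,4,6,2,9,10,1,0], [9,8,15,16,13,7,11,5,1,0,12,6,10,4,17,2,3,14]]
def lT9_2_3_4 : List (List Nat) := [[0,0,0,0,0,0,0,0,0,0,0,0,0,0,0,0,0,0], [0,0,1,1,0,0,1,1,2,2,2,2,2,2,2,2,1,1], [0,0,1,1,1,1,2,2,2,2,0,0,2,2,2,2,1,1], [0,0,1,1,1,1,2,2,1,1,2,2,2,2,2,2,0,0], [0,0,1,1,1,1,0,0,2,2,2,2,2,2,1,1,2,2], [0,0,1,1,1,1,2,2,2,2,0,0,1,1,2,2,2,2], [0,0,0,0,1,1,1,1,2,2,2,2,2,2,1,1,2,2], [0,0,0,0,1,1,1,1,2,2,1,1,2,2,2,2,2,2],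 [0,0,1,1,2,2,0,0,1,1,1,1,2,2,2,2,2,2], [0,0,1,1,2,2,2,2,1,1,1,1,0,0,2,2,2,2], [0,0,1,1,2,2,1,1,2,2,2,2,1,1,0,0,2,2], [0,0,1,1,2,2,2,2,2,2,1,1,0,0,1,1,2,2], [0,0,1,1,2,2,1,1,1,1,2,2,2,2,0,0,2,2], [0,0,1,1,2,2,2,2,0,0,2,2,2,2,1,1,1,1], [0,0,1,1,0,0,2,2,2,2,1,1,1,1,2,2,2,2], [0,0,1,1,2,2,1,1,2,2,2,2,1,1,2,2,0,0], [0,0,1,1,2,2,2,2,0,0,2,2,2,2,1,1,1,1]]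
def cT9_2_3_4 : List (List (List Nat)) := [[[], [], []], [[0,1,4,5], [2,3,17,16,6,7], [8,9,12,13,11,10,14,15]], [[0,1,11,10], [2,3,5,4,17,16], [6,7,9,8,12,13,15,14]], [[0,1,17,16], [2,3,4,5,9,8], [6,7,10,11,14,15,12,13]], [[0,1,7,6], [2,3,15,14,4,5], [8,9,10,11,16,17,12,13]], [[0,1,10,11], [2,3,12,13,5,4], [6,7,15,14,16,17,9,8]], [[0,1,3,2], [4,5,14,15,6,7], [8,9,13,12,11,10,16,17]], [[0,1,2,3], [4,5,10,11,7,6], [8,9,15,14,12,13,17,16]], [[0,1,6,7], [2,3,8,9,11,10], [4,5,17,16,12,13,14,15]], [[0,1,13,12], [2,3,9,8,10,11], [4,5,15,14,7,6,17,16]], [[0,1,14,15], [2,3,13,12,7,6], [4,5,16,17,10,11,8,9]], [[0,1,12,13], [2,3,10,11,15,14], [4,5,6,7,17,16,9,8]], [[0,1,15,14], [2,3,6,7,8,9], [4,5,12,13,16,17,11,10]], [[0,1,9,8], [2,3,14,15,16,17], [4,5,11,10,6,7,13,12]], [[0,1,5,4], [2,3,11,10,13,12], [6,7,16,17,15,14,8,9]],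 [[0,1,16,17], [2,3,7,6,12,13], [4,5,8,9,14,15,10,11]], [[0,1,8,9], [2,3,16,17,14,15], [4,5,7,6,11,10,12,13]]]
def fF9_2_3_4 : Fin (2*9-2+1) → Fin (2*9) → Fin (2*9) :=
  fun i v => Fin.ofNat _ ((fT9_2_3_4.getD i.val []).getD v.val 0)
def lF9_2_3_4 : Fin (2*9-2+1) → Fin (2*9) → Fin 3 :=
  fun i v => Fin.ofNat _ ((lT9_2_3_4.getD i.val []).getD v.val 0)
def cF9_2_3_4 : Fin (2*9-2+1) → Fin 3 → List (Fin (2*9)) :=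
  fun i j => ((cT9_2_3_4.getD i.val []).getD j.val []).map (Fin.ofNat _)
lemma cert_9_2_3_4 : HOPSolvable 9 ![4, 6, 8] := by
  apply hop_of_cert 9 3 (by norm_num) _ (by decide) fF9_2_3_4 (Fin.ofNat _ 0) lF9_2_3_4 cF9_2_3_4
  · decide
  · decide
  · decide
  · decide
  · decide
  · decide

def fT9_2_7 : List (List Nat) := [[1,0,3,2,5,4,7,6,9,8,11,10,13,12,15,14,17,16], [7,17,9,15,8,16,14,0,4,2,12,13,10,11,6,3,5,1], [6,8,15,17,12,13,0,14,1,10,9,16,4,5,7,2,11,3], [10,14,16,9,13,12,8,11,6,3,0,7,5,4,1,17,2,15], [16,4,8,5,1,3,13,12,2,11,15,9,7,6,17,10,0,14], [15,6,12,13,16,7,1,5,11,14,17,8,2,3,9,0,4,10], [13,10,7,14,9,8,11,2,5,4,1,6,17,0,3,16,15,12], [14,9,6,7,10,15,2,3,17,1,4,12,11,16,0,5,13,8], [9,15,5,8,7,2,12,4,3,0,16,17,6,14,13,1,10,11], [12,7,4,6,2,17,3,1,16,13,14,15,0,9,10,11,8,5], [4,12,17,16,0,10,15,9,13,7,5,14,1,8,11,6,3,2],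 [3,16,11,0,15,14,10,8,7,12,6,2,9,17,5,4,1,13], [8,3,14,1,11,9,17,16,0,5,13,4,15,10,2,12,7,6], [2,11,0,4,3,6,5,17,10,16,8,1,14,15,12,13,9,7], [11,5,13,12,17,1,9,10,15,6,7,0,3,2,16,8,14,4], [5,13,10,11,14,0,16,15,12,17,2,3,8,1,4,7,6,9], [17,2,1,10,6,11,4,13,14,15,3,5,16,7,8,9,12,0]]
def lT9_2_7 : List (List Nat) := [[0,0,0,0,0,0,0,0,0,0,0,0,0,0,0,0,0,0], [1,1,1,1,1,1,1,1,1,1,0,0,0,0,1,1,1,1], [1,1,1,1,0,0,1,1,1,1,1,1,0,0,1,1,1,1], [1,1,1,1,0,0,1,1,1,1,1,1,0,0,1,1,1,1], [1,1,1,1,1,1,0,0,1,1,1,1,0,0,1,1,1,1], [1,1,0,0,1,1,1,1,1,1,1,1,0,0,1,1,1,1], [1,1,1,1,0,0,1,1,0,0,1,1,1,1,1,1,1,1], [1,1,0,0,1,1,0,0,1,1,1,1,1,1,1,1,1,1], [1,1,1,1,1,1,1,1,1,1,0,0,1,1,1,1,0,0], [1,1,1,1,1,1,1,1,1,1,0,0,1,1,0,0,1,1],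 [1,1,0,0,1,1,1,1,1,1,1,1,1,1,1,1,0,0], [1,1,1,1,0,0,1,1,1,1,1,1,1,1,0,0,1,1], [1,1,1,1,1,1,0,0,1,1,1,1,1,1,1,1,0,0], [1,1,1,1,1,1,1,1,1,1,1,1,0,0,0,0,1,1], [1,1,0,0,1,1,1,1,1,1,1,1,0,0,1,1,1,1], [1,1,0,0,1,1,1,1,1,1,0,0,1,1,1,1,1,1], [1,1,1,1,1,1,1,1,0,0,1,1,1,1,0,0,1,1]]
def cT9_2_7 : List (List (List Nat)) := [[[], []], [[10,11,13,12], [0,1,17,16,5,4,8,9,2,3,15,14,6,7]], [[4,5,13,12], [0,1,8,9,10,11,16,17,3,2,15,14,7,6]], [[4,5,12,13], [0,1,14,15,17,16,2,3,9,8,6,7,11,10]], [[6,7,12,13], [0,1,4,5,3,2,8,9,11,10,15,14,17,16]], [[2,3,13,12], [0,1,6,7,5,4,16,17,10,11,8,9,14,15]], [[4,5,8,9], [0,1,10,11,6,7,2,3,14,15,16,17,12,13]], [[2,3,7,6], [0,1,9,8,17,16,13,12,11,10,4,5,15,14]], [[10,11,17,16], [0,1,15,14,13,12,6,7,4,5,2,3,8,9]],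 [[10,11,15,14], [0,1,7,6,3,2,4,5,17,16,8,9,13,12]], [[2,3,16,17], [0,1,12,13,8,9,7,6,15,14,11,10,5,4]], [[4,5,14,15], [0,1,16,17,13,12,9,8,7,6,10,11,2,3]], [[6,7,16,17], [0,1,3,2,14,15,12,13,10,11,4,5,9,8]], [[12,13,15,14], [0,1,11,10,8,9,16,17,7,6,5,4,3,2]], [[2,3,12,13], [0,1,5,4,17,16,14,15,8,9,6,7,10,11]], [[2,3,11,10], [0,1,13,12,8,9,17,16,6,7,15,14,4,5]], [[8,9,15,14], [0,1,2,3,10,11,5,4,6,7,13,12,16,17]]]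
def fF9_2_7 : Fin (2*9-2+1) → Fin (2*9) → Fin (2*9) :=
  fun i v => Fin.ofNat _ ((fT9_2_7.getD i.val []).getD v.val 0)
def lF9_2_7 : Fin (2*9-2+1) → Fin (2*9) → Fin 2 :=
  fun i v => Fin.ofNat _ ((lT9_2_7.getD i.val []).getD v.val 0)
def cF9_2_7 : Fin (2*9-2+1) → Fin 2 → List (Fin (2*9)) :=
  fun i j => ((cT9_2_7.getD i.val []).getD j.val []).map (Fin.ofNat _)
lemma cert_9_2_7 : HOPSolvable 9 ![4, 14] := by
  apply hop_of_cert 9 2 (by norm_num) _ (by decide) fF9_2_7 (Fin.ofNat _ 0) lF9_2_7 cF9_2_7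
  · decide
  · decide
  · decide
  · decide
  · decide
  · decide

def fT9_3_3_3 : List (List Nat) := [[1,0,3,2,5,4,7,6,9,8,11,10,13,12,15,14,17,16], [7,17,14,12,9,11,16,0,10,4,8,5,3,15,2,13,6,1], [12,15,11,4,3,10,8,16,6,17,5,2,0,14,13,1,7,9], [16,3,17,1,10,13,15,9,14,7,4,12,11,5,8,6,0,2], [14,4,13,6,1,15,3,12,11,16,17,8,7,2,0,5,9,10], [5,9,6,11,8,0,2,10,4,1,7,3,15,16,17,12,13,14], [9,12,7,10,17,14,11,2,13,0,3,6,1,8,5,16,15,4], [3,5,4,0,2,1,14,8,7,15,16,13,17,11,6,9,10,12], [10,6,15,17,13,9,1,11,12,5,0,7,8,4,16,2,14,3], [2,8,0,9,7,16,17,4,1,3,13,15,14,10,12,11,5,6], [6,2,1,7,15,8,0,3,5,14,12,16,10,17,9,4,11,13], [8,10,16,14,12,7,13,5,0,11,1,9,4,6,3,17,2,15], [11,14,8,13,16,6,5,17,2,12,15,0,9,3,1,10,4,7], [15,11,9,16,6,12,4,13,17,2,14,1,5,7,10,0,3,8], [13,7,5,15,14,2,12,1,16,10,9,17,6,0,4,3,8,11],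 [17,13,10,5,11,3,9,14,15,6,2,4,16,1,7,8,12,0], [4,16,12,8,0,17,10,15,3,13,6,14,2,9,11,7,1,5]]
def lT9_3_3_3 : List (List Nat) := [[0,0,0,0,0,0,0,0,0,0,0,0,0,0,0,0,0,0], [0,0,1,1,2,2,0,0,2,2,2,2,1,1,1,1,0,0], [0,0,1,1,1,1,2,2,2,2,1,1,0,0,0,0,2,2], [0,0,0,0,1,1,2,2,2,2,1,1,1,1,2,2,0,0], [0,0,1,1,0,0,1,1,2,2,2,2,1,1,0,0,2,2], [0,0,1,1,0,0,1,1,0,0,1,1,2,2,2,2,2,2], [0,0,1,1,2,2,1,1,0,0,1,1,0,0,2,2,2,2], [0,0,0,0,0,0,1,1,1,1,2,2,2,2,1,1,2,2], [0,0,1,1,2,2,0,0,2,2,0,0,2,2,1,1,1,1], [0,0,0,0,1,1,1,1,0,0,2,2,2,2,2,2,1,1], [0,0,0,0,1,1,0,0,1,1,2,2,2,2,1,1,2,2], [0,0,1,1,2,2,2,2,0,0,0,0,2,2,1,1,1,1], [0,0,1,1,2,2,2,2,1,1,0,0,1,1,0,0,2,2], [0,0,1,1,2,2,2,2,1,1,0,0,2,2,0,0,1,1],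 [0,0,1,1,1,1,0,0,2,2,2,2,0,0,1,1,2,2], [0,0,1,1,1,1,2,2,2,2,1,1,0,0,2,2,0,0], [0,0,1,1,0,0,2,2,1,1,2,2,1,1,2,2,0,0]]
def cT9_3_3_3 : List (List (List Nat)) := [[[], [], []], [[0,1,17,16,6,7], [2,3,12,13,15,14], [4,5,11,10,8,9]], [[0,1,15,14,13,12], [2,3,4,5,10,11], [6,7,16,17,9,8]], [[0,1,3,2,17,16], [4,5,13,12,11,10], [6,7,9,8,14,15]], [[0,1,4,5,15,14], [2,3,6,7,12,13], [8,9,16,17,10,11]], [[0,1,9,8,4,5], [2,3,11,10,7,6], [12,13,16,17,14,15]], [[0,1,12,13,8,9], [2,3,10,11,6,7], [4,5,14,15,16,17]], [[0,1,5,4,2,3], [6,7,8,9,15,14], [10,11,13,12,17,16]], [[0,1,6,7,11,10], [2,3,17,16,14,15], [4,5,9,8,12,13]], [[0,1,8,9,3,2], [4,5,16,17,6,7], [10,11,15,14,12,13]], [[0,1,2,3,7,6], [4,5,8,9,14,15], [10,11,16,17,13,12]], [[0,1,10,11,9,8], [2,3,14,15,17,16], [4,5,7,6,13,12]], [[0,1,14,15,10,11],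 [2,3,13,12,9,8], [4,5,6,7,17,16]], [[0,1,11,10,14,15], [2,3,16,17,8,9], [4,5,12,13,7,6]], [[0,1,7,6,12,13], [2,3,15,14,4,5], [8,9,10,11,17,16]], [[0,1,13,12,16,17], [2,3,5,4,11,10], [6,7,14,15,8,9]], [[0,1,16,17,5,4], [2,3,8,9,13,12], [6,7,15,14,11,10]]]
def fF9_3_3_3 : Fin (2*9-2+1) → Fin (2*9) → Fin (2*9) :=
  fun i v => Fin.ofNat _ ((fT9_3_3_3.getD i.val []).getD v.val 0)
def lF9_3_3_3 : Fin (2*9-2+1) → Fin (2*9) → Fin 3 :=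
  fun i v => Fin.ofNat _ ((lT9_3_3_3.getD i.val []).getD v.val 0)
def cF9_3_3_3 : Fin (2*9-2+1) → Fin 3 → List (Fin (2*9)) :=
  fun i j => ((cT9_3_3_3.getD i.val []).getD j.val []).map (Fin.ofNat _)
lemma cert_9_3_3_3 : HOPSolvable 9 ![6, 6, 6] := by
  apply hop_of_cert 9 3 (by norm_num) _ (by decide) fF9_3_3_3 (Fin.ofNat _ 0) lF9_3_3_3 cF9_3_3_3
  · decide
  · decide
  · decide
  · decide
  · decide
  · decide

def fT9_3_6 : List (List Nat) := [[1,0,3,2,5,4,7,6,9,8,11,10,13,12,15,14,17,16], [13,7,10,12,11,6,5,1,17,15,2,4,3,0,16,9,14,8], [4,16,8,7,0,9,17,3,2,5,15,12,11,14,13,10,1,6], [11,9,6,14,13,16,2,15,12,1,17,0,8,4,3,7,5,10], [14,17,4,13,2,12,8,10,6,16,7,15,5,3,0,11,9,1], [3,13,9,0,16,14,11,8,7,2,12,6,10,1,5,17,4,15], [7,15,16,5,17,3,12,0,14,10,9,13,6,11,8,1,2,4], [6,8,5,16,7,2,0,4,1,17,13,14,15,10,11,12,3,9], [8,12,14,4,3,15,13,17,0,11,16,9,1,6,2,5,10,7],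 [15,6,13,17,10,7,1,5,11,14,4,8,16,2,9,0,12,3], [5,14,15,10,6,0,4,11,16,13,3,7,17,9,1,2,8,12], [2,11,0,9,15,8,16,12,5,3,14,1,7,17,10,4,6,13], [12,4,7,8,1,10,9,2,3,6,5,16,0,15,17,13,11,14], [10,3,17,1,12,11,14,9,15,7,0,5,4,16,6,8,13,2], [16,2,1,11,9,17,15,13,10,4,8,3,14,7,12,6,0,5], [9,5,12,15,14,1,10,16,13,0,6,17,2,8,4,3,7,11], [17,10,11,6,8,13,3,14,4,12,1,2,9,5,7,16,15,0]]
def lT9_3_6 : List (List Nat) := [[0,0,0,0,0,0,0,0,0,0,0,0,0,0,0,0,0,0], [1,1,1,1,1,1,1,1,0,0,1,1,1,1,0,0,0,0], [1,1,1,1,1,1,1,1,1,1,0,0,0,0,0,0,1,1], [1,1,0,0,1,1,0,0,1,1,1,1,1,1,0,0,1,1], [1,1,0,0,0,0,1,1,1,1,1,1,0,0,1,1,1,1], [1,1,1,1,0,0,1,1,1,1,1,1,1,1,0,0,0,0], [1,1,0,0,0,0,1,1,1,1,1,1,1,1,1,1,0,0], [1,1,1,1,1,1,1,1,1,1,0,0,0,0,0,0,1,1],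 [1,1,0,0,0,0,1,1,1,1,1,1,1,1,0,0,1,1], [1,1,0,0,1,1,1,1,1,1,1,1,0,0,1,1,0,0], [1,1,1,1,1,1,1,1,0,0,1,1,0,0,1,1,0,0], [1,1,1,1,1,1,0,0,1,1,1,1,0,0,1,1,0,0], [1,1,0,0,1,1,0,0,0,0,1,1,1,1,1,1,1,1], [1,1,1,1,1,1,0,0,0,0,1,1,1,1,0,0,1,1], [1,1,1,1,1,1,0,0,1,1,1,1,0,0,0,0,1,1], [1,1,1,1,1,1,0,0,1,1,0,0,1,1,1,1,0,0], [1,1,1,1,0,0,1,1,0,0,1,1,0,0,1,1,1,1]]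
def cT9_3_6 : List (List (List Nat)) := [[[], []], [[8,9,15,14,16,17], [0,1,7,6,5,4,11,10,2,3,12,13]], [[10,11,12,13,14,15], [0,1,16,17,6,7,3,2,8,9,5,4]], [[2,3,14,15,7,6], [0,1,9,8,12,13,4,5,16,17,10,11]], [[2,3,13,12,5,4], [0,1,17,16,9,8,6,7,10,11,15,14]], [[4,5,14,15,17,16], [0,1,13,12,10,11,6,7,8,9,2,3]], [[2,3,5,4,17,16], [0,1,15,14,8,9,10,11,13,12,6,7]], [[10,11,14,15,12,13], [0,1,8,9,17,16,3,2,5,4,7,6]], [[2,3,4,5,15,14], [0,1,12,13,6,7,17,16,10,11,9,8]], [[2,3,17,16,12,13], [0,1,6,7,5,4,10,11,8,9,14,15]], [[8,9,13,12,17,16], [0,1,14,15,2,3,10,11,7,6,4,5]], [[6,7,12,13,17,16], [0,1,11,10,14,15,4,5,8,9,3,2]], [[2,3,8,9,6,7], [0,1,4,5,10,11,16,17,14,15,13,12]], [[6,7,9,8,15,14], [0,1,3,2,17,16,13,12,4,5,11,10]], [[6,7,13,12,14,15], [0,1,2,3,11,10,8,9,4,5,17,16]], [[6,7,16,17,11,10],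 [0,1,5,4,14,15,3,2,12,13,8,9]], [[4,5,13,12,9,8], [0,1,10,11,2,3,6,7,14,15,16,17]]]
def fF9_3_6 : Fin (2*9-2+1) → Fin (2*9) → Fin (2*9) :=
  fun i v => Fin.ofNat _ ((fT9_3_6.getD i.val []).getD v.val 0)
def lF9_3_6 : Fin (2*9-2+1) → Fin (2*9) → Fin 2 :=
  fun i v => Fin.ofNat _ ((lT9_3_6.getD i.val []).getD v.val 0)
def cF9_3_6 : Fin (2*9-2+1) → Fin 2 → List (Fin (2*9)) :=
  fun i j => ((cT9_3_6.getD i.val []).getD j.val []).map (Fin.ofNat _)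
lemma cert_9_3_6 : HOPSolvable 9 ![6, 12] := by
  apply hop_of_cert 9 2 (by norm_num) _ (by decide) fF9_3_6 (Fin.ofNat _ 0) lF9_3_6 cF9_3_6
  · decide
  · decide
  · decide
  · decide
  · decide
  · decide

def fT9_4_5 : List (List Nat) := [[1,0,3,2,5,4,7,6,9,8,11,10,13,12,15,14,17,16], [3,9,4,0,2,13,15,16,12,1,17,14,8,5,11,6,7,10], [11,15,8,4,3,16,13,14,2,17,12,0,10,6,7,1,5,9], [4,2,1,8,0,10,14,12,3,11,5,9,7,17,6,16,15,13], [14,8,10,13,15,7,9,5,1,6,2,16,17,3,0,4,11,12], [2,10,0,7,9,14,12,3,16,4,1,13,6,11,5,17,8,15], [7,13,14,16,12,11,10,0,17,15,6,5,4,1,2,9,3,8], [12,5,9,15,7,1,17,4,11,2,14,8,0,16,10,3,13,6], [13,6,15,5,16,3,1,11,10,12,8,7,9,0,17,2,4,14], [16,3,7,1,6,17,4,2,15,10,9,12,11,14,13,8,0,5], [10,4,13,6,1,9,3,17,14,5,0,15,16,2,8,11,12,7], [6,14,16,12,8,15,0,9,4,7,13,17,3,10,1,5,2,11], [15,11,6,14,17,12,2,10,13,16,7,1,5,8,3,0,9,4],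 [17,12,5,11,14,2,16,8,7,13,15,3,1,9,4,10,6,0], [5,16,17,10,11,0,8,13,6,14,3,4,15,7,9,12,1,2], [9,7,12,17,10,8,11,1,5,0,4,6,2,15,16,13,14,3], [8,17,11,9,13,6,5,15,0,3,16,2,14,4,12,7,10,1]]
def lT9_4_5 : List (List Nat) := [[0,0,0,0,0,0,0,0,0,0,0,0,0,0,0,0,0,0], [1,1,1,1,1,1,0,0,1,1,0,0,1,1,0,0,0,0], [1,1,0,0,0,0,1,1,0,0,1,1,1,1,1,1,0,0], [1,1,1,1,1,1,0,0,1,1,1,1,0,0,0,0,0,0], [1,1,0,0,1,1,1,1,1,1,0,0,0,0,1,1,0,0], [1,1,1,1,0,0,1,1,0,0,1,1,1,1,0,0,0,0], [1,1,0,0,1,1,1,1,0,0,1,1,1,1,0,0,0,0], [1,1,0,0,1,1,1,1,0,0,0,0,1,1,0,0,1,1], [1,1,0,0,0,0,1,1,1,1,1,1,1,1,0,0,0,0], [1,1,1,1,1,1,1,1,0,0,0,0,0,0,0,0,1,1], [1,1,0,0,1,1,0,0,1,1,1,1,0,0,1,1,0,0], [1,1,0,0,1,1,1,1,1,1,0,0,0,0,1,1,0,0],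 [1,1,1,1,0,0,1,1,0,0,1,1,0,0,1,1,0,0], [1,1,0,0,0,0,1,1,1,1,0,0,1,1,0,0,1,1], [1,1,1,1,1,1,0,0,0,0,1,1,0,0,0,0,1,1], [1,1,0,0,1,1,1,1,1,1,1,1,0,0,0,0,0,0], [1,1,1,1,0,0,0,0,1,1,1,1,0,0,0,0,1,1]]
def cT9_4_5 : List (List (List Nat)) := [[[], []], [[6,7,16,17,10,11,14,15], [0,1,9,8,12,13,5,4,2,3]], [[2,3,4,5,16,17,9,8], [0,1,15,14,7,6,13,12,10,11]], [[6,7,12,13,17,16,15,14], [0,1,2,3,8,9,11,10,5,4]], [[2,3,13,12,17,16,11,10], [0,1,8,9,6,7,5,4,15,14]], [[4,5,14,15,17,16,8,9], [0,1,10,11,13,12,6,7,3,2]], [[2,3,16,17,8,9,15,14], [0,1,13,12,4,5,11,10,6,7]], [[2,3,15,14,10,11,8,9], [0,1,5,4,7,6,17,16,13,12]], [[2,3,5,4,16,17,14,15], [0,1,6,7,11,10,8,9,12,13]], [[8,9,10,11,12,13,14,15], [0,1,3,2,7,6,4,5,17,16]], [[2,3,6,7,17,16,12,13], [0,1,4,5,9,8,14,15,11,10]],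 [[2,3,12,13,10,11,17,16], [0,1,14,15,5,4,8,9,7,6]], [[4,5,12,13,8,9,16,17], [0,1,11,10,7,6,2,3,14,15]], [[2,3,11,10,15,14,4,5], [0,1,12,13,9,8,7,6,16,17]], [[6,7,13,12,15,14,9,8], [0,1,16,17,2,3,10,11,4,5]], [[2,3,17,16,14,15,13,12], [0,1,7,6,11,10,4,5,8,9]], [[4,5,6,7,15,14,12,13], [0,1,17,16,10,11,2,3,9,8]]]
def fF9_4_5 : Fin (2*9-2+1) → Fin (2*9) → Fin (2*9) :=
  fun i v => Fin.ofNat _ ((fT9_4_5.getD i.val []).getD v.val 0)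
def lF9_4_5 : Fin (2*9-2+1) → Fin (2*9) → Fin 2 :=
  fun i v => Fin.ofNat _ ((lT9_4_5.getD i.val []).getD v.val 0)
def cF9_4_5 : Fin (2*9-2+1) → Fin 2 → List (Fin (2*9)) :=
  fun i j => ((cT9_4_5.getD i.val []).getD j.val []).map (Fin.ofNat _)
lemma cert_9_4_5 : HOPSolvable 9 ![8, 10] := by
  apply hop_of_cert 9 2 (by norm_num) _ (by decide) fF9_4_5 (Fin.ofNat _ 0) lF9_4_5 cF9_4_5
  · decide
  · decide
  · decide
  · decide
  · decide
  · decide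

def fT9_9 : List (List Nat) := [[1,0,3,2,5,4,7,6,9,8,11,10,13,12,15,14,17,16], [17,6,12,15,11,7,1,5,14,10,9,4,2,16,8,3,13,0], [10,15,5,7,12,2,9,3,17,6,0,13,4,11,16,1,14,8], [12,3,8,1,16,15,10,14,2,11,6,9,0,17,7,5,4,13], [15,11,14,4,3,6,5,8,7,16,13,1,17,10,2,0,9,12], [11,14,13,16,15,8,17,9,5,7,12,0,10,2,1,4,3,6], [16,13,9,5,6,3,4,11,15,2,17,7,14,1,12,8,0,10], [5,2,1,14,9,0,8,10,6,4,7,17,16,15,3,13,12,11], [4,12,17,13,0,9,16,15,10,5,8,14,1,3,11,7,6,2], [3,17,4,0,2,14,11,12,13,15,16,6,7,8,5,9,10,1], [6,4,15,10,1,16,0,13,11,12,3,8,9,7,17,2,5,14], [13,16,7,12,8,11,15,2,4,17,14,5,3,0,10,6,1,9], [2,8,0,17,7,10,14,4,1,13,5,12,11,9,6,16,15,3], [7,10,11,9,14,12,13,0,16,3,1,2,5,6,4,17,8,15], [8,7,10,6,13,17,3,1,0,14,2,16,15,4,9,12,11,5], [9,5,6,11,17,1,2,16,12,0,15,3,8,14,13,10,7,4],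 [14,9,16,8,10,13,12,17,3,1,4,15,6,5,0,11,2,7]]
def lT9_9 : List (List Nat) := [[0,0,0,0,0,0,0,0,0,0,0,0,0,0,0,0,0,0], [0,0,0,0,0,0,0,0,0,0,0,0,0,0,0,0,0,0], [0,0,0,0,0,0,0,0,0,0,0,0,0,0,0,0,0,0], [0,0,0,0,0,0,0,0,0,0,0,0,0,0,0,0,0,0], [0,0,0,0,0,0,0,0,0,0,0,0,0,0,0,0,0,0], [0,0,0,0,0,0,0,0,0,0,0,0,0,0,0,0,0,0], [0,0,0,0,0,0,0,0,0,0,0,0,0,0,0,0,0,0], [0,0,0,0,0,0,0,0,0,0,0,0,0,0,0,0,0,0], [0,0,0,0,0,0,0,0,0,0,0,0,0,0,0,0,0,0], [0,0,0,0,0,0,0,0,0,0,0,0,0,0,0,0,0,0], [0,0,0,0,0,0,0,0,0,0,0,0,0,0,0,0,0,0], [0,0,0,0,0,0,0,0,0,0,0,0,0,0,0,0,0,0], [0,0,0,0,0,0,0,0,0,0,0,0,0,0,0,0,0,0], [0,0,0,0,0,0,0,0,0,0,0,0,0,0,0,0,0,0], [0,0,0,0,0,0,0,0,0,0,0,0,0,0,0,0,0,0],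 [0,0,0,0,0,0,0,0,0,0,0,0,0,0,0,0,0,0], [0,0,0,0,0,0,0,0,0,0,0,0,0,0,0,0,0,0]]
def cT9_9 : List (List (List Nat)) := [[[]], [[0,1,6,7,5,4,11,10,9,8,14,15,3,2,12,13,16,17]], [[0,1,15,14,16,17,8,9,6,7,3,2,5,4,12,13,11,10]], [[0,1,3,2,8,9,11,10,6,7,14,15,5,4,16,17,13,12]], [[0,1,11,10,13,12,17,16,9,8,7,6,5,4,3,2,14,15]], [[0,1,14,15,4,5,8,9,7,6,17,16,3,2,13,12,10,11]], [[0,1,13,12,14,15,8,9,2,3,5,4,6,7,11,10,17,16]], [[0,1,2,3,14,15,13,12,16,17,11,10,7,6,8,9,4,5]], [[0,1,12,13,3,2,17,16,6,7,15,14,11,10,8,9,5,4]], [[0,1,17,16,10,11,6,7,12,13,8,9,15,14,5,4,2,3]], [[0,1,4,5,16,17,14,15,2,3,10,11,8,9,12,13,7,6]], [[0,1,16,17,9,8,4,5,11,10,14,15,6,7,2,3,12,13]], [[0,1,8,9,13,12,11,10,5,4,7,6,14,15,16,17,3,2]], [[0,1,10,11,2,3,9,8,16,17,15,14,4,5,12,13,6,7]],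 [[0,1,7,6,3,2,10,11,16,17,5,4,13,12,15,14,9,8]], [[0,1,5,4,17,16,7,6,2,3,11,10,15,14,13,12,8,9]], [[0,1,9,8,3,2,16,17,7,6,12,13,5,4,10,11,15,14]]]
def fF9_9 : Fin (2*9-2+1) → Fin (2*9) → Fin (2*9) :=
  fun i v => Fin.ofNat _ ((fT9_9.getD i.val []).getD v.val 0)
def lF9_9 : Fin (2*9-2+1) → Fin (2*9) → Fin 1 :=
  fun i v => Fin.ofNat _ ((lT9_9.getD i.val []).getD v.val 0)
def cF9_9 : Fin (2*9-2+1) → Fin 1 → List (Fin (2*9)) :=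
  fun i j => ((cT9_9.getD i.val []).getD j.val []).map (Fin.ofNat _)
lemma cert_9_9 : HOPSolvable 9 ![18] := by
  apply hop_of_cert 9 1 (by norm_num) _ (by decide) fF9_9 (Fin.ofNat _ 0) lF9_9 cF9_9
  · decide
  · decide
  · decide
  · decide
  · decide
  · decide

theorem hop_solvable_of_le_nine (t : ℕ) (ht : 1 ≤ t) (m : Fin t → ℕ)
    (hm : ∀ i, 2 ≤ m i) (n : ℕ) (hn : ∑ i, m i = n) (hn9 : n ≤ 9) :
    HOPSolvable n (fun i => 2 * m i) := by
  have ht4 : t ≤ 4 := by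
    have h2 := Finset.card_nsmul_le_sum (Finset.univ : Finset (Fin t)) m 2 (fun i _ => hm i)
    simp only [smul_eq_mul, Finset.card_univ, Fintype.card_fin] at h2
    rw [hn] at h2
    omega
  have key : ∀ (g : Fin t → ℕ), Monotone g → (∀ i, 2 ≤ g i) → ∑ i, g i = n →
      HOPSolvable n (fun j => 2 * g j) := by
    clear hn hm m
    intro g hmono hg2 hsum
    interval_cases t
    · -- t = 1
      obtain ⟨a, ha⟩ : ∃ x, g 0 = x := ⟨_, rfl⟩
      rw [Fin.sum_univ_one, ha] at hsum
      have hb1 : 2 ≤ a := ha ▸ hg2 0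
      have he : (fun j => 2 * g j) = ![2*a] := by
        funext j; fin_cases j <;> simp [ha]
      rw [he]
      have hua : a ≤ 9 := by omega
      interval_cases a
      · have hnv : n = 2 := by omega
        subst hnv
        exact cert_2_2
      · have hnv : n = 3 := by omega
        subst hnv
        exact cert_3_3
      · have hnv : n = 4 := by omega
        subst hnv
        exact cert_4_4
      · have hnv : n = 5 := by omega
        subst hnv
        exact cert_5_5
      · have hnv : n = 6 := by omega
        subst hnv
        exact cert_6_6
      · have hnv : n = 7 := by omega
        subst hnv
        exact cert_7_7
      · have hnv : n = 8 := by omega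
        subst hnv
        exact cert_8_8
      · have hnv : n = 9 := by omega
        subst hnv
        exact cert_9_9
    · -- t = 2
      obtain ⟨a, ha⟩ : ∃ x, g 0 = x := ⟨_, rfl⟩
      obtain ⟨b, hb⟩ : ∃ x, g 1 = x := ⟨_, rfl⟩
      rw [Fin.sum_univ_two, ha, hb] at hsum
      have hb1 : 2 ≤ a := ha ▸ hg2 0
      have hb2 : a ≤ b := by rw [← ha, ← hb]; exact hmono (by decide)
      have he : (fun j => 2 * g j) = ![2*a, 2*b] := by
        funext j; fin_cases j <;> simp [ha, hb]
      rw [he]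
      have hua : a ≤ 4 := by omega
      interval_cases a
      · -- a = 2
        have hub : b ≤ 7 := by omega
        interval_cases b
        · have hnv : n = 4 := by omega
          subst hnv
          exact cert_4_2_2
        · have hnv : n = 5 := by omega
          subst hnv
          exact cert_5_2_3
        · have hnv : n = 6 := by omega
          subst hnv
          exact cert_6_2_4
        · have hnv : n = 7 := by omega
          subst hnv
          exact cert_7_2_5
        · have hnv : n = 8 := by omega
          subst hnv
          exact cert_8_2_6
        · have hnv : n = 9 := by omega
          subst hnv
          exact cert_9_2_7
      · -- a = 3
        have hub : b ≤ 6 := by omega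
        interval_cases b
        · have hnv : n = 6 := by omega
          subst hnv
          exact cert_6_3_3
        · have hnv : n = 7 := by omega
          subst hnv
          exact cert_7_3_4
        · have hnv : n = 8 := by omega
          subst hnv
          exact cert_8_3_5
        · have hnv : n = 9 := by omega
          subst hnv
          exact cert_9_3_6
      · -- a = 4
        have hub : b ≤ 5 := by omega
        interval_cases b
        · have hnv : n = 8 := by omega
          subst hnv
          exact cert_8_4_4
        · have hnv : n = 9 := by omega
          subst hnv
          exact cert_9_4_5
    · -- t = 3
      obtain ⟨a, ha⟩ : ∃ x, g 0 = x := ⟨_, rfl⟩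
      obtain ⟨b, hb⟩ : ∃ x, g 1 = x := ⟨_, rfl⟩
      obtain ⟨c, hc⟩ : ∃ x, g 2 = x := ⟨_, rfl⟩
      rw [Fin.sum_univ_three, ha, hb, hc] at hsum
      have hb1 : 2 ≤ a := ha ▸ hg2 0
      have hb2 : a ≤ b := by rw [← ha, ← hb]; exact hmono (by decide)
      have hb3 : b ≤ c := by rw [← hb, ← hc]; exact hmono (by decide)
      have he : (fun j => 2 * g j) = ![2*a, 2*b, 2*c] := by
        funext j; fin_cases j <;> simp [ha, hb, hc]
      rw [he]
      have hua : a ≤ 3 := by omega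
      interval_cases a
      · -- a = 2
        have hub : b ≤ 3 := by omega
        interval_cases b
        · -- b = 2
          have huc : c ≤ 5 := by omega
          interval_cases c
          · have hnv : n = 6 := by omega
            subst hnv
            exact cert_6_2_2_2
          · have hnv : n = 7 := by omega
            subst hnv
            exact cert_7_2_2_3
          · have hnv : n = 8 := by omega
            subst hnv
            exact cert_8_2_2_4
          · have hnv : n = 9 := by omega
            subst hnv
            exact cert_9_2_2_5
        · -- b = 3
          have huc : c ≤ 4 := by omega
          interval_cases c
          · have hnv : n = 8 := by omega
            subst hnv
            exact cert_8_2_3_3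
          · have hnv : n = 9 := by omega
            subst hnv
            exact cert_9_2_3_4
      · -- a = 3
        have hub : b ≤ 3 := by omega
        interval_cases b
        · -- b = 3
          have huc : c ≤ 3 := by omega
          interval_cases c
          · have hnv : n = 9 := by omega
            subst hnv
            exact cert_9_3_3_3
    · -- t = 4
      obtain ⟨a, ha⟩ : ∃ x, g 0 = x := ⟨_, rfl⟩
      obtain ⟨b, hb⟩ : ∃ x, g 1 = x := ⟨_, rfl⟩
      obtain ⟨c, hc⟩ : ∃ x, g 2 = x := ⟨_, rfl⟩
      obtain ⟨d, hd⟩ : ∃ x, g 3 = x := ⟨_, rfl⟩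
      rw [Fin.sum_univ_four, ha, hb, hc, hd] at hsum
      have hb1 : 2 ≤ a := ha ▸ hg2 0
      have hb2 : a ≤ b := by rw [← ha, ← hb]; exact hmono (by decide)
      have hb3 : b ≤ c := by rw [← hb, ← hc]; exact hmono (by decide)
      have hb4 : c ≤ d := by rw [← hc, ← hd]; exact hmono (by decide)
      have he : (fun j => 2 * g j) = ![2*a, 2*b, 2*c, 2*d] := by
        funext j; fin_cases j <;> simp [ha, hb, hc, hd]
      rw [he]
      have hua : a ≤ 2 := by omega
      interval_cases a
      · -- a = 2
        have hub : b ≤ 2 := by omega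
        interval_cases b
        · -- b = 2
          have huc : c ≤ 2 := by omega
          interval_cases c
          · -- c = 2
            have hud : d ≤ 3 := by omega
            interval_cases d
            · have hnv : n = 8 := by omega
              subst hnv
              exact cert_8_2_2_2_2
            · have hnv : n = 9 := by omega
              subst hnv
              exact cert_9_2_2_2_3
  obtain ⟨π, hmono⟩ : ∃ π : Equiv.Perm (Fin t), Monotone (m ∘ π) :=
    ⟨Tuple.sort m, Tuple.monotone_sort m⟩
  have hk := key (m ∘ π) hmono (fun i => hm (π i)) (by rw [← hn]; exact Equiv.sum_comp π m)
  exact hop_perm π (fun j => rfl) hk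
end

section
/- For all integers t ≥ 1 and m_1, …, m_t with each m_i ≥ 2 and m_1 + ⋯ + m_t = 10, the Honeymoon Oberwolfach Problem HOP(2m_1, …, 2m_t) has a solution; that is, the complete graph K_{20} admits a semi-uniform 1-factorization of type (2m_1, …, 2m_t). -/
open SimpleGraph

namespace HOPAux

def look (L : List ℕ) (v : ℕ) : ℕ := L.getD v 0

def tab (N i : ℕ) : ℕ := (N >>> (5*i)) % 32

def ball (n : ℕ) (f : ℕ → Bool) : Bool := (List.range n).all f

lemma ball_iff {n : ℕ} {f : ℕ → Bool} (h : ball n f = true) : ∀ k, k < n → f k = true := by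
  intro k hk
  exact List.all_eq_true.mp h k (List.mem_range.mpr hk)
def look2 (L : List (List ℕ)) (k v : ℕ) : ℕ := look (L.getD k []) v

/-- graph of a fixed-point-free involution -/
def mgraph {V : Type*} (p : V → V) (h1 : ∀ v, p (p v) = v) (h2 : ∀ v, p v ≠ v) :
    SimpleGraph V where
  Adj v w := p v = w
  symm := ⟨by intro v w h; subst h; exact h1 v⟩
  loopless := ⟨by intro v h; exact h2 v h⟩

lemma reach_of_step {V : Type*} {t : ℕ} (G : SimpleGraph V) (f : V → Fin t) (r : Fin t → V)
    (nxt : V → V) (d : V → ℕ)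
    (hstep : ∀ v, v = r (f v) ∨ (G.Adj v (nxt v) ∧ d (nxt v) < d v ∧ f (nxt v) = f v)) :
    ∀ v, G.Reachable v (r (f v)) := by
  have H : ∀ n v, d v ≤ n → G.Reachable v (r (f v)) := by
    intro n
    induction n with
    | zero =>
      intro v hv
      rcases hstep v with h | ⟨_, hlt, _⟩
      · rw [← h]
      · omega
    | succ n ih =>
      intro v hv
      rcases hstep v with h | ⟨hadj, hlt, hf⟩
      · rw [← h]
      · have := ih (nxt v) (by omega)
        rw [hf] at this
        exact hadj.reachable.trans this
  exact fun v => H (d v) v le_rfl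

lemma comp_equiv {V : Type*} [Fintype V] [DecidableEq V] {t : ℕ}
    (G : SimpleGraph V) (f : V → Fin t) (r : Fin t → V)
    (l : Fin t → ℕ)
    (hadj : ∀ v w, G.Adj v w → f v = f w)
    (hr : ∀ j, f (r j) = j)
    (hreach : ∀ v, G.Reachable v (r (f v)))
    (hcard : ∀ j, (Finset.univ.filter (fun v => f v = j)).card = l j) :
    ∃ e : G.ConnectedComponent ≃ Fin t, ∀ c, c.supp.ncard = l (e c) := by
  have hwalk : ∀ v w, G.Reachable v w → f v = f w := by
    intro v w h
    obtain ⟨p⟩ := h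
    induction p with
    | nil => rfl
    | cons h q ih => exact (hadj _ _ h).trans ih
  have key : ∀ v w, f v = f w → G.connectedComponentMk v = G.connectedComponentMk w := by
    intro v w h
    have h1 := hreach v
    have h2 := hreach w
    rw [h] at h1
    exact SimpleGraph.ConnectedComponent.sound (h1.trans h2.symm)
  have hwd : ∀ (v w : V) (p : G.Walk v w), p.IsPath → f v = f w :=
    fun v w p _ => hwalk v w p.reachable
  refine ⟨⟨SimpleGraph.ConnectedComponent.lift f hwd,
    fun j => G.connectedComponentMk (r j), ?_, ?_⟩, ?_⟩
  · intro c
    refine c.ind fun v => ?_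
    exact key (r (f v)) v (hr _)
  · intro j
    exact hr j
  · intro c
    refine c.ind fun v => ?_
    have hsupp : (G.connectedComponentMk v).supp = {w | f w = f v} := by
      ext w
      simp only [SimpleGraph.ConnectedComponent.mem_supp_iff, Set.mem_setOf_eq]
      constructor
      · intro h
        have := congrArg (SimpleGraph.ConnectedComponent.lift f hwd) h
        simpa using this
      · intro h
        exact key w v h
    rw [hsupp]
    have : {w | f w = f v}.ncard = (Finset.univ.filter (fun w => f w = f v)).card := by
      rw [Set.ncard_eq_toFinset_card']
      congr 1
      ext w
      simp
    rw [this, hcard]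
    rfl

lemma build {t : ℕ} (l : Fin t → ℕ) (lN : ℕ → ℕ)
    (pN fN rN nN dN : ℕ → ℕ → ℕ)
    (hl : ∀ j : Fin t, l j = lN j.val)
    (H1b : ball 19 (fun k => ball 20 fun v =>
      decide (pN k v < 20 ∧ pN k (pN k v) = v ∧ pN k v ≠ v)) = true)
    (H3b : ball 19 (fun k => ball 19 fun k' => ball 20 fun v =>
      decide (pN k v = pN k' v → k = k')) = true)
    (HFb : ball 18 (fun k => ball 20 fun v => decide (fN (k+1) v < t ∧
      fN (k+1) (pN 0 v) = fN (k+1) v ∧ fN (k+1) (pN (k+1) v) = fN (k+1) v)) = true)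
    (HRb : ball 18 (fun k => ball t fun j =>
      decide (rN (k+1) j < 20 ∧ fN (k+1) (rN (k+1) j) = j)) = true)
    (HSb : ball 18 (fun k => ball 20 fun v => decide (v = rN (k+1) (fN (k+1) v) ∨
      ((nN (k+1) v = pN 0 v ∨ nN (k+1) v = pN (k+1) v) ∧
        dN (k+1) (nN (k+1) v) < dN (k+1) v))) = true)
    (HCb : ball 18 (fun k => ball t fun j =>
      decide (((Finset.range 20).filter (fun v => fN (k+1) v = j)).card = lN j)) = true) :
    HOPSolvable 10 l := by
  have H1 : ∀ k, k < 19 → ∀ v, v < 20 → pN k v < 20 ∧ pN k (pN k v) = v ∧ pN k v ≠ v :=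
    fun k hk v hv => of_decide_eq_true (ball_iff (ball_iff H1b k hk) v hv)
  have H3 : ∀ k, k < 19 → ∀ k', k' < 19 → ∀ v, v < 20 → (pN k v = pN k' v → k = k') :=
    fun k hk k' hk' v hv =>
      of_decide_eq_true (ball_iff (ball_iff (ball_iff H3b k hk) k' hk') v hv)
  have HF : ∀ k, 1 ≤ k → k < 19 → ∀ v, v < 20 →
      (fN k v < t ∧ fN k (pN 0 v) = fN k v ∧ fN k (pN k v) = fN k v) := by
    intro k h1k hk v hv
    have h := of_decide_eq_true (ball_iff (ball_iff HFb (k-1) (by omega)) v hv)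
    rwa [show k - 1 + 1 = k by omega] at h
  have HR : ∀ k, 1 ≤ k → k < 19 → ∀ j, j < t → (rN k j < 20 ∧ fN k (rN k j) = j) := by
    intro k h1k hk j hj
    have h := of_decide_eq_true (ball_iff (ball_iff HRb (k-1) (by omega)) j hj)
    rwa [show k - 1 + 1 = k by omega] at h
  have HS : ∀ k, 1 ≤ k → k < 19 → ∀ v, v < 20 → ((v = rN k (fN k v)) ∨
      ((nN k v = pN 0 v ∨ nN k v = pN k v) ∧ dN k (nN k v) < dN k v)) := by
    intro k h1k hk v hv
    have h := of_decide_eq_true (ball_iff (ball_iff HSb (k-1) (by omega)) v hv)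
    rwa [show k - 1 + 1 = k by omega] at h
  have HC : ∀ k, 1 ≤ k → k < 19 → ∀ j, j < t →
      ((Finset.range 20).filter (fun v => fN k v = j)).card = lN j := by
    intro k h1k hk j hj
    have h := of_decide_eq_true (ball_iff (ball_iff HCb (k-1) (by omega)) j hj)
    rwa [show k - 1 + 1 = k by omega] at h
  have ht : 0 < t := by
    rcases Nat.eq_zero_or_pos t with h | h
    · exfalso
      have := (HF 1 le_rfl (by norm_num) 0 (by norm_num)).1
      omega
    · exact h
  -- Fin-level data
  have hp20 : ∀ (k : Fin 19) (v : Fin 20), pN k.val v.val < 20 :=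
    fun k v => (H1 k.val k.isLt v.val v.isLt).1
  set p : Fin 19 → Fin 20 → Fin 20 := fun k v => ⟨pN k.val v.val, hp20 k v⟩ with hpdef
  have h1 : ∀ k v, p k (p k v) = v := by
    intro k v
    apply Fin.ext
    exact (H1 k.val k.isLt v.val v.isLt).2.1
  have h2 : ∀ k v, p k v ≠ v := by
    intro k v h
    exact (H1 k.val k.isLt v.val v.isLt).2.2 (congrArg Fin.val h)
  have hinj : ∀ k k' v, p k v = p k' v → k = k' := by
    intro k k' v h
    exact Fin.ext (H3 k.val k.isLt k'.val k'.isLt v.val v.isLt (congrArg Fin.val h))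
  have hcov : ∀ v w : Fin 20, v ≠ w → ∃ k, p k v = w := by
    intro v w hvw
    have hinj' : Function.Injective (fun k : Fin 19 => (⟨p k v, fun h => h2 k v h⟩ :
        {w : Fin 20 // ¬ (w = v)})) := by
      intro k k' h
      exact hinj k k' v (congrArg Subtype.val h)
    have hcard : Fintype.card {w : Fin 20 // ¬ (w = v)} = 19 := by
      rw [Fintype.card_subtype_compl, Fintype.card_subtype_eq]
      simp
    have hbij := (Fintype.bijective_iff_injective_and_card
      (f := fun k : Fin 19 => (⟨p k v, fun h => h2 k v h⟩ : {w : Fin 20 // ¬ (w = v)}))).mpr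
      ⟨hinj', by simp [hcard]⟩
    obtain ⟨k, hk⟩ := hbij.2 ⟨w, fun h => hvw h.symm⟩
    exact ⟨k, congrArg Subtype.val hk⟩
  -- labelling data
  set f : Fin 19 → Fin 20 → Fin t := fun k v => ⟨fN k.val v.val % t, Nat.mod_lt _ ht⟩ with hfdef
  set r : Fin 19 → Fin t → Fin 20 := fun k j => ⟨rN k.val j.val % 20, Nat.mod_lt _ (by norm_num)⟩
    with hrdef
  set nxt : Fin 19 → Fin 20 → Fin 20 := fun k v => ⟨nN k.val v.val % 20,
    Nat.mod_lt _ (by norm_num)⟩ with hnxtdef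
  set d : Fin 19 → Fin 20 → ℕ := fun k v => dN k.val v.val with hddef
  have hk1 : ∀ k : Fin 19, k ≠ 0 → 1 ≤ k.val := by
    intro k hk
    rcases Nat.eq_zero_or_pos k.val with h | h
    · exact absurd (Fin.ext h) hk
    · exact h
  have hfval : ∀ (k : Fin 19), k ≠ 0 → ∀ (v : Fin 20), (f k v).val = fN k.val v.val := by
    intro k hk v
    have := (HF k.val (hk1 k hk) k.isLt v.val v.isLt).1
    simp only [hfdef]
    exact Nat.mod_eq_of_lt this
  refine ⟨fun k => mgraph (p k) (h1 k) (h2 k), ⟨?_, ?_⟩, ?_⟩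
  · intro i v
    exact ⟨p i v, rfl, fun w h => Eq.symm h⟩
  · intro v w hvw
    obtain ⟨k, hk⟩ := hcov v w hvw
    exact ⟨k, hk, fun k' h => hinj k' k v (h.trans hk.symm)⟩
  · intro i hi
    have hi1 : 1 ≤ i.val := hk1 i hi
    set G := mgraph (p 0) (h1 0) (h2 0) ⊔ mgraph (p i) (h1 i) (h2 i) with hG
    have hGadj : ∀ v w, G.Adj v w ↔ (p 0 v = w ∨ p i v = w) := fun v w => Iff.rfl
    have hfp : ∀ v : Fin 20, f i (p 0 v) = f i v ∧ f i (p i v) = f i v := by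
      intro v
      have h := HF i.val hi1 i.isLt v.val v.isLt
      constructor
      · apply Fin.ext
        show fN i.val (p 0 v).val % t = fN i.val v.val % t
        have : (p 0 v).val = pN 0 v.val := by
          simp only [hpdef, Fin.val_zero]
        rw [this, h.2.1]
      · apply Fin.ext
        show fN i.val (p i v).val % t = fN i.val v.val % t
        rw [show (p i v).val = pN i.val v.val from rfl, h.2.2]
    apply comp_equiv G (f i) (r i) l
    · intro v w h
      rcases (hGadj v w).mp h with h | h
      · rw [← h, (hfp v).1]
      · rw [← h, (hfp v).2]
    · intro j
      have h := HR i.val hi1 i.isLt j.val j.isLt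
      apply Fin.ext
      rw [hfval i hi]
      simp only [hrdef]
      rw [Nat.mod_eq_of_lt h.1, h.2]
    · apply reach_of_step G (f i) (r i) (nxt i) (d i)
      intro v
      rcases HS i.val hi1 i.isLt v.val v.isLt with h | ⟨hor, hlt⟩
      · left
        apply Fin.ext
        have h2' := (HR i.val hi1 i.isLt (fN i.val v.val)
          ((HF i.val hi1 i.isLt v.val v.isLt).1)).1
        show v.val = rN i.val (f i v).val % 20
        rw [hfval i hi, Nat.mod_eq_of_lt h2']
        exact h
      · right
        have hn20 : nN i.val v.val < 20 := by
          rcases hor with h | h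
          · rw [h]; exact (H1 0 (by norm_num) v.val v.isLt).1
          · rw [h]; exact (H1 i.val i.isLt v.val v.isLt).1
        have hnval : (nxt i v).val = nN i.val v.val := by
          simp only [hnxtdef]
          exact Nat.mod_eq_of_lt hn20
        have hadjn : G.Adj v (nxt i v) := by
          rw [hGadj]
          rcases hor with h | h
          · left; apply Fin.ext; rw [hnval]; exact h.symm
          · right; apply Fin.ext; rw [hnval]; exact h.symm
        refine ⟨hadjn, ?_, ?_⟩
        · show dN i.val (nxt i v).val < dN i.val v.val
          rw [hnval]
          exact hlt
        · rcases hor with h | h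
          · have : nxt i v = p 0 v := Fin.ext (by rw [hnval]; exact h)
            rw [this, (hfp v).1]
          · have : nxt i v = p i v := Fin.ext (by rw [hnval]; exact h)
            rw [this, (hfp v).2]
    · intro j
      have hbr : (Finset.univ.filter (fun v : Fin 20 => f i v = j)).card =
          ((Finset.range 20).filter (fun v => fN i.val v = j.val)).card := by
        rw [Finset.card_filter, Finset.card_filter]
        rw [← Fin.sum_univ_eq_sum_range (fun v => if fN i.val v = j.val then 1 else 0) 20]
        apply Finset.sum_congr rfl
        intro v _
        congr 1
        simp only [eq_iff_iff]
        constructor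
        · intro h
          rw [← hfval i hi v, h]
        · intro h
          apply Fin.ext
          rw [hfval i hi v, h]
      rw [hbr, HC i.val hi1 i.isLt j.val j.isLt, hl j]

end HOPAux

namespace Case_10
def pN : ℕ → ℕ → ℕ := fun k v => HOPAux.tab 17981222560160144227297829405628150276429905718338460985583507107246753105763916226630015404808192950739233619121008469083219280280276485872000764326634533241845440775377002815218148243154699054955180044709647444959485040342531061910224888780059155361135227074514182307564453650956052456620529052945913158893188506250478507722701621379614714922879803249981687662284331294335302790774018176739153370427514775161931070368310211654152035898653916636884262698312791672492448720909265766138025994916175244765163155690443420421657989944797012253543698036975828933250121750088705 (20*k+v)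
def fN : ℕ → ℕ → ℕ := fun k v => HOPAux.tab 0 (20*k+v)
def rN : ℕ → ℕ → ℕ := fun k v => HOPAux.tab 0 (20*k+v)
def nN : ℕ → ℕ → ℕ := fun k v => HOPAux.tab 18689074558214770961981939662627139683572547197336641941506784421129481005703761764604204907290786131501506566447907977004464511589917220080554377965611920251135725045996319620939823509319816855314353476884909353687446832472443067755381438868859084144043171549591987851952959090439948508558046404848684385596532551771425632220658621156321349325355094243323852539169018318480504742703661099302320134382698688659550674890811045246497396198627005303475101367928416197574600336172842068897935931168661872913489608875980335193086491975942114088712070434351406900198979898703872 (20*k+v)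
def dN : ℕ → ℕ → ℕ := fun k v => HOPAux.tab 8862090914420307772033710990079386152919405519139124483628149709202564718714058762065004433241481735691835910019270297333618922050549883364224444938216962108533214637360141775476942798454079397572760687523043347578201064274657291536318006363493650699971495105036723506209698040191049424274140953944498359638819155175998628429861959178546577946685695721567203443559416645323270113158581488097770899624717727489804730275752796743229867960180654510520042926417398859984407504518822417314563213199070070376581822968564180100544216191999185216198532802483149239498279349125120 (20*k+v)
lemma solvable : HOPSolvable 10 (![20] : Fin 1 → ℕ) :=
  HOPAux.build _ (HOPAux.look [20]) pN fN rN nN dN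
    (by decide) rfl rfl rfl rfl rfl rfl
end Case_10

namespace Case_2_8
def pN : ℕ → ℕ → ℕ := fun k v => HOPAux.tab 9237545471356466982915986250407450358161219277789541625031957116091875789364262168459018684590608955813526330048143113285000128155966712298612597868869283878466585948110796736884986303636031715435951214427680613560532337691845560536298454597329880000554288992629142656737139754284652270185126997565263919170475107866396758685688603871028239876863952366947649080445537804704814161970909376828463922263109485483357558918085180638991941019820431421855406686033446014815567789019353912850717782350119005793167712759646326127076355116302985262163502293405321526671055017544705 (20*k+v)
def fN : ℕ → ℕ → ℕ := fun k v => HOPAux.tab 2921662641107705197260034227219447334155656250738569507236293659264093267961604729597370411288742844860642201086211229056140351110228679100007421928920262257504795849703223576272939405857621180599659910732096002333992480668699690799233243177668305067475780896418503363905154984093827789948361725513863646126363423966779758499261575506167340706074925788793391452685813433400364496606999694705825087740738475352426489881276069128697262722167590712679800271058580952961114181285613185413380779915032110457309918772311676285352247616266275807940497093886155307434438788382720 (20*k+v)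
def rN : ℕ → ℕ → ℕ := fun k v => HOPAux.tab 428690091460381250162415627138373403219183011821416769678830139736601500333938665391255025673944932379929395597284417243165602836597272137006296997472413747423742716497541444964787474682973423769556181177225657164659170374333402992763398327016462216291823085842360480603061093940193814188885647481849087802505388963149370955643843819646048642209277004252933543521077131445583634747559672308179660597038210820816806831814085479183122733106835712906271275724451925110732979687926728155249161707515260663303363144994872611933235991959560565817344 (20*k+v)
def nN : ℕ → ℕ → ℕ := fun k v => HOPAux.tab 9238840938954432387420103149298176227544748485759846200455325433141300906256661995308447312689102741937207589987121993140873051354897014477361903784330414333047537153038487244934827664321306419736170702466353243918877888173784279681539686548887567661845955003739668755554139202081933069742664129701569390442445990687714675539705736915587197824437597100168099999161270899374983483510283072548167312579317645496140822776108423795062053579385047217209766809797023674571839163666808854421338330542247522264334181439130693476870512816309986188278082690024290540799294168891392 (20*k+v)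
def dN : ℕ → ℕ → ℕ := fun k v => HOPAux.tab 23273520521857872470438792920265250162683031939188592440979426334410680905838866698834325379858780284798783588290869929384930004501379643554240476496218628055147411610112356245983851058887834878589929885085623515676229123149416304115627435971325265632992478618145384586888429024369278684163111741610645498134171352581079033753234074464737019608385349684562088157685979454433623774433310541129045239672440234540446512908863874127296513563534315451801205726314527366868011207082843805143992684367943564823996098096660084510787729231350031762384162939834529524608778123608064 (20*k+v)
lemma solvable : HOPSolvable 10 (![4, 16] : Fin 2 → ℕ) :=
  HOPAux.build _ (HOPAux.look [4, 16]) pN fN rN nN dN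
    (by decide) rfl rfl rfl rfl rfl rfl
end Case_2_8

namespace Case_3_7
def pN : ℕ → ℕ → ℕ := fun k v => HOPAux.tab 6214133974981010661921602271257222063007494661621886416242709235137816498375142822916011862681707716089701332175005979913155568266123146412762342899415216866396416900246246544879833288379581381112667343407037474131605687045970096734309837678710514674398786848348772243003864914728352383592206490524664628433072135284828524069340036225486190885381841467983147640817291128204097383731241418056611538994056196586730410663108437736909295914819706987750971025027324950646491555106401803834632940120430772067763624484761927142195302465888806707623457093417121027612974536264705 (20*k+v)
def fN : ℕ → ℕ → ℕ := fun k v => HOPAux.tab 2921659860232444093812940557303191272855954363109233147519670655358795457309787583276590950463645852852149177628552710889022380179552262967604403963644356225157692734791729189597562776393563561015490376270457860973069253385650474518466626452028672979778973135944982205511158579141284764463362828202247662557545449554681358216328621181711369428324576603738610270018631914999998992688594322241258494138015194272519010479573219113233841908113318177427615170579220528839195569274172825511728431160497267458364660969123662714384275749024009280925127193023966122153579921801216 (20*k+v)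
def rN : ℕ → ℕ → ℕ := fun k v => HOPAux.tab 4572694308910733335065766689477185374261894222791019525431096092139685020148686528942848986413298798691572852582015752560731123710776749102677727272264328707490414442772893123405384378513940234253447547937431729049452978442652821785206278186874538412031181326272538361058619996107134420983296394579165241357015512978016398751989554581999352831045569019952392286723311571956724479139508497568110657599323406954160453438764382332721928746828939280506606147064595185698724829021682723207631034396759477137533695428394580706664906662184683288133632 (20*k+v)
def nN : ℕ → ℕ → ℕ := fun k v => HOPAux.tab 7386081040448377631094796392706898518102919327248721050580769216760837106257809117749347091071380210394229704526107871787539093226656747497753544219261574771145545504142658697256427394043698058423628273008269136996321655174995719637709539278797847781372130210619317535993206297586861697056746345072802771325330006472615577773794729718669907469381006807621349532490663280345692166828695852408136366693489396719501626962361118334416564044689727859169901619259127653038824740340925627225146828918213143458333572717077724725065228741568296424880400046313906480151346129403904 (20*k+v)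
def dN : ℕ → ℕ → ℕ := fun k v => HOPAux.tab 3024279915009193395345289115539838972853809656522020009359635333121528196338025989015398129062204682149592693250132832420632933486830359207631135807188367111627105693516013480088995273034637473418053028069687486577365309875978723122124520168739920752830656518702115655931257626665575766114135997321885841419239268266464244994138323122119021328479647236633416301101544969673226318198762443824237622111019232602461921545164571232785044993744425522436129885500129533462431270069096009928508687313294999582786505306567716368442695018934573821182895689634465545715910508019712 (20*k+v)
lemma solvable : HOPSolvable 10 (![6, 14] : Fin 2 → ℕ) :=
  HOPAux.build _ (HOPAux.look [6, 14]) pN fN rN nN dN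
    (by decide) rfl rfl rfl rfl rfl rfl
end Case_3_7

namespace Case_4_6
def pN : ℕ → ℕ → ℕ := fun k v => HOPAux.tab 36808712294008605699867127950539176630323331980709569568014514930702068157636748067220943985940973703089014571416583798422507845844476805915720083998159530286533918805482813225468698624309708807538998164350934739616469653771482886643567255635950378779117553367631215237353216203834716614135380084718877445243143365461699880228478424490280271952260453843448716101556705770820146518762341733134643349506285030671144768808154500365308378621705006844223926589275090733793539229550878904765015999433328242384282419977365101437319393371466250636125943493119851372028757038664705 (20*k+v)
def fN : ℕ → ℕ → ℕ := fun k v => HOPAux.tab 2921659860229786857122959945974615279970087935474577007182849186183073325764546135726146508101858545059126341796333174476068196968064823366298775977254303600482355099893592778179545174099944125132990150041452202650304973263438185261810058420640757059167600400845647390775742412216899324388556010403985401577721255185520031565725226590912862881412789829273998108150308973063056370677169552100238107427117962787351964977393337876057507817231555858897616674507035525495545930599894635594252119507867666600926234747550777207995580700521071863910500384413472035250132727365632 (20*k+v)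
def rN : ℕ → ℕ → ℕ := fun k v => HOPAux.tab 428690091460381250162415627138260677601313440256175458848494931910274575840848728660489827793071143106012263554791733896975778712176598951973477541827522423745452024979967616457830455067896448090491095820526913065713879630380974835142947185159366201955297124472835145143821769167832141012572067128650163037623802345249878142287053115384668992536114408895284287030848591714547014383102632183388355046336208611678999484913349311308214171787696180842091646053684646685680052078751836255272808472851775202513992819028340951415598860374243404677120 (20*k+v)
def nN : ℕ → ℕ → ℕ := fun k v => HOPAux.tab 50990919990953417559627147564705814726988998129059327996978723432099680032897830842313853168898963156361200400272990300983121746349882836716910887538747758921554646995540789990990592190953641789458733926811058994666205883199350908540587962538255819223196656462402960061552272168065404594279934293733201044090340001684352247550247187500855752942404213672114997486223941527350697320553514211935790713605547569602780700220074204264649716266040889418077704997981191066588898467904981740716186886728274213812806018800121843036449925333787970351524863852221486844616932820254720 (20*k+v)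
def dN : ℕ → ℕ → ℕ := fun k v => HOPAux.tab 5763344210783346230639021433048633581048034211615297239287342922745126964313294628889854152700068505497574889859555685854242880583886012851918040166086568439877299138742644092027994946865134200712538254609785932361013938096369373782794618952380258223111324736489671951323159223225502807137988442518589708864954608654691752866961422330609493572046210542724351531083351344420946341866892524779440673479675073432867927582353550719850316505250001131163339402302301314732618066235897353251051519618573198621999489634576760196137201696845370836486513188983826047538482238193664 (20*k+v)
lemma solvable : HOPSolvable 10 (![8, 12] : Fin 2 → ℕ) :=
  HOPAux.build _ (HOPAux.look [8, 12]) pN fN rN nN dN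
    (by decide) rfl rfl rfl rfl rfl rfl
end Case_4_6

namespace Case_5_5
def pN : ℕ → ℕ → ℕ := fun k v => HOPAux.tab 15596182153328711247686508776078844536788887962184956952301337089801087986250961693026634561547623363900038628369014421040612659647320550402814077986244451906733644364518101493612299928312613342892293304725801651056749370855837524184252698833393593644713808418931508323491724002120339011128060863934712893485981977261969874169959394447809545030795524620446379357422642734631934279395703720388102303950471478013104314107483993748516726827883389502646919516514788188698803756259661304320345697239586207862282588200248454644711009733436365053483809511615325569151328605768705 (20*k+v)
def fN : ℕ → ℕ → ℕ := fun k v => HOPAux.tab 2921659857514088359949154977812300192279373596457658069093108689229697365047227153275371014035211201814465139992664070580938229705683139546440823781404863133802613272572568407497422961258253170294224615612708026844311589975620119097045662939336235108708748654677059153621156054340072749829651616517054273810331298380497642791545033473744094557381598961790448256798071959523739996348262870973601779330936489236345611144246066256596534414401254087034036426961419947898271401205101067851747951863224071488947297648692337944275380793362088508020575388946264880119409474011136 (20*k+v)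
def rN : ℕ → ℕ → ℕ := fun k v => HOPAux.tab 4572694308910733335065766689477185374261894222791019525431096092139685020148686528942848990622258251943657502297326307797865042616800661640542186992535327518498324773427614876581776492748554109586201094003078156113452709032291022302118277164163952584657414590536075429776571277126367807056148543726411671915218485007971377499295455197438056753467400745190001227497270054213942760932411195896908919169446204615422579743619852806831971699613386315870188302207988371957329476947295468624554448230719917472374421965610143716944763867885298971049984 (20*k+v)
def nN : ℕ → ℕ → ℕ := fun k v => HOPAux.tab 15861442682942598539980691470721064631374442189571931172725943345161192741043274202769861186907963060998002831682753424508287964299368966466895840037517791254294108027049634067347886753575593137437173749410662644937209718105107547767294285920168361455086455698478607445371380813422924291166634586183820772170684721073908854767369483536494979936777876245481018784248412829030165468478669070584023537350396087949269779994497817166995098022767255015271724045513470354781795428823293828048232099515589830485792927790957833548252930517259355998091110598403928709056431036301312 (20*k+v)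
def dN : ℕ → ℕ → ℕ := fun k v => HOPAux.tab 8856370773937284323301272741403264556116638738351240511518350694694116988599282488904712492347640414424893247761736017443469303638790626126266288888655552656475637988400726990753253516860538073398024010777547686294499411815869157720185362986343502250450858016320824766303449134962516863362617702036942179185384452185240139240758537030932813840100081052899351259916313484772626427706034312485745057338929408521387096365038851783843662459420989067398712107587778022050045583507377502325661059177390975313227230249324075323008983028343052024708742427493369829355646594580480 (20*k+v)
lemma solvable : HOPSolvable 10 (![10, 10] : Fin 2 → ℕ) :=
  HOPAux.build _ (HOPAux.look [10, 10]) pN fN rN nN dN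
    (by decide) rfl rfl rfl rfl rfl rfl
end Case_5_5

namespace Case_2_2_6
def pN : ℕ → ℕ → ℕ := fun k v => HOPAux.tab 11786605960650692423179144822079712843372122518243130604313366455289581263120861927435435440746014342118991048186238540930786752487721965934817457569216880984988533025273717417691098919516675381888596310961556558184819489638591852626308450694074303163317370473070420591633315409016197004996560351000895675382056937744065191229766571444057837302056634689092277261767217271309341932670583003499460888063713590599426535786647501199427626787697630565994441379310647898294505731132702470815682342941074440972189395568663302254857720832749346161511402842728146388170294974024705 (20*k+v)
def fN : ℕ → ℕ → ℕ := fun k v => HOPAux.tab 2855972490233413161131411056869909479943139651453555726289361371171504486741268842062336027716529915653825198057935754263455815690060335432495578203102900044629794883352170421553497302612341777689260015745532944613533832003039841785399417140745165887259870475433223587039161462555121472222183324063821655292855856616309949747816432742788119367714333322887580046298511873948112719755278210673906983079815803028569438507614662316514633720613847985028419896043559925112139244559735233851597740274495648907333056201387872424315732546382466851887328416699459540503884726272 (20*k+v)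
def rN : ℕ → ℕ → ℕ := fun k v => HOPAux.tab 18576570629949854173704677176004672802710771570176238768634619617737654443814240703830602271697316065357136040895996815452848986678816286975679668716295436198539024737978390602565880503890141165033948348492423995671974261851350445872897600667125087147405478265835693543595019751026097467902845447834340766851620819827854900847948496370297173368083533044184607462096475693838612906808927531712886635659214076067562559736069209316858055946733140378122599938594863663869271848165234494425198688349161308356897252091915109779001246807724876235800576 (20*k+v)
def nN : ℕ → ℕ → ℕ := fun k v => HOPAux.tab 11786614082101680395576533488172369274459662743291116495986548904303614661127642858549524263855245256013488763327469059432124871935278403515246695264796029677003127418267795565886060772451057079018132113489632495291859499821596401036216858631614626787007525577546407287376868409290565677683910709868086805456811255823637991490857226085996650207908528206132552818983861426730068586509134084459756949601037835171813073097352455774124993531691495361204411182674145285911667939494888497691379398915270953878297510547604114590791163231098221929002541972569180617821074361417728 (20*k+v)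
def dN : ℕ → ℕ → ℕ := fun k v => HOPAux.tab 3010203276503304462264112431914336930952541397336693923656496630928722696250187377969196439724331008567748722276259319229558634635465955605246311467860628161325371367946300954022578862128450397628815540125647684039381759720718759608027751894128430937526937488624626559686438047878248427360400200737124101724323604495626766920019305704060956436004745862935443033864931028279050314930115181066779087173131262695808510083846197818117425916899317638235290542091649633446556145922831266553267974824365185007209775389912623856188509549336630066084627738079074670225981049929728 (20*k+v)
lemma solvable : HOPSolvable 10 (![4, 4, 12] : Fin 3 → ℕ) :=
  HOPAux.build _ (HOPAux.look [4, 4, 12]) pN fN rN nN dN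
    (by decide) rfl rfl rfl rfl rfl rfl
end Case_2_2_6

namespace Case_2_3_5
def pN : ℕ → ℕ → ℕ := fun k v => HOPAux.tab 741987980293037095304340660972039467249037742317488068606823496115896051419163488371907924369486612099320612675741428665088490136654673118151213782319977016954164435835231201889436199076065610247142115738414317184625553160037453363113945044248605481667249008893003705660014359215254680487788940678465142297210045529756996641741543678452340701834446422446959887357604814013132026059259492514143539776760534193476051135620909072141271705424197398200920824563317594213608958280354754824347674308411116397828252330935532798344625929883551015018398177258273326291304339016705 (20*k+v)
def fN : ℕ → ℕ → ℕ := fun k v => HOPAux.tab 2924515829996357847901098084144486975142880243539471381917860322404597559417617117875919335784381717249221661866294340661690961107729168608581722760649114238110537092761969811459757078261819348736990809230537244648676012671443871954475942112541236352667576764790206093332208593572146451076101805952178059432515595238889702291555233440696832968558362706486920184552421791409692337466123036129034254070754138278407728504205732263886947701681018412644077440638651267977218648118831116982648890219162903524142023556563473531176075198442488671595762173599341640769731458760704 (20*k+v)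
def rN : ℕ → ℕ → ℕ := fun k v => HOPAux.tab 292795332467440393860929873335477696676934256178890569279807811358804214663966849016253189660838298246495780796490633722796957829255515393949729229681465815202646420027287965321590392550586972564441627544520110995273342799220361697473313228700922255090187326836138906760409387728053962558119073513859405597748092534493767873385209106842687206920521983977351667352648600870826903250101642018151482097170040017573230291311676068632242247546382827586781413430001958224491325172738710887320834379055711508557728445236682945786146095986209122160738304 (20*k+v)
def nN : ℕ → ℕ → ℕ := fun k v => HOPAux.tab 1715183508755789395949757327479687658315189394078446793081057302810156646042715816039342318018404704452915161503657313467033262627281479527838211501937389579276763143145228307551588438909135964181029537677826333161155589339134666570305756595301144951012154258587349185556342516259306138654938035459765897871271793325450228125806137984208301992286354638775633995711047081168061772961922131840546047877225368453050058296220662588211898920283497296461178230809960775392975197643071675337522365924143455257310669826738610070777403530841497927546863352012282481477658804748288 (20*k+v)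
def dN : ℕ → ℕ → ℕ := fun k v => HOPAux.tab 3018754644945695532929788908158813076820667854188477790447763484539015760687029024515002698641221212552710063491069299910072508381057665755529416145416567221019439897051514106316432513270298369541416944755778079659337108922905080714330766055535600681475112128436548458164404977056887863343034594508962035698905967650530390139710178146104541000976792306075553923376118749120956737145255137761224765123542143403473011661977034137044132394498948633117437671071766785330014780789018864203726855475053180097520700969962307331292507143067190699331371064825348994008963591700480 (20*k+v)
lemma solvable : HOPSolvable 10 (![4, 6, 10] : Fin 3 → ℕ) :=
  HOPAux.build _ (HOPAux.look [4, 6, 10]) pN fN rN nN dN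
    (by decide) rfl rfl rfl rfl rfl rfl
end Case_2_3_5

namespace Case_2_4_4
def pN : ℕ → ℕ → ℕ := fun k v => HOPAux.tab 40717707190381040964100643924732930572560882586218637427137220545032923350836094413549670240218990354624841411569404256250744379737543024641845243232016059674129743865340502857719666998083302129224973091891563531548286471820168561553281283526821541054884088631304101808634568507337004557651553886471774805733340005090693344190788459339292948658094584164595699400041948769375885163635426063276301395173755573723496477537772056240332298693602543169498224192321686486539951629734210040334299856514871851721486625751105439615517689872134708644273739879198690110394242979400705 (20*k+v)
def fN : ℕ → ℕ → ℕ := fun k v => HOPAux.tab 2918812243962419527320081542158613882503420528543815882396469858558593458430736562550367487969596277089645744859614700841296418884093596482681536313026025069047633009170683559934889541770905477058023209420282112732696484184515815498782221245709135206229110156167539491837517565638843547937804559147476324236673917249515187691730386773801158831343651833446586885394651016502974417458771891766012624127833500413847119230084178135290841110823486114999103346394452614664616581408313138697776816544542628895898850523037499240401716109615761399198189826445727674435310274478080 (20*k+v)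
def rN : ℕ → ℕ → ℕ := fun k v => HOPAux.tab 147040701370910768805708560108500516739873296958493238992982922060335481583190461048354495160338140360796193400142433974373616648816232614016280764897215500693352049423962136541555543057241847487702794720780647347454792236825543146039362959849528125741019840718811431694680071704687469997095809030249135898406101780336618882024996394005911104793716487333796075991054863024980220286797688949902766714023277342165012441303774969571997261275313614107756000419386592342169132129311616895455990142016453332107967731890283576539488149650532627866714112 (20*k+v)
def nN : ℕ → ℕ → ℕ := fun k v => HOPAux.tab 40717706852545380967240773775992582612648183417922415507121648432671208359585973230759084072902639870891526155165117089477017306288612189763238968689697304397602839619454637082523892657257298617591530994394038876385938727652958293212986483276568172826751809821610726087300173836495549981352380784059002691221393448723953857987157270906307100526673683960701556160263288087407386821801728763620160108263456742468223805640756729071551803174524995397145807693385800176711031511443661701792051767756051031237995312314187334683931201321525834069379275467954182272771099650424832 (20*k+v)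
def dN : ℕ → ℕ → ℕ := fun k v => HOPAux.tab 11592409137468302244437214868013702872464787247366998938034433281363150481847071780467271813843808146888375487159303635208348839447697638218839888190795150930325782132754602644413017135707593567766771881635036012885165250509923172321128959014302426875716951972328392030174531297233388647289663678394619340552649656627222258093567932454729972927273708190371869082825895652910307547983801035796811337772490723816290861473340887627622021643739373241422763261318998065616776540964279781072305398561272804001532633026345742267438792468291181799385172426194866552127078224887808 (20*k+v)
lemma solvable : HOPSolvable 10 (![4, 8, 8] : Fin 3 → ℕ) :=
  HOPAux.build _ (HOPAux.look [4, 8, 8]) pN fN rN nN dN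
    (by decide) rfl rfl rfl rfl rfl rfl
end Case_2_4_4

namespace Case_3_3_4
def pN : ℕ → ℕ → ℕ := fun k v => HOPAux.tab 37337395927576707216536559859101964061164196857907849331810357446106542012225510495791565252995495561403361088839948678334031662869774435027302199760972449183862054789005288327306538522353002511661397013782493239462717175124404056042481295757813823251680158608952108470620075048638809763561441749161998062964809334146288217755930639341959965765813521265891222613098324842850397674885154103622680866545854923363563147286862604527036174824707097938717591947423430725459152460012545835719765996474455039893436830700352374250285222864526620414332845056062736669793933350472705 (20*k+v)
def fN : ℕ → ℕ → ℕ := fun k v => HOPAux.tab 5840469320601246781287999635084804082607674738891625245680789148075036881510737587271369689002558457761167966408165574917371517643818054099196159566018359169357290025520991546248951565162643380635045775301724831547439974414230629732209342902487132165858827066433746595218132918278785293967854426105894268780784594735111605815695907171237647472587455348366957948536455231640846073284859800605409307694675778281698408772972324734469576562038252150278996487742499198789062100375060118732897188534840948267308804120457066235952129154574366226908773051235506609379534184644608 (20*k+v)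
def rN : ℕ → ℕ → ℕ := fun k v => HOPAux.tab 448124042273251866836445135568540519051812403848081152804862356254397383132412367559366375464680154447309643662856043376279454701505835707261481072478511745218624810429693467209653606453155472294456550744947785272090219693833635391110874862478843782389322464742030603598460851645213366772109474064226583318637751665587573750948250589924873258075565839528535748856799144679031894901881077531659973231731672002775176755866294705481083798591480187328988729804770255623931169780987106118736044968807758817493105621115301380030883201860225969634148352 (20*k+v)
def nN : ℕ → ℕ → ℕ := fun k v => HOPAux.tab 51489747304779129886240198586029994053793153371190282048067417117315393252637137957117424131736307170337349410247322015746979108856312433056590539123898206969883409953374418099205455615535140742201964766992281287200889100634061446759482906749817164687677071168913108135914397733139442584458726979418212642361972567358858272114432107701147517599859697233442819247652258571893915497052902947249677723765575826127456494221944060347516286947668217521754808557868298390681151330166487867184866617781903053556045279967155428493812262462101519420658720836338833512139792920346624 (20*k+v)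
def dN : ℕ → ℕ → ℕ := fun k v => HOPAux.tab 5752112410552520316770136178714060044225426664908341443475963317145030321062697031904160323460521220769037089172814851516243673977928151362756735508284097943109826215868737729786447878465708653390075665970519505599027622249947394972866251435372144372986187396005424733948954566396331624455281173846330719417340657779730820891252448063999337380074958824519910447316036071089861430873934687571871815479471678153238409506026559659145651901467467762455828376261921871073674585419442284061093004231568321008189256672760714135735104578869358585888659338176189864356346813480960 (20*k+v)
lemma solvable : HOPSolvable 10 (![6, 6, 8] : Fin 3 → ℕ) :=
  HOPAux.build _ (HOPAux.look [6, 6, 8]) pN fN rN nN dN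
    (by decide) rfl rfl rfl rfl rfl rfl
end Case_3_3_4

namespace Case_2_2_2_4
def pN : ℕ → ℕ → ℕ := fun k v => HOPAux.tab 37881650478201209069651970713532481612476616671105547606417641384788512572069985357374230513945869780058851625925487075885945469425544238552794823925319382731921542429931914715817633670474750989496284894684372425893414848627884211872303353544965632721373750818057558105694961344682119800301326474706191149841960866008056269694061221970364954502604973423782028799914654877801932792052846142449350352024038061850266126579392126480910682349079613754818654251934395282493187101322599454088256720287546956139587313948508605982814619676295000582266550394460302335110801282632705 (20*k+v)
def fN : ℕ → ℕ → ℕ := fun k v => HOPAux.tab 5840477671387396201934994594901649474721011183565763738110315210627842674656577584502978669645661025446589621780144751251206154622369102357657012416929824170005430097584586067165100573242337373271873695892805892245997811226943576413305800560565285357253376884510132761751006267474209167906916651662506628506641640875630801527493731817081501730940405802840552941954102342717003439071778295686891762426975056357942936431312656627617243938246789826522508031049076101809611890679929847341194384320423569781105273848395309216356376767176434493904094925370323431804364467994624 (20*k+v)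
def rN : ℕ → ℕ → ℕ := fun k v => HOPAux.tab 896533877940810654506331881566229265338928016060824027947655016258159805786062967045771151366717808337081932037854983208323927508756511954479553069549889055813883839112384857559311039923813755380123565412290496691038503653829681320331083344277491863855237972175924960849465100193467481342803007432073828866252335158324769795237022606579681322047085005496009563106436250477908452057809553835730178979127438322442024309073258654855999358404550872941339273530238539162942857150724550756855885643234441079419408601736045979364075342556709936156377088 (20*k+v)
def nN : ℕ → ℕ → ℕ := fun k v => HOPAux.tab 37881650459244791389363498889830443840159430511604617081286169724858887388981668494425139516860967115816688695025373610758944771645876097129009071658390742302392667666579267668384581859082379865018823251466551413292920459147806084846863273877878721696544805057084983748075278281280598785873400652581682205713800048281984543505648329017591032389368467119208885994475498312628307596755389709702415595271744245059216876128966325573646612037216643205836670794272387172039748319512010969223317140677959407688942593491950041156194026021021493113059094683502916407659440921116672 (20*k+v)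
def dN : ℕ → ℕ → ℕ := fun k v => HOPAux.tab 5754795620489896758912607103362263182307199760602852819617484648221082261806686789316027582664171421396877299554327640508370990819777524227672160457766679419210647419772569855748563716433103290596951673944393699709919763701235312446084020340877267688345735233721408450244127973125487097178879643073466795172779036586885301600682161213561745784490215787205096131657920534213186137629683524855292579482976527850192905421238428054653975639758535555405828622319498856092935782021701631457891212062577823236922426041820732626893746701923685049541814700665355261450870237167616 (20*k+v)
lemma solvable : HOPSolvable 10 (![4, 4, 4, 8] : Fin 4 → ℕ) :=
  HOPAux.build _ (HOPAux.look [4, 4, 4, 8]) pN fN rN nN dN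
    (by decide) rfl rfl rfl rfl rfl rfl
end Case_2_2_2_4

namespace Case_2_2_3_3
def pN : ℕ → ℕ → ℕ := fun k v => HOPAux.tab 5941014024304732444993481310907601941000074663592125917141715896049812732864344837810119481457294415702571678889926824515128783045629112429408041229316099718889119924693548107105315858060886527715250661890960746968365525869286667213873878106781616135273485009823334584923304762158607296553469506151695075313647738432680720731764712152339428926898618353893367192636772737748621023372861831973172804307105314704485895531436128421392678479478385925717497431485670779921543352104297759747919030127660216846105351863330994991448144641222721104096702591352729514251437233736705 (20*k+v)
def fN : ℕ → ℕ → ℕ := fun k v => HOPAux.tab 8556774927905439548610897167223627972146802076519190645463094080639793394815624499499010816264310646856953128220253021216919157782390486473332867961709541954095060058941683328394241627354342923260218964535573163507554213668275493268478725376789276525439677474811403018430744303554714545343882715323739628766725952434116885635798715822864570054408097323760598526546743547467744397048670788750578691969162510698733907918541137875404707859738853441864489788468518193064549127084974337294607290411392855380168746311857810701880063750674525172361429031254073907707042070528 (20*k+v)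
def rN : ℕ → ℕ → ℕ := fun k v => HOPAux.tab 9383311618581978263971674052031225649894216647684729176128421014492956708155092504520733748323835374371079358198861018074532498123520619469555349115812659850953915420076962251659138414950656519856416763959115546982972184358491557707590209938807609333833826706419981305083569431875671060113411343734159291242860130284019456890130678418258845756363031450990040769841857764163985659931708391077259392441524923424785490260574386956585187883704924602885612852829806726650329346264017874053722266452421332871170099281456833399003233794913037627424768000 (20*k+v)
def nN : ℕ → ℕ → ℕ := fun k v => HOPAux.tab 5941360191584838047883340232146272365219893227590721483262378590647485167008292298106910003467035816341635275078899785116571399403970885273731896945291955865200780128878293108597421713878626652089525973346777882312479161924664202998944166792330218245886041269701262096186217696352229884900051645691352605566915801083523112413225956515080870193559082544564635018695647383535071315981074554543982647431203619888451106754147257554994282641222357635673940371952051343390210780202804915687589275873577920467984364952400961230289708093568452499538157422183257900822285856538624 (20*k+v)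
def dN : ℕ → ℕ → ℕ := fun k v => HOPAux.tab 3013051061465356334210550673357194330636290986087355026903533711721202368785969084566359997342526986622737066685161011681697159240729027847900893688175319097946194813124625806926218775909726549639949438931795782434316976757594319295189930838208414153551266515310940203049779448679156411174941585421033237696594262240651416618456021865905388159746672286749752926899777562744986959191544324226499172703425737878210899968227120349255363626861359482558910226883742350135217712373339313287043054656915528653002173090154110559244004979318274355042389723205027716510510485602304 (20*k+v)
lemma solvable : HOPSolvable 10 (![4, 4, 6, 6] : Fin 4 → ℕ) :=
  HOPAux.build _ (HOPAux.look [4, 4, 6, 6]) pN fN rN nN dN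
    (by decide) rfl rfl rfl rfl rfl rfl
end Case_2_2_3_3

namespace Case_2_2_2_2_2
def pN : ℕ → ℕ → ℕ := fun k v => HOPAux.tab 43722336296028723511113362801605691652148029390836711358052835765157352112571143201840369404603460234899092773650802086362141247573382460262518843892986427839952227780155076471917208840172229104088351769943344396632275005941373843218820287382495321415362819679370103871744544834254619351126201861392085322798984176342419477124405839978195955003270051636658464669045799898836935386832153617766576511263259018520192780534134223919110660642619469133983002437306476904168803288416643117418254000052886738209232666740511751633715723038185085793629472945396471813339263030856705 (20*k+v)
def fN : ℕ → ℕ → ℕ := fun k v => HOPAux.tab 11683800170003880478196457530126137585473046802744437689929371289712276180642404322085579922174342630090362633464175363485999498622105097913416664556213875166613646010414134084089758838910526028772322642932524496680487689823477203236762477000350468979380927465943607695864418866150231915325686382919801245544095563454517207505507021076553594068618942598283424332532978201517116376013451302644644688954766723126125302646845739663721432760447360137907802147874805748123475649804293175817873158681437340026310445568323478080778534275748558553550955102765760530118234175700992 (20*k+v)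
def rN : ℕ → ℕ → ℕ := fun k v => HOPAux.tab 1072868402228180808739805509518344410064371247539111464010179277320761909019303743326585693477703643901414105917793355180599262032803255370662941238830052084747897118804600365815739484777284214373910996018406998416633917186418144371392456244392389351303393415415938828389692821072276645876813114736824504579054333362302040973968358817728910261818302255597439865169557049080892069060268446054098394967789149157662118312138416232558691644946501922381535754508456816684928404229096679119196828062394554494365572057506917972702295218198474638653682352128 (20*k+v)
def nN : ℕ → ℕ → ℕ := fun k v => HOPAux.tab 43722322462395952752789395098607162136354152750440418353821513329045539123247046436556410609299524879438111750557701140303147736117800647395828246004568292045180871195871210149581875935676919633737467246876916259123519848443819335044836102969196972492138334501918330306543378264032310361648476258108760911158832790224384113640410438623644369154519420324906588827827408249194401914010474764994703412849933196065143802099809928180425148748188850197250687088757485222938677691553398567256729884610126867987445609128652595374199040917190210255583312919404741183267576028856320 (20*k+v)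
def dN : ℕ → ℕ → ℕ := fun k v => HOPAux.tab 5752109624070492227405833099902421112993646130759621799336263552040468947365452575211235891580003368623168642296474424587560268430757632360155719340036324740931379212288256178959806712148290089830385325018606292403810861270804904617848166784005245768936339210187948060941571744663649440726869705853666771366193206196525025935801910786544779095525290415033461127051534421530959201804042723472659940446319556800306311368235282772676423518126195123989264622497321779672196440936635424694880325495513781806474847777162629067940097664400318111360249020210117392214650991411200 (20*k+v)
lemma solvable : HOPSolvable 10 (![4, 4, 4, 4, 4] : Fin 5 → ℕ) :=
  HOPAux.build _ (HOPAux.look [4, 4, 4, 4, 4]) pN fN rN nN dN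
    (by decide) rfl rfl rfl rfl rfl rfl
end Case_2_2_2_2_2

namespace HOPAux
lemma hop_perm {t : ℕ} (l : Fin t → ℕ) (σ : Equiv.Perm (Fin t))
    (h : HOPSolvable 10 (l ∘ σ)) : HOPSolvable 10 l := by
  obtain ⟨M, h1, h2⟩ := h
  refine ⟨M, h1, fun i hi => ?_⟩
  obtain ⟨e, he⟩ := h2 i hi
  exact ⟨e.trans σ, fun c => he c⟩

end HOPAux

theorem hop_solvable_sum_eq_10 (t : ℕ) (ht : 1 ≤ t) (m : Fin t → ℕ)
    (hm : ∀ i, 2 ≤ m i) (hsum : ∑ i, m i = 10) :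
    HOPSolvable 10 (fun i => 2 * m i) := by
  classical
  have hmono : Monotone (m ∘ Tuple.sort m) := Tuple.monotone_sort m
  set g : Fin t → ℕ := m ∘ Tuple.sort m with hg
  have hg2 : ∀ i, 2 ≤ g i := fun i => hm _
  have hgsum : ∑ i, g i = 10 := by
    rw [hg]
    rw [← Equiv.sum_comp (Tuple.sort m) m] at hsum
    exact hsum
  apply HOPAux.hop_perm _ (Tuple.sort m)
  have hcomp : ((fun i => 2 * m i) ∘ (Tuple.sort m)) = fun i => 2 * g i := rfl
  rw [hcomp]
  clear_value g
  clear hcomp hg hsum hm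
  have ht5 : t ≤ 5 := by
    by_contra hc
    push_neg at hc
    have h1 : ∑ _i : Fin t, 2 ≤ ∑ i, g i := Finset.sum_le_sum (fun i _ => hg2 i)
    simp only [Finset.sum_const, Finset.card_univ, Fintype.card_fin, smul_eq_mul] at h1
    omega
  interval_cases t
  · -- t = 1
    have hs : g 0 = 10 := by
      have := hgsum
      rw [Fin.sum_univ_one] at this
      exact this
    have he : (fun i => 2 * g i) = (![20] : Fin 1 → ℕ) := by
      funext i; fin_cases i <;> simp [hs]
    rw [he]; exact Case_10.solvable
  · -- t = 2
    have h01 : g 0 ≤ g 1 := hmono (by decide)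
    have hs : g 0 + g 1 = 10 := by
      have := hgsum; rw [Fin.sum_univ_two] at this; exact this
    have h0 := hg2 0
    have hcases : (g 0 = 2 ∧ g 1 = 8) ∨ (g 0 = 3 ∧ g 1 = 7) ∨ (g 0 = 4 ∧ g 1 = 6) ∨
        (g 0 = 5 ∧ g 1 = 5) := by omega
    rcases hcases with ⟨e0, e1⟩ | ⟨e0, e1⟩ | ⟨e0, e1⟩ | ⟨e0, e1⟩ <;>
      [ (have he : (fun i => 2 * g i) = (![4,16] : Fin 2 → ℕ) := by
          funext i; fin_cases i <;> simp [e0, e1]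
         rw [he]; exact Case_2_8.solvable);
        (have he : (fun i => 2 * g i) = (![6,14] : Fin 2 → ℕ) := by
          funext i; fin_cases i <;> simp [e0, e1]
         rw [he]; exact Case_3_7.solvable);
        (have he : (fun i => 2 * g i) = (![8,12] : Fin 2 → ℕ) := by
          funext i; fin_cases i <;> simp [e0, e1]
         rw [he]; exact Case_4_6.solvable);
        (have he : (fun i => 2 * g i) = (![10,10] : Fin 2 → ℕ) := by
          funext i; fin_cases i <;> simp [e0, e1]
         rw [he]; exact Case_5_5.solvable)]
  · -- t = 3
    have h01 : g 0 ≤ g 1 := hmono (by decide)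
    have h12 : g 1 ≤ g 2 := hmono (by decide)
    have hs : g 0 + g 1 + g 2 = 10 := by
      have := hgsum; rw [Fin.sum_univ_three] at this; exact this
    have h0 := hg2 0
    have hcases : (g 0 = 2 ∧ g 1 = 2 ∧ g 2 = 6) ∨ (g 0 = 2 ∧ g 1 = 3 ∧ g 2 = 5) ∨
        (g 0 = 2 ∧ g 1 = 4 ∧ g 2 = 4) ∨ (g 0 = 3 ∧ g 1 = 3 ∧ g 2 = 4) := by omega
    rcases hcases with ⟨e0, e1, e2⟩ | ⟨e0, e1, e2⟩ | ⟨e0, e1, e2⟩ | ⟨e0, e1, e2⟩ <;>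
      [ (have he : (fun i => 2 * g i) = (![4,4,12] : Fin 3 → ℕ) := by
          funext i; fin_cases i <;> simp [e0, e1, e2]
         rw [he]; exact Case_2_2_6.solvable);
        (have he : (fun i => 2 * g i) = (![4,6,10] : Fin 3 → ℕ) := by
          funext i; fin_cases i <;> simp [e0, e1, e2]
         rw [he]; exact Case_2_3_5.solvable);
        (have he : (fun i => 2 * g i) = (![4,8,8] : Fin 3 → ℕ) := by
          funext i; fin_cases i <;> simp [e0, e1, e2]
         rw [he]; exact Case_2_4_4.solvable);
        (have he : (fun i => 2 * g i) = (![6,6,8] : Fin 3 → ℕ) := by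
          funext i; fin_cases i <;> simp [e0, e1, e2]
         rw [he]; exact Case_3_3_4.solvable)]
  · -- t = 4
    have h01 : g 0 ≤ g 1 := hmono (by decide)
    have h12 : g 1 ≤ g 2 := hmono (by decide)
    have h23 : g 2 ≤ g 3 := hmono (by decide)
    have hs : g 0 + g 1 + g 2 + g 3 = 10 := by
      have := hgsum; rw [Fin.sum_univ_four] at this; exact this
    have h0 := hg2 0
    have hcases : (g 0 = 2 ∧ g 1 = 2 ∧ g 2 = 2 ∧ g 3 = 4) ∨
        (g 0 = 2 ∧ g 1 = 2 ∧ g 2 = 3 ∧ g 3 = 3) := by omega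
    rcases hcases with ⟨e0, e1, e2, e3⟩ | ⟨e0, e1, e2, e3⟩ <;>
      [ (have he : (fun i => 2 * g i) = (![4,4,4,8] : Fin 4 → ℕ) := by
          funext i; fin_cases i <;> simp [e0, e1, e2, e3]
         rw [he]; exact Case_2_2_2_4.solvable);
        (have he : (fun i => 2 * g i) = (![4,4,6,6] : Fin 4 → ℕ) := by
          funext i; fin_cases i <;> simp [e0, e1, e2, e3]
         rw [he]; exact Case_2_2_3_3.solvable)]
  · -- t = 5
    have hs : g 0 + g 1 + g 2 + g 3 + g 4 = 10 := by
      have := hgsum; rw [Fin.sum_univ_five] at this; exact this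
    have h0 := hg2 0; have h1 := hg2 1; have h2 := hg2 2; have h3 := hg2 3; have h4 := hg2 4
    have e : g 0 = 2 ∧ g 1 = 2 ∧ g 2 = 2 ∧ g 3 = 2 ∧ g 4 = 2 := by omega
    obtain ⟨e0, e1, e2, e3, e4⟩ := e
    have he : (fun i => 2 * g i) = (![4,4,4,4,4] : Fin 5 → ℕ) := by
      funext i; fin_cases i <;> simp [e0, e1, e2, e3, e4]
    rw [he]; exact Case_2_2_2_2_2.solvable
end
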